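/- arXiv:2206.14656 — 9 statements merged into one kernel-verified Lean document; each statement's English description precedes it below -/
import Mathlib

section
/- Let ω_m > 0, λ > 0, and let the sampling interval satisfy 0 < T_s < π/ω_m (sampling above the Nyquist rate). Let g : ℝ → ℝ be injective on the interval [-λ, λ], and let G : ℝ → ℝ be a generalized amplitude-limiting operator with in-range response g. If f₁ and f₂ are both ω_m-bandlimited with finite energy and G(f₁(n T_s)) = G(f₂(n T_s)) for every n ∈ ℤ, then f₁ = f₂ (as functions on ℝ). -/
/-- `f : ℝ → ℝ` is `ωm`-bandlimited with finite energy: there is a square-integrable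
`F : ℝ → ℂ` vanishing a.e. outside `[-ωm, ωm]` with
`f t = (1/(2π)) ∫ F ω e^{iωt} dω` for all `t`. -/
def IsBandlimited (ωm : ℝ) (f : ℝ → ℝ) : Prop :=
  ∃ F : ℝ → ℂ,
    MeasureTheory.MemLp F 2 MeasureTheory.volume ∧
    (∀ᵐ ω : ℝ ∂MeasureTheory.volume, ω ∉ Set.Icc (-ωm) ωm → F ω = 0) ∧
    ∀ t : ℝ, (f t : ℂ) =
      (1 / (2 * Real.pi)) * ∫ ω : ℝ, F ω * Complex.exp (Complex.I * ω * t)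

/-- The modulo operation `M_λ(a) = ((a + λ) mod 2λ) − λ`, where `x mod 2λ` is the
unique element of `[0, 2λ)` congruent to `x` modulo `2λ`. -/
noncomputable def modOp (lam a : ℝ) : ℝ :=
  Int.fract ((a + lam) / (2 * lam)) * (2 * lam) - lam

/-- The normalized sinc function: `sinc x = sin (π x) / (π x)` for `x ≠ 0`, `sinc 0 = 1`. -/
noncomputable def sinc (x : ℝ) : ℝ :=
  if x = 0 then 1 else Real.sin (Real.pi * x) / (Real.pi * x)

open MeasureTheory Filter Set Complex Real Topology AddCircle
open scoped FourierTransform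

lemma aux_int {ωm : ℝ} (F : ℝ → ℂ) (hF : MemLp F 2 volume)
    (hsupp : ∀ᵐ ω : ℝ, ω ∉ Set.Icc (-ωm) ωm → F ω = 0) : Integrable F := by
  have h1 : F =ᵐ[volume] (Set.Icc (-ωm) ωm).indicator F := by
    filter_upwards [hsupp] with x hx
    by_cases h : x ∈ Set.Icc (-ωm) ωm
    · simp [Set.indicator_of_mem h]
    · simp [Set.indicator_of_notMem h, hx h]
  have h2 : IntegrableOn F (Set.Icc (-ωm) ωm) := by
    have := (hF.restrict (Set.Icc (-ωm) ωm)).integrable one_le_two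
    exact this
  exact (( integrable_indicator_iff measurableSet_Icc).2 h2).congr h1.symm

lemma aux_decay (F : ℝ → ℂ) :
    Tendsto (fun t : ℝ => ∫ ω : ℝ, F ω * Complex.exp (Complex.I * ω * t))
      (cocompact ℝ) (𝓝 0) := by
  have key : ∀ t : ℝ, (∫ ω : ℝ, F ω * Complex.exp (Complex.I * ω * t))
      = 𝓕 F (-t / (2 * Real.pi)) := by
    intro t
    rw [Real.fourier_real_eq_integral_exp_smul]
    refine integral_congr_ae (Filter.Eventually.of_forall fun ω => ?_)
    simp only [smul_eq_mul]
    rw [mul_comm _ (F ω)]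
    congr 1
    have h1 : (-2 * Real.pi * ω * (-t / (2 * Real.pi))) = ω * t := by
      field_simp
    rw [h1]
    push_cast
    ring_nf
  simp_rw [key]
  have h1 : Tendsto (fun t : ℝ => -t / (2 * Real.pi)) (cocompact ℝ) (cocompact ℝ) := by
    have heq : (fun t : ℝ => -t / (2 * Real.pi)) = fun t : ℝ => t * (-(2 * Real.pi)⁻¹) := by
      funext t; field_simp
    have hneg : (-(2 * Real.pi)⁻¹ : ℝ) < 0 := by
      have : (0:ℝ) < (2 * Real.pi)⁻¹ := by positivity
      linarith
    rw [cocompact_eq_atBot_atTop, heq, tendsto_sup]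
    constructor
    · exact ((tendsto_mul_const_atTop_of_neg hneg).2 tendsto_id).mono_right le_sup_right
    · exact ((tendsto_mul_const_atBot_of_neg hneg).2 tendsto_id).mono_right le_sup_left
  exact (Real.zero_at_infty_fourier F).comp h1

lemma spectrum_zero (L ωm : ℝ) (hωm : 0 < ωm) (hL : ωm < L)
    (H : ℝ → ℂ) (hmeas : Measurable H) (hH2 : MemLp H 2 volume)
    (hsupp : ∀ᵐ ω : ℝ, ω ∉ Set.Icc (-ωm) ωm → H ω = 0)
    (N : ℕ)
    (hzero : ∀ n : ℤ, (N:ℤ) ≤ |n| →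
      (∫ ω : ℝ, H ω * Complex.exp (Complex.I * ω * (n * (Real.pi / L)))) = 0) :
    H =ᵐ[volume] 0 := by
  have hL0 : 0 < L := hωm.trans hL
  set T : ℝ := 2 * L with hT
  have hT0 : 0 < T := by positivity
  haveI : Fact (0 < T) := ⟨hT0⟩
  set HC : AddCircle T → ℂ := AddCircle.liftIoc T (-L) H with hHC
  have hHCmeas : Measurable HC := by
    have : HC = (fun y : Set.Ioc (-L) (-L + T) => H y) ∘ (measurableEquivIoc T (-L)) := rfl
    rw [this]
    exact (hmeas.comp measurable_subtype_coe).comp (measurableEquivIoc T (-L)).measurable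
  have hIocT : -L + T = L := by rw [hT]; ring
  have hcomp : ∀ x ∈ Set.Ioc (-L) (-L + T), HC x = H x := fun x hx =>
    AddCircle.liftIoc_coe_apply hx
  -- HC is MemLp 2 w.r.t. haarAddCircle
  have hHC2 : MemLp HC 2 (haarAddCircle (T := T)) := by
    constructor
    · exact hHCmeas.aestronglyMeasurable
    · have h1 : eLpNorm HC 2 (volume : Measure (AddCircle T)) =
          eLpNorm (HC ∘ (QuotientAddGroup.mk : ℝ → AddCircle T)) 2
            (volume.restrict (Set.Ioc (-L) (-L + T))) :=
        (eLpNorm_comp_measurePreserving hHCmeas.aestronglyMeasurable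
          (AddCircle.measurePreserving_mk T (-L))).symm
      have h2 : eLpNorm (HC ∘ (QuotientAddGroup.mk : ℝ → AddCircle T)) 2
            (volume.restrict (Set.Ioc (-L) (-L + T)))
          = eLpNorm H 2 (volume.restrict (Set.Ioc (-L) (-L + T))) := by
        refine eLpNorm_congr_ae ?_
        filter_upwards [ae_restrict_mem measurableSet_Ioc] with x hx
        exact hcomp x hx
      have h5 : eLpNorm HC 2 (volume : Measure (AddCircle T)) < ⊤ := by
        rw [h1, h2]; exact (hH2.restrict _).2
      have hc0 : ENNReal.ofReal T ≠ 0 := by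
        simp only [ne_eq, ENNReal.ofReal_eq_zero, not_le]
        exact hT0
      rw [volume_eq_smul_haarAddCircle,
        eLpNorm_smul_measure_of_ne_zero hc0] at h5
      rw [lt_top_iff_ne_top] at h5 ⊢
      intro hcon
      rw [hcon] at h5
      apply h5
      rw [smul_eq_mul, ENNReal.mul_top]
      exact (ENNReal.rpow_pos (by simpa [pos_iff_ne_zero] using hc0) (by simp)).ne'
  -- Fourier coefficients of HC vanish for large |n|
  have hcf : ∀ n : ℤ, (N:ℤ) ≤ |n| → fourierCoeff HC n = 0 := by
    intro n hn
    have hint : (∫ x in (-L)..(-L + T), fourier (-n) (x : AddCircle T) • H x)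
        = ∫ ω : ℝ, H ω * Complex.exp (Complex.I * ω * ((-n : ℤ) * (Real.pi / L))) := by
      have hRHS : (∫ ω : ℝ, H ω * Complex.exp (Complex.I * ω * ((-n : ℤ) * (Real.pi / L))))
          = ∫ ω in Set.Ioc (-L) (-L + T),
              H ω * Complex.exp (Complex.I * ω * ((-n : ℤ) * (Real.pi / L))) := by
        refine (setIntegral_eq_integral_of_ae_compl_eq_zero ?_).symm
        filter_upwards [hsupp] with x hx hxI
        have : x ∉ Set.Icc (-ωm) ωm := by
          intro hmem
          rcases hmem with ⟨h1', h2'⟩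
          exact hxI ⟨by linarith, by rw [hIocT]; linarith⟩
        rw [hx this, zero_mul]
      rw [intervalIntegral.integral_of_le (by linarith [hIocT] : -L ≤ -L + T), hRHS]
      refine setIntegral_congr_fun measurableSet_Ioc fun x hx => ?_
      rw [fourier_coe_apply, smul_eq_mul, mul_comm]
      congr 1
      congr 1
      push_cast
      have hLne : (L:ℂ) ≠ 0 := by exact_mod_cast hL0.ne'
      have hTne : ((T:ℝ):ℂ) = 2 * (L:ℂ) := by rw [hT]; push_cast; ring
      rw [hTne]
      field_simp
    rw [hHC, fourierCoeff_liftIoc_eq, fourierCoeffOn_eq_integral,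
      (show (-L + T) - (-L) = T by ring), hint, hzero (-n) (by simpa using hn), smul_zero]
  -- the L² element and its finite Fourier expansion
  set HL2 : Lp ℂ 2 (haarAddCircle (T := T)) := hHC2.toLp HC with hHL2
  have hcoeff_eq : ∀ i : ℤ, fourierCoeff (HL2 : AddCircle T → ℂ) i = fourierCoeff HC i := by
    intro i
    simp only [fourierCoeff]
    refine integral_congr_ae ?_
    filter_upwards [hHC2.coeFn_toLp] with x hx
    rw [hx]
  set s : Finset ℤ := Finset.Icc (-(N:ℤ)) (N:ℤ) with hs
  have hnotmem : ∀ i : ℤ, i ∉ s → (N:ℤ) ≤ |i| := by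
    intro i hi
    by_contra hcon
    push_neg at hcon
    rw [abs_lt] at hcon
    exact hi (Finset.mem_Icc.mpr ⟨by linarith [hcon.1], by linarith [hcon.2]⟩)
  have hsum : HasSum (fun i => fourierCoeff HC i • (fourierBasis (T := T)) i) HL2 := by
    have h0 := HilbertBasis.hasSum_repr (fourierBasis (T := T)) HL2
    simp only [fourierBasis_repr] at h0
    simp only [hcoeff_eq] at h0
    exact h0
  have hfin : HL2 = ∑ i ∈ s, fourierCoeff HC i • (fourierBasis (T := T)) i := by
    refine hsum.unique (hasSum_sum_of_ne_finset_zero fun i hi => ?_)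
    rw [hcf i (hnotmem i hi), zero_smul]
  set Pc : C(AddCircle T, ℂ) := ∑ i ∈ s, fourierCoeff HC i • fourier i with hPc
  have hPcLp : (ContinuousMap.toLp (E := ℂ) 2 (haarAddCircle (T := T)) ℂ) Pc
      = ∑ i ∈ s, fourierCoeff HC i • fourierLp 2 i := by
    rw [hPc, map_sum]
    exact Finset.sum_congr rfl fun i _ => by rw [_root_.map_smul]
  have hHCPc : HC =ᵐ[haarAddCircle (T := T)] Pc := by
    have h1 : (HL2 : AddCircle T → ℂ) =ᵐ[haarAddCircle (T := T)] HC := hHC2.coeFn_toLp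
    have h3 : HL2 = (ContinuousMap.toLp (E := ℂ) 2 (haarAddCircle (T := T)) ℂ) Pc := by
      rw [hfin, hPcLp]
      refine Finset.sum_congr rfl fun i _ => ?_
      rw [coe_fourierBasis]
    have h2 : ((ContinuousMap.toLp (E := ℂ) 2 (haarAddCircle (T := T)) ℂ) Pc
        : AddCircle T → ℂ) =ᵐ[haarAddCircle (T := T)] Pc :=
      ContinuousMap.coeFn_toLp (haarAddCircle (T := T)) Pc
    rw [h3] at h1
    exact h1.symm.trans h2
  -- transfer to the real line
  have hHPR : H =ᵐ[volume.restrict (Set.Ioc (-L) (-L + T))]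
      (fun x : ℝ => Pc (x : AddCircle T)) := by
    have hae2 : HC =ᵐ[(volume : Measure (AddCircle T))] Pc := by
      rw [volume_eq_smul_haarAddCircle]
      exact Measure.ae_smul_measure hHCPc _
    have hae3 : (HC ∘ (QuotientAddGroup.mk : ℝ → AddCircle T))
        =ᵐ[volume.restrict (Set.Ioc (-L) (-L + T))]
        ((Pc : AddCircle T → ℂ) ∘ (QuotientAddGroup.mk : ℝ → AddCircle T)) := by
      refine ae_eq_comp' (AddCircle.measurable_mk'.aemeasurable) hae2 ?_
      rw [(AddCircle.measurePreserving_mk T (-L)).map_eq]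
    filter_upwards [hae3, ae_restrict_mem measurableSet_Ioc] with x hx1 hx2
    rw [← hcomp x hx2]
    exact hx1
  rw [hIocT] at hHPR
  -- the trigonometric polynomial, as an entire function
  set PRC : ℂ → ℂ := fun z =>
    ∑ i ∈ s, fourierCoeff HC i * Complex.exp (2 * Real.pi * Complex.I * i * z / T) with hPRC
  have hPcPR : ∀ x : ℝ, Pc (x : AddCircle T) = PRC x := by
    intro x
    rw [hPc, hPRC]
    rw [ContinuousMap.coe_sum, Finset.sum_apply]
    refine Finset.sum_congr rfl fun i _ => ?_
    rw [ContinuousMap.coe_smul, Pi.smul_apply, smul_eq_mul, fourier_coe_apply]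
  have hPRCanalytic : AnalyticOnNhd ℂ PRC Set.univ := by
    refine DifferentiableOn.analyticOnNhd ?_ isOpen_univ
    refine Differentiable.differentiableOn ?_
    refine Differentiable.fun_sum fun i _ => ?_
    refine (differentiable_const _).mul ?_
    refine Complex.differentiable_exp.comp ?_
    exact ((differentiable_const _).mul differentiable_id).div_const _
  -- PRC vanishes a.e. on (ωm, L]
  have hPR0 : ∀ᵐ x : ℝ ∂volume.restrict (Set.Ioc ωm L), PRC (x:ℂ) = 0 := by
    have h1 := ae_restrict_of_ae_restrict_of_subset
      (Set.Ioc_subset_Ioc_left (by linarith : -L ≤ ωm)) hHPR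
    have h2 : ∀ᵐ x ∂volume.restrict (Set.Ioc ωm L), H x = 0 := by
      filter_upwards [ae_restrict_of_ae hsupp, ae_restrict_mem measurableSet_Ioc] with x hx1 hx2
      refine hx1 fun hmem => ?_
      rcases hmem with ⟨h1', h2'⟩
      rcases hx2 with ⟨h3', h4'⟩
      linarith
    filter_upwards [h1, h2] with x hx1 hx2
    rw [← hPcPR, ← hx1, hx2]
  -- the zero set is infinite
  set Z : Set ℝ := {x : ℝ | x ∈ Set.Ioc ωm L ∧ PRC x = 0} with hZ
  have hPRCcont : Continuous PRC := by
    refine continuous_finset_sum _ fun i _ => ?_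
    exact continuous_const.mul (Complex.continuous_exp.comp
      ((continuous_const.mul continuous_id').div_const _))
  have hZinf : Z.Infinite := by
    intro hfin'
    have hZ0 : volume Z = 0 := hfin'.measure_zero _
    have hmeasP : MeasurableSet {x : ℝ | PRC (x:ℂ) = 0} :=
      ((hPRCcont.comp Complex.continuous_ofReal).measurable) (measurableSet_singleton 0)
    have hne : volume.restrict (Set.Ioc ωm L) {x : ℝ | ¬ PRC (x:ℂ) = 0} = 0 := by
      have := hPR0
      rw [ae_iff] at this
      exact this
    have huniv : (volume.restrict (Set.Ioc ωm L)) Set.univ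
        ≤ (volume.restrict (Set.Ioc ωm L)) {x : ℝ | PRC (x:ℂ) = 0}
          + (volume.restrict (Set.Ioc ωm L)) {x : ℝ | ¬ PRC (x:ℂ) = 0} := by
      rw [(by ext x; simp [em] : (Set.univ : Set ℝ)
        = {x : ℝ | PRC (x:ℂ) = 0} ∪ {x : ℝ | ¬ PRC (x:ℂ) = 0})]
      exact measure_union_le _ _
    rw [hne, add_zero, Measure.restrict_apply_univ, Measure.restrict_apply hmeasP] at huniv
    have hZeq : {x : ℝ | PRC (x:ℂ) = 0} ∩ Set.Ioc ωm L = Z := by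
      ext x; simp only [hZ, Set.mem_inter_iff, Set.mem_setOf_eq, Set.mem_Ioc]; tauto
    rw [hZeq, hZ0, nonpos_iff_eq_zero, Real.volume_Ioc] at huniv
    rw [ENNReal.ofReal_eq_zero] at huniv
    linarith
  have hZcomp : Z ⊆ Set.Icc ωm L := fun x hx => Set.Ioc_subset_Icc_self hx.1
  obtain ⟨x₀, hx₀K, hx₀acc⟩ := hZinf.exists_accPt_of_subset_isCompact isCompact_Icc hZcomp
  have hfreq : ∃ᶠ z : ℝ in 𝓝[≠] x₀, PRC (z:ℂ) = 0 := by
    rw [accPt_iff_frequently] at hx₀acc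
    rw [frequently_nhdsWithin_iff]
    exact hx₀acc.mono fun y hy => ⟨hy.2.2, hy.1⟩
  have hfreqC : ∃ᶠ z in 𝓝[≠] (x₀ : ℂ), PRC z = 0 := by
    have htend : Filter.Tendsto (fun x : ℝ => (x:ℂ)) (𝓝[≠] x₀) (𝓝[≠] (x₀:ℂ)) := by
      rw [tendsto_nhdsWithin_iff]
      constructor
      · exact (Complex.continuous_ofReal.continuousAt).tendsto.mono_left nhdsWithin_le_nhds
      · refine eventually_mem_nhdsWithin.mono fun y hy hc => hy ?_
        simp only [Set.mem_singleton_iff] at hc ⊢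
        exact_mod_cast hc
    exact htend.frequently hfreq
  have hPRC0 : ∀ z : ℂ, PRC z = 0 := fun z =>
    hPRCanalytic.eqOn_zero_of_preconnected_of_frequently_eq_zero isPreconnected_univ
      (Set.mem_univ _) hfreqC (Set.mem_univ z)
  -- conclude
  have hH0 : ∀ᵐ x ∂volume.restrict (Set.Ioc (-L) L), H x = 0 := by
    filter_upwards [hHPR] with x hx
    rw [hx, hPcPR, hPRC0]
  have h1 := (ae_restrict_iff' measurableSet_Ioc).mp hH0
  filter_upwards [h1, hsupp] with x hx1 hx2
  by_cases hx : x ∈ Set.Ioc (-L) L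
  · exact hx1 hx
  · refine hx2 fun hmem => hx ?_
    rcases hmem with ⟨h1', h2'⟩
    exact ⟨by linarith, by linarith⟩

lemma exp_bdd_int (F : ℝ → ℂ) (hF : Integrable F) (t : ℝ) :
    Integrable (fun ω : ℝ => F ω * Complex.exp (Complex.I * ω * t)) := by
  have h1 : Continuous (fun ω : ℝ => Complex.exp (Complex.I * ω * t)) := by
    exact Complex.continuous_exp.comp
      ((continuous_const.mul Complex.continuous_ofReal).mul continuous_const)
  have h2 : Integrable (fun ω : ℝ => Complex.exp (Complex.I * ω * t) * F ω) := by
    refine Integrable.bdd_mul (c := 1) hF h1.aestronglyMeasurable (Filter.Eventually.of_forall fun ω => ?_)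
    rw [Complex.norm_exp]
    have : (Complex.I * (ω:ℂ) * (t:ℂ)).re = 0 := by simp
    rw [this, Real.exp_zero]
  exact h2.congr (Filter.Eventually.of_forall fun ω => mul_comm _ _)

theorem uniqueness_above_nyquist_general
    (ωm lam Ts : ℝ) (hωm : 0 < ωm) (hlam : 0 < lam)
    (hTs : 0 < Ts) (hNyq : Ts < Real.pi / ωm)
    (g G : ℝ → ℝ) (hg : Set.InjOn g (Set.Icc (-lam) lam))
    (hGbound : ∀ a : ℝ, |G a| ≤ lam)
    (hGin : ∀ a : ℝ, |a| ≤ lam → G a = g a)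
    (f₁ f₂ : ℝ → ℝ)
    (hf₁ : IsBandlimited ωm f₁) (hf₂ : IsBandlimited ωm f₂)
    (hsamp : ∀ n : ℤ, G (f₁ (n * Ts)) = G (f₂ (n * Ts))) :
    f₁ = f₂ := by
  obtain ⟨F₁, hF₁2, hF₁supp, hF₁eq⟩ := hf₁
  obtain ⟨F₂, hF₂2, hF₂supp, hF₂eq⟩ := hf₂
  have hπ : (0:ℝ) < Real.pi := Real.pi_pos
  set L : ℝ := Real.pi / Ts with hLdef
  have hL0 : 0 < L := by positivity
  have hωmL : ωm < L := by
    rw [hLdef, lt_div_iff₀ hTs]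
    rw [lt_div_iff₀ hωm] at hNyq
    linarith [hNyq]
  have hπL : Real.pi / L = Ts := by
    rw [hLdef]
    field_simp
  -- integrability
  have hF₁int : Integrable F₁ := aux_int F₁ hF₁2 hF₁supp
  have hF₂int : Integrable F₂ := aux_int F₂ hF₂2 hF₂supp
  -- measurable representative of F₁ - F₂
  have hsub2 : MemLp (F₁ - F₂) 2 volume := hF₁2.sub hF₂2
  set H : ℝ → ℂ := hsub2.1.mk (F₁ - F₂) with hHdef
  have hae : (F₁ - F₂) =ᵐ[volume] H := hsub2.1.ae_eq_mk
  have hmeas : Measurable H := hsub2.1.stronglyMeasurable_mk.measurable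
  have hH2 : MemLp H 2 volume := (memLp_congr_ae hae).mp hsub2
  have hsuppH : ∀ᵐ ω : ℝ, ω ∉ Set.Icc (-ωm) ωm → H ω = 0 := by
    filter_upwards [hF₁supp, hF₂supp, hae] with ω h1 h2 h3 hmem
    rw [← h3, Pi.sub_apply, h1 hmem, h2 hmem, sub_zero]
  -- pointwise formula for the difference
  have hkey : ∀ t : ℝ, ((f₁ t - f₂ t : ℝ) : ℂ)
      = (1 / (2 * Real.pi)) * ∫ ω : ℝ, H ω * Complex.exp (Complex.I * ω * t) := by
    intro t
    have hint : (∫ ω : ℝ, H ω * Complex.exp (Complex.I * ω * t))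
        = (∫ ω : ℝ, F₁ ω * Complex.exp (Complex.I * ω * t))
          - ∫ ω : ℝ, F₂ ω * Complex.exp (Complex.I * ω * t) := by
      rw [← integral_sub (exp_bdd_int F₁ hF₁int t) (exp_bdd_int F₂ hF₂int t)]
      refine integral_congr_ae ?_
      filter_upwards [hae] with ω h3
      rw [← h3, Pi.sub_apply, sub_mul]
    rw [hint, mul_sub, ← hF₁eq, ← hF₂eq]
    push_cast
    ring
  -- decay of samples
  have hdecay : ∀ᶠ t : ℝ in cocompact ℝ, |f₁ t| ≤ lam ∧ |f₂ t| ≤ lam := by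
    have hd : ∀ (F : ℝ → ℂ) (f : ℝ → ℝ),
        (∀ t : ℝ, (f t : ℂ) = (1 / (2 * Real.pi)) * ∫ ω : ℝ,
          F ω * Complex.exp (Complex.I * ω * t)) →
        ∀ᶠ t : ℝ in cocompact ℝ, |f t| ≤ lam := by
      intro F f hfeq
      have h1 : Tendsto (fun t : ℝ => (f t : ℂ)) (cocompact ℝ) (𝓝 0) := by
        simp_rw [hfeq]
        simpa using (aux_decay F).const_mul ((1 : ℂ) / (2 * Real.pi))
      have h2 := Metric.tendsto_nhds.mp h1 lam hlam
      filter_upwards [h2] with t ht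
      rw [dist_zero_right, Complex.norm_real, Real.norm_eq_abs] at ht
      exact ht.le
    filter_upwards [hd F₁ f₁ hF₁eq, hd F₂ f₂ hF₂eq] with t h1 h2
    exact ⟨h1, h2⟩
  -- all but finitely many samples agree
  obtain ⟨K, hK, hKP⟩ := hasBasis_cocompact.eventually_iff.mp hdecay
  obtain ⟨R, hR⟩ := hK.isBounded.subset_closedBall 0
  set N : ℕ := ⌈(R + 1) / Ts⌉₊ with hNdef
  have hsampeq : ∀ n : ℤ, (N:ℤ) ≤ |n| → f₁ (n * Ts) = f₂ (n * Ts) := by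
    intro n hn
    have hnot : (n : ℝ) * Ts ∉ K := by
      intro hmem
      have h1 := hR hmem
      rw [Metric.mem_closedBall, dist_zero_right, Real.norm_eq_abs, abs_mul,
        abs_of_pos hTs] at h1
      have h2 : (R + 1) / Ts ≤ (N : ℝ) := Nat.le_ceil _
      have h3 : (N : ℝ) ≤ |(n : ℝ)| := by
        rw [← Int.cast_natCast, ← Int.cast_abs]
        exact_mod_cast hn
      have h4 : (R + 1) / Ts * Ts ≤ |(n:ℝ)| * Ts :=
        mul_le_mul_of_nonneg_right (h2.trans h3) hTs.le
      rw [div_mul_cancel₀ _ hTs.ne'] at h4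
      linarith
    obtain ⟨hb1, hb2⟩ := hKP hnot
    have he1 : G (f₁ (n * Ts)) = g (f₁ (n * Ts)) := hGin _ hb1
    have he2 : G (f₂ (n * Ts)) = g (f₂ (n * Ts)) := hGin _ hb2
    refine hg (abs_le.mp hb1) (abs_le.mp hb2) ?_
    rw [← he1, ← he2]
    exact hsamp n
  -- coefficients vanish
  have hzero : ∀ n : ℤ, (N:ℤ) ≤ |n| →
      (∫ ω : ℝ, H ω * Complex.exp (Complex.I * ω * (n * (Real.pi / L)))) = 0 := by
    intro n hn
    have h1 : (n : ℝ) * (Real.pi / L) = n * Ts := by rw [hπL]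
    have h2 := hkey ((n : ℝ) * Ts)
    rw [hsampeq n hn, sub_self] at h2
    have h3 : ((0:ℝ):ℂ) = 0 := by norm_cast
    rw [h3] at h2
    have h4 : (1 / (2 * (Real.pi:ℂ))) ≠ 0 := by
      simp only [ne_eq, one_div, inv_eq_zero, mul_eq_zero, OfNat.ofNat_ne_zero, false_or]
      exact_mod_cast hπ.ne'
    have h5 := (mul_eq_zero.mp h2.symm).resolve_left (by exact_mod_cast h4)
    have h6 : ∀ ω : ℝ, Complex.I * ω * ((n:ℝ) * (Real.pi / L) : ℝ)
        = Complex.I * ω * ((n:ℝ) * Ts : ℝ) := by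
      intro ω; rw [h1]
    have h7 : ((Real.pi:ℂ)) / (L:ℂ) = (Ts:ℂ) := by exact_mod_cast hπL
    calc (∫ ω : ℝ, H ω * Complex.exp (Complex.I * ω * (n * (Real.pi / L))))
        = ∫ ω : ℝ, H ω * Complex.exp (Complex.I * ω * (((n:ℝ) * Ts : ℝ) : ℂ)) := by
          refine integral_congr_ae (Filter.Eventually.of_forall fun ω => ?_)
          congr 1
          congr 1
          push_cast
          rw [h7]
      _ = 0 := h5
  -- spectrum vanishes
  have hH0 := spectrum_zero L ωm hωm hωmL H hmeas hH2 hsuppH N hzero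
  -- conclude
  funext t
  have h2 := hkey t
  have h3 : (∫ ω : ℝ, H ω * Complex.exp (Complex.I * ω * t)) = 0 := by
    rw [← integral_zero ℝ ℂ]
    refine integral_congr_ae ?_
    filter_upwards [hH0] with ω hω
    rw [hω, Pi.zero_apply, zero_mul]
  rw [h3, mul_zero] at h2
  have : f₁ t - f₂ t = 0 := by exact_mod_cast h2
  linarith
end

section
/- Let ω_m > 0, λ > 0, and let the sampling interval satisfy 0 < T_s < π/ω_m (sampling above the Nyquist rate). If f₁ and f₂ are both ω_m-bandlimited with finite energy and M_λ(f₁(n T_s)) = M_λ(f₂(n T_s)) for every n ∈ ℤ, then f₁ = f₂ (as functions on ℝ). -/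
set_option maxHeartbeats 1000000

open MeasureTheory Complex Set Filter

private lemma modOp_diff (lam a b : ℝ) (hlam : 0 < lam)
    (h : modOp lam a = modOp lam b) :
    ∃ k : ℤ, a - b = 2 * lam * k := by
  unfold modOp at h
  have h2 : (0:ℝ) < 2 * lam := by linarith
  have hmul : Int.fract ((a + lam) / (2 * lam)) * (2 * lam)
      = Int.fract ((b + lam) / (2 * lam)) * (2 * lam) := by linarith
  have hfr := mul_right_cancel₀ (ne_of_gt h2) hmul
  obtain ⟨z, hz⟩ := Int.fract_eq_fract.mp hfr
  refine ⟨z, ?_⟩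
  have : (a + lam) / (2 * lam) - (b + lam) / (2 * lam) = z := hz
  field_simp at this
  linarith [this]

private lemma integrable_kernel (ωm : ℝ) (F : ℝ → ℂ) (hF : MemLp F 2 volume)
    (hsupp : ∀ᵐ ω : ℝ ∂volume, ω ∉ Set.Icc (-ωm) ωm → F ω = 0) (t : ℝ) :
    Integrable (fun ω : ℝ => F ω * Complex.exp (Complex.I * ω * t)) volume := by
  have hfin : IsFiniteMeasure (volume.restrict (Icc (-ωm) ωm)) :=
    ⟨by rw [Measure.restrict_apply_univ]; exact measure_Icc_lt_top⟩
  have hIntOn : IntegrableOn F (Icc (-ωm) ωm) volume :=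
    (hF.restrict (Icc (-ωm) ωm)).integrable one_le_two
  have hind : (Icc (-ωm) ωm).indicator F =ᵐ[volume] F := by
    filter_upwards [hsupp] with ω hω
    by_cases h : ω ∈ Icc (-ωm) ωm
    · simp [indicator_of_mem h]
    · simp [indicator_of_notMem h, hω h]
  have hIntF : Integrable F volume :=
    ((integrable_indicator_iff measurableSet_Icc).2 hIntOn).congr hind
  refine Integrable.mono' hIntF.norm ?_ ?_
  · exact hF.1.mul
      (Complex.continuous_exp.comp
        ((continuous_const.mul Complex.continuous_ofReal).mul continuous_const)).aestronglyMeasurable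
  · refine Eventually.of_forall fun ω => ?_
    rw [norm_mul]
    have : ‖Complex.exp (Complex.I * ω * t)‖ = 1 := by
      rw [Complex.norm_exp]
      simp
    rw [this, mul_one]

private lemma Lp_coeFn_finsetSum {α E : Type*} [MeasurableSpace α] {μ : Measure α}
    [NormedAddCommGroup E] {p : ENNReal} {ι : Type*} (s : Finset ι) (f : ι → Lp E p μ) :
    (↑(∑ i ∈ s, f i) : α → E) =ᵐ[μ] fun x => ∑ i ∈ s, (f i : α → E) x := by
  classical
  induction s using Finset.induction with
  | empty => simp only [Finset.sum_empty]; exact Lp.coeFn_zero E p μ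
  | insert a s h ih =>
    rw [Finset.sum_insert h]
    filter_upwards [Lp.coeFn_add (f a) (∑ i ∈ s, f i), ih] with x hx1 hx2
    simp only [Pi.add_apply] at hx1
    rw [hx1, hx2, Finset.sum_insert h]

private lemma main_zero (ωm lam Ts : ℝ) (hωm : 0 < ωm) (hlam : 0 < lam) (hTs : 0 < Ts)
    (hNyq : ωm < Real.pi / Ts)
    (G : ℝ → ℂ) (hGm : StronglyMeasurable G)
    (hG : MemLp G 2 volume)
    (hsupp : ∀ ω ∉ Set.Icc (-ωm) ωm, G ω = 0)
    (hsamp : ∀ m : ℤ, ∃ k : ℤ, (∫ ω : ℝ, G ω * Complex.exp (Complex.I * ω * ((m : ℝ) * Ts)))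
        = (4 * Real.pi * lam) * (k : ℂ)) :
    G =ᵐ[volume] 0 := by
  have hπ := Real.pi_pos
  set L : ℝ := 2 * Real.pi / Ts with hLdef
  have hL : 0 < L := by positivity
  haveI : Fact (0 < L) := ⟨hL⟩
  set a : ℝ := -(L / 2) with hadef
  have haL : a + L = L / 2 := by ring
  have hωmL : ωm < L / 2 := by
    rw [hLdef]
    have h2 : 2 * Real.pi / Ts / 2 = Real.pi / Ts := by ring
    rw [h2]
    exact hNyq
  have hIccIoc : Set.Icc (-ωm) ωm ⊆ Set.Ioc a (a + L) := by
    rw [haL]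
    intro x hx
    constructor
    · have : a < -ωm := by rw [hadef]; linarith
      linarith [hx.1]
    · linarith [hx.2, hωmL.le]
  -- the lifted function on the circle
  set Gc : AddCircle L → ℂ := AddCircle.liftIoc L a G with hGcdef
  have hGcmk : ∀ x ∈ Set.Ioc a (a + L), Gc (x : AddCircle L) = G x := fun x hx =>
    AddCircle.liftIoc_coe_apply hx
  have hGcmeas : Measurable Gc := by
    have : Gc = (G ∘ Subtype.val) ∘ (AddCircle.measurableEquivIoc L a) := rfl
    rw [this]
    exact (hGm.measurable.comp measurable_subtype_coe).comp
      (AddCircle.measurableEquivIoc L a).measurable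
  have hmp := AddCircle.measurePreserving_mk L a
  -- Gc is in L² of the circle
  have hGcvol : MemLp Gc 2 (volume : Measure (AddCircle L)) := by
    rw [← hmp.map_eq]
    refine (memLp_map_measure_iff hGcmeas.stronglyMeasurable.aestronglyMeasurable
      hmp.measurable.aemeasurable).2 ?_
    refine (hG.restrict (Set.Ioc a (a + L))).ae_eq ?_
    refine ((ae_restrict_iff' measurableSet_Ioc).2 (Eventually.of_forall fun x hx => ?_))
    exact (hGcmk x hx).symm
  have hGcL2 : MemLp Gc 2 (AddCircle.haarAddCircle : Measure (AddCircle L)) := by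
    have hne : (ENNReal.ofReal L) ≠ 0 := by
      simp [ENNReal.ofReal_eq_zero, not_le, hL]
    have hmeq : (AddCircle.haarAddCircle : Measure (AddCircle L))
        = (ENNReal.ofReal L)⁻¹ • (volume : Measure (AddCircle L)) := by
      rw [AddCircle.volume_eq_smul_haarAddCircle, smul_smul,
        ENNReal.inv_mul_cancel hne ENNReal.ofReal_ne_top, one_smul]
    rw [hmeq]
    exact hGcvol.smul_measure (ENNReal.inv_ne_top.mpr hne)
  -- Fourier coefficients of Gc
  have hLC : (L : ℂ) ≠ 0 := by exact_mod_cast hL.ne'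
  have hcoeff : ∀ n : ℤ, fourierCoeff Gc n
      = (1 / (L:ℂ)) * ∫ ω : ℝ, G ω * Complex.exp (Complex.I * ω * (((-n : ℤ) : ℝ) * Ts)) := by
    intro n
    rw [hGcdef, fourierCoeff_liftIoc_eq, fourierCoeffOn_eq_integral]
    have h1 : ∀ x : ℝ, (fourier (-n) (x : AddCircle (a + L - a))) • G x
        = G x * Complex.exp (Complex.I * x * (((-n : ℤ) : ℝ) * Ts)) := by
      intro x
      rw [smul_eq_mul, mul_comm]
      congr 1
      rw [fourier_coe_apply]
      congr 1
      have hsub : a + L - a = L := by ring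
      rw [hsub]
      have : (L : ℂ) ≠ 0 := hLC
      field_simp
      push_cast
      rw [hLdef]
      have hTsC : (Ts : ℂ) ≠ 0 := by exact_mod_cast hTs.ne'
      field_simp
      push_cast
      field_simp
    simp_rw [h1]
    rw [intervalIntegral.integral_of_le (by linarith : a ≤ a + L)]
    rw [setIntegral_eq_integral_of_forall_compl_eq_zero (fun x hx => ?_)]
    · have hsub : a + L - a = L := by ring
      rw [hsub]
      simp
    · have : G x = 0 := hsupp x (fun hmem => hx (hIccIoc hmem))
      simp [this]
  -- coefficients lie in a lattice
  set c0 : ℝ := 4 * Real.pi * lam / L with hc0def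
  have hc0 : 0 < c0 := by positivity
  have hlattice : ∀ n : ℤ, ∃ k : ℤ, fourierCoeff Gc n = (c0 : ℂ) * k := by
    intro n
    obtain ⟨k, hk⟩ := hsamp (-n)
    refine ⟨k, ?_⟩
    rw [hcoeff n, hk, hc0def]
    push_cast
    field_simp
  -- the L² element
  set Glp := hGcL2.toLp Gc with hGLdef
  have hrepr : ∀ n : ℤ, fourierBasis.repr Glp n = fourierCoeff Gc n := by
    intro n
    rw [fourierBasis_repr]
    simp only [fourierCoeff]
    apply integral_congr_ae
    filter_upwards [hGcL2.coeFn_toLp] with t ht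
    rw [ht]
  have hsummable : Summable (fun n : ℤ => ‖fourierCoeff Gc n‖ ^ (2:ℝ)) := by
    have h := (fourierBasis.repr Glp).property
    have h2 := (memℓp_gen_iff (by norm_num : 0 < (2:ENNReal).toReal)).1 h
    simp only [ENNReal.toReal_ofNat] at h2
    have h3 : (fun n : ℤ => ‖fourierBasis.repr Glp n‖ ^ (2:ℝ))
        = fun n : ℤ => ‖fourierCoeff Gc n‖ ^ (2:ℝ) := by
      funext n; rw [hrepr]
    rwa [h3] at h2
  have hev : ∀ᶠ n : ℤ in cofinite, fourierCoeff Gc n = 0 := by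
    have htend := hsummable.tendsto_cofinite_zero
    have hlt : ∀ᶠ n : ℤ in cofinite, ‖fourierCoeff Gc n‖ ^ (2:ℝ) < c0 ^ (2:ℝ) :=
      htend.eventually (gt_mem_nhds (by positivity : (0:ℝ) < c0 ^ (2:ℝ)))
    filter_upwards [hlt] with n hn
    by_contra hne0
    obtain ⟨k, hk⟩ := hlattice n
    have hk0 : k ≠ 0 := by
      rintro rfl
      exact hne0 (by rw [hk]; simp)
    have h1k : (1:ℝ) ≤ |(k:ℝ)| := by exact_mod_cast Int.one_le_abs hk0
    have hnrm : ‖fourierCoeff Gc n‖ = c0 * |(k:ℝ)| := by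
      have hki : ‖((k:ℤ):ℂ)‖ = |(k:ℝ)| := by
        rw [← Complex.ofReal_intCast, Complex.norm_real, Real.norm_eq_abs]
      rw [hk, norm_mul, Complex.norm_real, Real.norm_eq_abs, abs_of_pos hc0, hki]
    have hge : c0 ≤ ‖fourierCoeff Gc n‖ := by rw [hnrm]; nlinarith
    have := Real.rpow_le_rpow hc0.le hge (by norm_num : (0:ℝ) ≤ 2)
    linarith
  classical
  have hfin : {n : ℤ | ¬ fourierCoeff Gc n = 0}.Finite :=
    Filter.eventually_cofinite.mp hev
  set s : Finset ℤ := hfin.toFinset with hsdef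
  have hsmem : ∀ n ∉ s, fourierCoeff Gc n = 0 := by
    intro n hn
    by_contra h
    exact hn (hfin.mem_toFinset.2 h)
  -- Glp equals a finite sum of basis vectors
  have hsum1 : HasSum (fun n : ℤ => fourierBasis.repr Glp n • (fourierBasis (T := L)) n) Glp :=
    fourierBasis.hasSum_repr Glp
  have hsum2 : HasSum (fun n : ℤ => fourierBasis.repr Glp n • (fourierBasis (T := L)) n)
      (∑ n ∈ s, fourierBasis.repr Glp n • (fourierBasis (T := L)) n) := by
    apply hasSum_sum_of_ne_finset_zero
    intro n hn
    rw [hrepr, hsmem n hn, zero_smul]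
  have hGLsum : Glp = ∑ n ∈ s, fourierBasis.repr Glp n • (fourierBasis (T := L)) n :=
    hsum1.unique hsum2
  -- hence Gc agrees a.e. with a trigonometric polynomial
  set P : AddCircle L → ℂ := fun t => ∑ n ∈ s, fourierCoeff Gc n • fourier n t with hPdef
  have hGcP : Gc =ᵐ[(AddCircle.haarAddCircle : Measure (AddCircle L))] P := by
    have h1 : Gc =ᵐ[(AddCircle.haarAddCircle : Measure (AddCircle L))] Glp :=
      hGcL2.coeFn_toLp.symm
    have h2 : ((Glp : Lp ℂ 2 (AddCircle.haarAddCircle (T := L))) : AddCircle L → ℂ)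
        =ᵐ[(AddCircle.haarAddCircle : Measure (AddCircle L))]
        fun t => ∑ n ∈ s,
          ((fourierBasis.repr Glp n • (fourierBasis (T := L)) n : Lp ℂ 2 _) : AddCircle L → ℂ) t := by
      conv_lhs => rw [hGLsum]
      exact Lp_coeFn_finsetSum s _
    have h3 : ∀ n : ℤ,
        ((fourierBasis.repr Glp n • (fourierBasis (T := L)) n : Lp ℂ 2 _) : AddCircle L → ℂ)
        =ᵐ[(AddCircle.haarAddCircle : Measure (AddCircle L))]
        fun t => fourierCoeff Gc n • fourier n t := by
      intro n
      have hsmul := Lp.coeFn_smul (fourierBasis.repr Glp n) ((fourierBasis (T := L)) n)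
      have hfl : ((fourierBasis (T := L)) n : AddCircle L → ℂ)
          =ᵐ[(AddCircle.haarAddCircle : Measure (AddCircle L))] fourier n := by
        rw [coe_fourierBasis]
        exact coeFn_fourierLp 2 n
      filter_upwards [hsmul, hfl] with t ht1 ht2
      rw [ht1, Pi.smul_apply, ht2, hrepr]
    have h4 : ∀ᵐ t ∂(AddCircle.haarAddCircle : Measure (AddCircle L)), ∀ n ∈ (s : Set ℤ),
        ((fourierBasis.repr Glp n • (fourierBasis (T := L)) n : Lp ℂ 2 _) : AddCircle L → ℂ) t
        = fourierCoeff Gc n • fourier n t :=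
      (MeasureTheory.ae_ball_iff (s.finite_toSet.countable)).2 (fun n _ => h3 n)
    filter_upwards [h1, h2, h4] with t ht1 ht2 ht4
    rw [ht1, ht2, hPdef]
    exact Finset.sum_congr rfl (fun n hn => ht4 n (by exact_mod_cast hn))
  -- transfer the a.e. identity to the real line
  have hvol_circ : Gc =ᵐ[(volume : Measure (AddCircle L))] P := by
    rw [AddCircle.volume_eq_smul_haarAddCircle]
    exact Measure.ae_smul_measure hGcP _
  have hIoc : (Gc ∘ (QuotientAddGroup.mk : ℝ → AddCircle L))
      =ᵐ[volume.restrict (Set.Ioc a (a + L))] (P ∘ (QuotientAddGroup.mk : ℝ → AddCircle L)) :=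
    hmp.quasiMeasurePreserving.ae_eq_comp hvol_circ
  -- the trig polynomial vanishes on an interval
  set Q : ℝ → ℂ := fun x => P (x : AddCircle L) with hQdef
  have hQcont : Continuous Q := by
    have hPc : Continuous P := by
      apply continuous_finset_sum
      intro n _
      exact (fourier n).continuous.const_smul (fourierCoeff Gc n)
    exact hPc.comp (AddCircle.continuous_mk' L)
  have hsubIoo : Set.Ioo ωm (a + L) ⊆ Set.Ioc a (a + L) := by
    intro x hx
    constructor
    · have : a < 0 := by rw [hadef]; linarith
      linarith [hx.1]
    · exact hx.2.le
  have hae0 : ∀ᵐ x ∂volume.restrict (Set.Ioo ωm (a + L)), Q x = 0 := by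
    have h5 := ae_restrict_of_ae_restrict_of_subset hsubIoo hIoc
    filter_upwards [h5, ae_restrict_mem measurableSet_Ioo] with x hx hmem
    have hGx : G x = 0 := hsupp x (fun hc => absurd hc.2 (not_le.2 hmem.1))
    simp only [Function.comp_apply] at hx
    show P (x : AddCircle L) = 0
    rw [← hx, hGcmk x (hsubIoo hmem)]
    exact hGx
  have hQ0 : ∀ x ∈ Set.Ioo ωm (a + L), Q x = 0 := by
    intro x hx
    by_contra hne
    have hopen : IsOpen {y : ℝ | Q y ≠ 0} :=
      isOpen_compl_singleton.preimage hQcont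
    have hUopen : IsOpen (Set.Ioo ωm (a + L) ∩ {y : ℝ | Q y ≠ 0}) := isOpen_Ioo.inter hopen
    have hUne : (Set.Ioo ωm (a + L) ∩ {y : ℝ | Q y ≠ 0}).Nonempty := ⟨x, hx, hne⟩
    have hpos := hUopen.measure_pos volume hUne
    have hnull : volume (Set.Ioo ωm (a + L) ∩ {y : ℝ | Q y ≠ 0}) = 0 := by
      have h6 := (ae_restrict_iff' measurableSet_Ioo).1 hae0
      rw [MeasureTheory.ae_iff] at h6
      refine measure_mono_null ?_ h6
      intro y hy
      simp only [Set.mem_setOf_eq, not_forall]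
      exact ⟨hy.1, hy.2⟩
    exact absurd hnull hpos.ne'
  -- the fourier monomials as exponentials
  have hTsC : (Ts : ℂ) ≠ 0 := by exact_mod_cast hTs.ne'
  have hfour : ∀ (n : ℤ) (x : ℝ),
      fourier n (x : AddCircle L) = Complex.exp (Complex.I * Ts * x * n) := by
    intro n x
    rw [fourier_coe_apply]
    congr 1
    have hπC : (Real.pi : ℂ) ≠ 0 := by exact_mod_cast hπ.ne'
    have hLc : (L : ℂ) = 2 * (Real.pi : ℂ) / Ts := by rw [hLdef]; push_cast; ring
    rw [hLc]
    field_simp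
  -- build the polynomial with these coefficients
  set M : ℤ := ((s.sup (fun n => n.natAbs) : ℕ) : ℤ) with hMdef
  have hMn : ∀ n ∈ s, 0 ≤ n + M := by
    intro n hn
    have h7 : n.natAbs ≤ s.sup (fun n => n.natAbs) := Finset.le_sup (f := fun n => n.natAbs) hn
    omega
  set p : Polynomial ℂ := ∑ n ∈ s, Polynomial.monomial (n + M).toNat (fourierCoeff Gc n)
    with hpdef
  have hroot : ∀ x ∈ Set.Ioo ωm (a + L),
      Polynomial.IsRoot p (Complex.exp (Complex.I * Ts * x)) := by
    intro x hx
    have hQx : Q x = 0 := hQ0 x hx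
    rw [Polynomial.IsRoot.def, hpdef, Polynomial.eval_finset_sum]
    have hterm : ∀ n ∈ s, Polynomial.eval (Complex.exp (Complex.I * Ts * x))
        (Polynomial.monomial (n + M).toNat (fourierCoeff Gc n))
        = (fourierCoeff Gc n • fourier n (x : AddCircle L)) * Complex.exp (Complex.I * Ts * x * M) := by
      intro n hn
      have hcast : (((n + M).toNat : ℕ) : ℂ) = ((n : ℂ) + (M : ℂ)) := by
        have := Int.toNat_of_nonneg (hMn n hn)
        exact_mod_cast congrArg (fun z : ℤ => (z : ℂ)) this
      have hz : Complex.exp (Complex.I * Ts * x) ^ ((n + M).toNat)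
          = Complex.exp (Complex.I * Ts * x * n + Complex.I * Ts * x * M) := by
        rw [← Complex.exp_nat_mul]
        congr 1
        rw [hcast]
        ring
      have hmulexp : (fourierCoeff Gc n * Complex.exp (Complex.I * Ts * x * n))
            * Complex.exp (Complex.I * Ts * x * M)
          = fourierCoeff Gc n * Complex.exp (Complex.I * Ts * x * n + Complex.I * Ts * x * M) := by
        rw [mul_assoc, Complex.exp_add]
      rw [Polynomial.eval_monomial, hz, hfour n x, smul_eq_mul, hmulexp]
    rw [Finset.sum_congr rfl hterm, ← Finset.sum_mul]
    have : (∑ n ∈ s, fourierCoeff Gc n • fourier n (x : AddCircle L)) = Q x := rfl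
    rw [this, hQx, zero_mul]
  have hpz : p = 0 := by
    apply Polynomial.eq_zero_of_infinite_isRoot
    have himg : (fun x : ℝ => Complex.exp (Complex.I * Ts * x)) '' (Set.Ioo ωm (a + L))
        ⊆ {z : ℂ | Polynomial.IsRoot p z} := by
      rintro z ⟨x, hx, rfl⟩
      exact hroot x hx
    refine Set.Infinite.mono himg ?_
    apply Set.Infinite.image
    · intro x hx y hy hxy
      rw [Complex.exp_eq_exp_iff_exists_int] at hxy
      obtain ⟨kk, hkk⟩ := hxy
      have hxyr : (Ts : ℂ) * x = Ts * y + kk * (2 * Real.pi) := by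
        have hIne : (Complex.I : ℂ) ≠ 0 := Complex.I_ne_zero
        apply mul_left_cancel₀ hIne
        calc (Complex.I : ℂ) * ((Ts:ℂ) * x) = Complex.I * Ts * x := by ring
        _ = Complex.I * Ts * y + kk * (2 * Real.pi * Complex.I) := hkk
        _ = Complex.I * ((Ts:ℂ) * y + kk * (2 * Real.pi)) := by ring
      have hxyr2 : Ts * x = Ts * y + kk * (2 * Real.pi) := by exact_mod_cast hxyr
      have hklzero : (kk : ℝ) * L = x - y := by
        rw [hLdef]
        field_simp at hxyr2 ⊢
        linarith
      have hxybound : |x - y| < L := by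
        have hx1 := hx.1; have hx2 := hx.2; have hy1 := hy.1; have hy2 := hy.2
        rw [haL] at hx2 hy2
        rw [abs_sub_lt_iff]
        constructor <;> linarith
      have hkk0 : kk = 0 := by
        by_contra hkkne
        have h1 : (1:ℝ) ≤ |(kk:ℝ)| := by exact_mod_cast Int.one_le_abs hkkne
        have h2 : |(kk:ℝ) * L| = |(kk:ℝ)| * L := by rw [abs_mul, abs_of_pos hL]
        have : L ≤ |(kk:ℝ) * L| := by rw [h2]; nlinarith
        rw [hklzero] at this
        linarith
      have : x - y = 0 := by rw [← hklzero, hkk0]; simp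
      linarith
    · exact Set.Ioo_infinite (by rw [haL]; linarith)
  have hcoeff0 : ∀ n : ℤ, fourierCoeff Gc n = 0 := by
    intro n
    by_cases hn : n ∈ s
    · have hcn : p.coeff (n + M).toNat = fourierCoeff Gc n := by
        rw [hpdef, Polynomial.finset_sum_coeff]
        rw [Finset.sum_eq_single n]
        · simp [Polynomial.coeff_monomial]
        · intro m hm hmn
          rw [Polynomial.coeff_monomial, if_neg]
          intro hEq
          apply hmn
          have h1 := Int.toNat_of_nonneg (hMn m hm)
          have h2 := Int.toNat_of_nonneg (hMn n hn)
          omega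
        · intro h; exact absurd hn h
      rw [← hcn, hpz]
      simp
    · exact hsmem n hn
  -- conclude
  have hGIoc : ∀ᵐ x ∂volume.restrict (Set.Ioc a (a + L)), G x = 0 := by
    filter_upwards [hIoc, ae_restrict_mem measurableSet_Ioc] with x hx hmem
    simp only [Function.comp_apply] at hx
    rw [← hGcmk x hmem, hx, hPdef]
    simp [hcoeff0]
  have hGlobal := (ae_restrict_iff' measurableSet_Ioc).1 hGIoc
  filter_upwards [hGlobal] with x hx
  by_cases hmem : x ∈ Set.Ioc a (a + L)
  · exact hx hmem
  · exact hsupp x (fun hc => hmem (hIccIoc hc))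

theorem uniqueness_above_nyquist_modulo
    (ωm lam Ts : ℝ) (hωm : 0 < ωm) (hlam : 0 < lam)
    (hTs : 0 < Ts) (hNyq : Ts < Real.pi / ωm)
    (f₁ f₂ : ℝ → ℝ)
    (hf₁ : IsBandlimited ωm f₁) (hf₂ : IsBandlimited ωm f₂)
    (hsamp : ∀ n : ℤ, modOp lam (f₁ (n * Ts)) = modOp lam (f₂ (n * Ts))) :
    f₁ = f₂ := by
  obtain ⟨F₁, hF₁, hs₁, hrep₁⟩ := hf₁
  obtain ⟨F₂, hF₂, hs₂, hrep₂⟩ := hf₂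
  have hπ := Real.pi_pos
  have hNyq' : ωm < Real.pi / Ts := by
    rw [lt_div_iff₀ hTs]
    rw [lt_div_iff₀ hωm] at hNyq
    linarith [hNyq]
  set G0 : ℝ → ℂ := fun ω => F₁ ω - F₂ ω with hG0def
  have hG0 : MemLp G0 2 volume := hF₁.sub hF₂
  have hInt1 : ∀ t : ℝ, Integrable (fun ω : ℝ => F₁ ω * Complex.exp (Complex.I * ω * t)) volume :=
    integrable_kernel ωm F₁ hF₁ hs₁
  have hInt2 : ∀ t : ℝ, Integrable (fun ω : ℝ => F₂ ω * Complex.exp (Complex.I * ω * t)) volume :=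
    integrable_kernel ωm F₂ hF₂ hs₂
  have hg : ∀ t : ℝ, ((f₁ t : ℂ) - f₂ t)
      = (1 / (2 * Real.pi)) * ∫ ω : ℝ, G0 ω * Complex.exp (Complex.I * ω * t) := by
    intro t
    rw [hrep₁ t, hrep₂ t, ← mul_sub]
    congr 1
    rw [← integral_sub (hInt1 t) (hInt2 t)]
    congr 1
    funext ω
    rw [hG0def]
    ring
  set G1 := hG0.1.mk G0 with hG1def
  have hG1m : StronglyMeasurable G1 := hG0.1.stronglyMeasurable_mk
  have hG1ae : G0 =ᵐ[volume] G1 := hG0.1.ae_eq_mk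
  set G : ℝ → ℂ := (Set.Icc (-ωm) ωm).indicator G1 with hGdef
  have hGm : StronglyMeasurable G := hG1m.indicator measurableSet_Icc
  have hGae : G =ᵐ[volume] G0 := by
    filter_upwards [hG1ae, hs₁, hs₂] with ω h1 h2 h3
    by_cases hmem : ω ∈ Set.Icc (-ωm) ωm
    · rw [hGdef, Set.indicator_of_mem hmem]
      exact h1.symm
    · rw [hGdef, Set.indicator_of_notMem hmem, hG0def]
      simp [h2 hmem, h3 hmem]
  have hG : MemLp G 2 volume := hG0.ae_eq hGae.symm
  have hsupp : ∀ ω ∉ Set.Icc (-ωm) ωm, G ω = 0 := fun ω h => Set.indicator_of_notMem h _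
  have hIntGeq : ∀ t : ℝ, (∫ ω : ℝ, G ω * Complex.exp (Complex.I * ω * t))
      = ∫ ω : ℝ, G0 ω * Complex.exp (Complex.I * ω * t) := by
    intro t
    apply integral_congr_ae
    filter_upwards [hGae] with ω h
    rw [h]
  have h2πC : (2 * (Real.pi : ℂ)) ≠ 0 := by
    have : (Real.pi : ℂ) ≠ 0 := by exact_mod_cast hπ.ne'
    simp [this]
  have hsampG : ∀ m : ℤ, ∃ k : ℤ,
      (∫ ω : ℝ, G ω * Complex.exp (Complex.I * ω * ((m : ℝ) * Ts)))
      = (4 * Real.pi * lam) * (k : ℂ) := by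
    intro m
    set tm : ℝ := (m : ℝ) * Ts with htm
    obtain ⟨k, hk⟩ := modOp_diff lam (f₁ tm) (f₂ tm) hlam (hsamp m)
    refine ⟨k, ?_⟩
    have h3 : (∫ ω : ℝ, G ω * Complex.exp (Complex.I * ω * (tm : ℂ)))
        = (4 * Real.pi * lam) * (k : ℂ) := by
      have h2 := hg tm
      have h2' : (∫ ω : ℝ, G0 ω * Complex.exp (Complex.I * ω * (tm : ℂ)))
          = 2 * (Real.pi : ℂ) * ((f₁ tm : ℂ) - f₂ tm) := by
        rw [h2]
        rw [← mul_assoc, mul_one_div_cancel h2πC, one_mul]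
      have h4 : ((f₁ tm : ℂ) - f₂ tm) = ((2 * lam * k : ℝ) : ℂ) := by
        rw [← hk]
        push_cast
        ring
      rw [hIntGeq, h2', h4]
      push_cast
      ring
    have hcast : ((tm : ℝ) : ℂ) = ((m : ℝ) : ℂ) * (Ts : ℂ) := by
      rw [htm]
      push_cast
      ring
    rw [hcast] at h3
    exact h3
  have hGzero := main_zero ωm lam Ts hωm hlam hTs hNyq' G hGm hG hsupp hsampG
  funext t
  have h5 : (∫ ω : ℝ, G0 ω * Complex.exp (Complex.I * ω * t)) = 0 := by
    rw [← hIntGeq t]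
    apply integral_eq_zero_of_ae
    filter_upwards [hGzero] with ω h
    simp only [Pi.zero_apply] at h ⊢
    rw [h, zero_mul]
  have h6 := hg t
  rw [h5, mul_zero] at h6
  have h7 : (f₁ t : ℂ) = f₂ t := by linear_combination h6
  exact_mod_cast h7
end

section
/- Let ω_m > 0 and let the sampling interval satisfy T_s > π/ω_m (sampling below the Nyquist rate). Then there exist two functions f₁ ≠ f₂, both ω_m-bandlimited with finite energy, such that f₁(n T_s) = f₂(n T_s) for every n ∈ ℤ; consequently, for any memoryless operator G : ℝ → ℝ, their nonlinear samples G(f₁(n T_s)) and G(f₂(n T_s)) coincide for all n ∈ ℤ. -/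
open MeasureTheory Real Set in
/-- Fourier-domain witness: `-i` on `[a,b]`, `+i` on `[-b,-a]`, zero elsewhere. -/
noncomputable def Fab (a b : ℝ) : ℝ → ℂ := fun ω =>
  (Set.Icc a b).indicator (fun _ => -Complex.I) ω +
  (Set.Icc (-b) (-a)).indicator (fun _ => Complex.I) ω

/-- Time-domain function `(cos(at) - cos(bt))/(π t)` (value `0` at `t = 0`). -/
noncomputable def fab (a b : ℝ) : ℝ → ℝ := fun t =>
  if t = 0 then 0 else (Real.cos (a * t) - Real.cos (b * t)) / (Real.pi * t)

open MeasureTheory Real Set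

lemma memFab (a b : ℝ) : MemLp (Fab a b) 2 volume := by
  apply MemLp.add
  · exact memLp_indicator_const 2 measurableSet_Icc _ (Or.inr measure_Icc_lt_top.ne)
  · exact memLp_indicator_const 2 measurableSet_Icc _ (Or.inr measure_Icc_lt_top.ne)

lemma integral_Fab (a b : ℝ) (hab : a ≤ b) (t : ℝ) :
    (∫ ω : ℝ, Fab a b ω * Complex.exp (Complex.I * ω * t))
      = if t = 0 then 0
        else 2 * ((Real.cos (a * t) : ℂ) - (Real.cos (b * t) : ℂ)) / (t : ℂ) := by
  have hsplit : ∀ ω : ℝ, Fab a b ω * Complex.exp (Complex.I * ω * t) =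
      (Set.Icc a b).indicator (fun ω : ℝ => -Complex.I * Complex.exp (Complex.I * ω * t)) ω +
      (Set.Icc (-b) (-a)).indicator (fun ω : ℝ => Complex.I * Complex.exp (Complex.I * ω * t)) ω := by
    intro ω
    by_cases h1 : ω ∈ Set.Icc a b <;> by_cases h2 : ω ∈ Set.Icc (-b) (-a) <;>
      simp [Fab, h1, h2] <;> ring
  have hi1 : MeasureTheory.Integrable
      ((Set.Icc a b).indicator (fun ω : ℝ => -Complex.I * Complex.exp (Complex.I * ω * t))) := by
    apply MeasureTheory.IntegrableOn.integrable_indicator _ measurableSet_Icc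
    apply Continuous.integrableOn_Icc
    continuity
  have hi2 : MeasureTheory.Integrable
      ((Set.Icc (-b) (-a)).indicator (fun ω : ℝ => Complex.I * Complex.exp (Complex.I * ω * t))) := by
    apply MeasureTheory.IntegrableOn.integrable_indicator _ measurableSet_Icc
    apply Continuous.integrableOn_Icc
    continuity
  simp_rw [hsplit]
  rw [MeasureTheory.integral_add hi1 hi2,
    MeasureTheory.integral_indicator measurableSet_Icc,
    MeasureTheory.integral_indicator measurableSet_Icc,
    MeasureTheory.integral_Icc_eq_integral_Ioc,
    MeasureTheory.integral_Icc_eq_integral_Ioc,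
    ← intervalIntegral.integral_of_le hab,
    ← intervalIntegral.integral_of_le (by linarith : -b ≤ -a)]
  by_cases ht : t = 0
  · subst ht
    simp [intervalIntegral.integral_const]
    ring
  · have htC : (t : ℂ) ≠ 0 := Complex.ofReal_ne_zero.mpr ht
    have hc : Complex.I * (t : ℂ) ≠ 0 := mul_ne_zero Complex.I_ne_zero htC
    have hrw : ∀ ω : ℝ, Complex.I * (ω : ℂ) * (t : ℂ) = (Complex.I * t) * ω := by
      intro ω; ring
    simp_rw [hrw]
    rw [intervalIntegral.integral_const_mul, intervalIntegral.integral_const_mul,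
      integral_exp_mul_complex hc, integral_exp_mul_complex hc]
    have e1 : Complex.I * (t : ℂ) * (a : ℂ) = ((t * a : ℝ) : ℂ) * Complex.I := by push_cast; ring
    have e2 : Complex.I * (t : ℂ) * (b : ℂ) = ((t * b : ℝ) : ℂ) * Complex.I := by push_cast; ring
    have e3 : Complex.I * (t : ℂ) * ((-a : ℝ) : ℂ) = (-((t * a : ℝ) : ℂ)) * Complex.I := by
      push_cast; ring
    have e4 : Complex.I * (t : ℂ) * ((-b : ℝ) : ℂ) = (-((t * b : ℝ) : ℂ)) * Complex.I := by
      push_cast; ring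
    rw [e1, e2, e3, e4, Complex.exp_mul_I, Complex.exp_mul_I, Complex.exp_mul_I, Complex.exp_mul_I,
      Complex.cos_neg, Complex.sin_neg, Complex.cos_neg, Complex.sin_neg, if_neg ht]
    rw [← Complex.ofReal_cos, ← Complex.ofReal_cos, ← Complex.ofReal_sin, ← Complex.ofReal_sin]
    have hca : Real.cos (a * t) = Real.cos (t * a) := by rw [mul_comm]
    have hcb : Real.cos (b * t) = Real.cos (t * b) := by rw [mul_comm]
    rw [hca, hcb]
    field_simp
    ring

theorem non_identifiability_below_nyquist
    (ωm Ts : ℝ) (hωm : 0 < ωm) (hTs : Real.pi / ωm < Ts) :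
    ∃ f₁ f₂ : ℝ → ℝ, f₁ ≠ f₂ ∧
      IsBandlimited ωm f₁ ∧ IsBandlimited ωm f₂ ∧
      (∀ n : ℤ, f₁ (n * Ts) = f₂ (n * Ts)) ∧
      ∀ G : ℝ → ℝ, ∀ n : ℤ, G (f₁ (n * Ts)) = G (f₂ (n * Ts)) := by
  have hπ : (0:ℝ) < Real.pi := Real.pi_pos
  have hTs0 : 0 < Ts := lt_trans (div_pos hπ hωm) hTs
  set ω₀ : ℝ := Real.pi / Ts with hω₀def
  have hω₀ : 0 < ω₀ := div_pos hπ hTs0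
  have hω₀lt : ω₀ < ωm := by
    rw [hω₀def, div_lt_iff₀ hTs0]
    rw [div_lt_iff₀ hωm] at hTs
    linarith [mul_comm Ts ωm ▸ hTs]
  set δ : ℝ := min ω₀ (ωm - ω₀) with hδdef
  have hδ : 0 < δ := lt_min hω₀ (by linarith)
  set a : ℝ := ω₀ - δ with hadef
  set b : ℝ := ω₀ + δ with hbdef
  have ha0 : 0 ≤ a := by have := min_le_left ω₀ (ωm - ω₀); simp only [hadef]; linarith
  have hbωm : b ≤ ωm := by have := min_le_right ω₀ (ωm - ω₀); simp only [hbdef]; linarith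
  have hab : a < b := by simp only [hadef, hbdef]; linarith
  have hb0 : 0 < b := lt_of_le_of_lt ha0 hab
  -- f₂ vanishes at all sample points
  have hsamp : ∀ n : ℤ, fab a b (n * Ts) = 0 := by
    intro n
    by_cases hn : (n : ℝ) * Ts = 0
    · simp [fab, hn]
    · have hnum : Real.cos (a * (n * Ts)) - Real.cos (b * (n * Ts)) = 0 := by
        have h1 : a * ((n:ℝ) * Ts) = (n:ℝ) * Real.pi - δ * (n * Ts) := by
          simp only [hadef, hω₀def]; field_simp
        have h2 : b * ((n:ℝ) * Ts) = (n:ℝ) * Real.pi + δ * (n * Ts) := by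
          simp only [hbdef, hω₀def]; field_simp
        rw [h1, h2, Real.cos_sub, Real.cos_add, Real.sin_int_mul_pi]
        ring
      simp [fab, hn, hnum]
  refine ⟨(fun _ => 0), fab a b, ?_, ?_, ?_, ?_, ?_⟩
  · -- f₁ ≠ f₂
    intro h
    set t₀ : ℝ := Real.pi / (2 * b) with ht₀def
    have ht₀ : 0 < t₀ := div_pos hπ (by linarith)
    have hbt₀ : b * t₀ = Real.pi / 2 := by
      rw [ht₀def]; field_simp
    have hat₀ : a * t₀ < Real.pi / 2 := by
      rw [← hbt₀]
      exact mul_lt_mul_of_pos_right hab ht₀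
    have hcosa : 0 < Real.cos (a * t₀) := by
      apply Real.cos_pos_of_mem_Ioo
      constructor
      · nlinarith [mul_nonneg ha0 ht₀.le]
      · exact hat₀
    have hval : fab a b t₀ = 0 := by rw [← h]
    rw [fab] at hval
    simp only [if_neg ht₀.ne'] at hval
    rw [hbt₀, Real.cos_pi_div_two, sub_zero, div_eq_zero_iff] at hval
    rcases hval with h' | h'
    · exact absurd h' hcosa.ne'
    · exact absurd h' (by positivity)
  · -- f₁ bandlimited
    refine ⟨fun _ => 0, ?_, ?_, ?_⟩
    · exact MeasureTheory.MemLp.zero'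
    · filter_upwards with ω _; rfl
    · intro t; simp
  · -- f₂ bandlimited
    refine ⟨Fab a b, memFab a b, ?_, ?_⟩
    · filter_upwards with ω hω
      have h1 : ω ∉ Set.Icc a b := by
        intro hmem
        exact hω ⟨le_trans (by linarith) hmem.1, le_trans hmem.2 hbωm⟩
      have h2 : ω ∉ Set.Icc (-b) (-a) := by
        intro hmem
        exact hω ⟨le_trans (by linarith) hmem.1, le_trans hmem.2 (by linarith)⟩
      simp [Fab, Set.indicator_of_notMem, h1, h2]
    · intro t
      rw [integral_Fab a b hab.le t]
      by_cases ht : t = 0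
      · simp [fab, ht]
      · rw [if_neg ht]
        simp only [fab, if_neg ht]
        have htC : (t : ℂ) ≠ 0 := Complex.ofReal_ne_zero.mpr ht
        have hπC : ((Real.pi : ℝ) : ℂ) ≠ 0 := Complex.ofReal_ne_zero.mpr hπ.ne'
        push_cast
        field_simp
  · intro n; exact (hsamp n).symm
  · intro G n; rw [hsamp n]
end

section
/- Let ω_m > 0, λ > 0, and let T_s = π/ω_m (sampling exactly at the Nyquist rate). Let g : ℝ → ℝ restrict to a bijection from [-λ, λ] onto [-λ, λ], and let G : ℝ → ℝ be a generalized amplitude-limiting operator with in-range response g. Then: (i) for every ω_m-bandlimited finite-energy function f for which there exists n₀ ∈ ℤ with |f(n₀ T_s)| > λ, there exists an ω_m-bandlimited finite-energy function f̂ with f̂ ≠ f and G(f̂(n T_s)) = G(f(n T_s)) for all n ∈ ℤ; (ii) such a function f exists, e.g. f(t) = 2λ·sinc(t/T_s − n₀). In particular, signals in this class are not uniquely identifiable from their nonlinear samples at the Nyquist rate. -/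
open MeasureTheory Set

private lemma aux_integrable (ωm : ℝ) (F : ℝ → ℂ) (hF : MemLp F 2 volume)
    (hsupp : ∀ᵐ ω : ℝ ∂volume, ω ∉ Set.Icc (-ωm) ωm → F ω = 0) (t : ℝ) :
    Integrable (fun ω : ℝ => F ω * Complex.exp (Complex.I * ω * t)) := by
  have hind : F =ᵐ[volume] (Set.Icc (-ωm) ωm).indicator F := by
    filter_upwards [hsupp] with ω h
    by_cases hω : ω ∈ Set.Icc (-ωm) ωm
    · simp [Set.indicator_of_mem hω]
    · simp [Set.indicator_of_notMem hω, h hω]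
  have hFi : Integrable F volume := by
    rw [integrable_congr hind, integrable_indicator_iff measurableSet_Icc]
    haveI : IsFiniteMeasure (volume.restrict (Set.Icc (-ωm : ℝ) ωm)) := by
      constructor; rw [Measure.restrict_apply_univ]; exact measure_Icc_lt_top
    have := (hF.restrict (Set.Icc (-ωm) ωm)).mono_exponent (p := 1) (by norm_num)
    exact (memLp_one_iff_integrable.mp this)
  refine hFi.norm.mono' (hF.aestronglyMeasurable.mul ?_) ?_
  · exact (Complex.continuous_exp.comp (by continuity)).aestronglyMeasurable
  · refine Filter.Eventually.of_forall fun ω => ?_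
    rw [norm_mul, Complex.norm_exp]
    simp [Complex.mul_re]

private lemma aux_add {ωm : ℝ} {f h : ℝ → ℝ} (hf : IsBandlimited ωm f)
    (hh : IsBandlimited ωm h) : IsBandlimited ωm (fun t => f t + h t) := by
  obtain ⟨F₁, hF₁, hs₁, hi₁⟩ := hf
  obtain ⟨F₂, hF₂, hs₂, hi₂⟩ := hh
  refine ⟨fun ω => F₁ ω + F₂ ω, hF₁.add hF₂, ?_, fun t => ?_⟩
  · filter_upwards [hs₁, hs₂] with ω h1 h2 hω
    rw [h1 hω, h2 hω, add_zero]
  · have : ∫ ω : ℝ, (F₁ ω + F₂ ω) * Complex.exp (Complex.I * ω * t)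
        = (∫ ω : ℝ, F₁ ω * Complex.exp (Complex.I * ω * t))
          + ∫ ω : ℝ, F₂ ω * Complex.exp (Complex.I * ω * t) := by
      rw [← integral_add (aux_integrable ωm F₁ hF₁ hs₁ t) (aux_integrable ωm F₂ hF₂ hs₂ t)]
      congr 1; funext ω; ring
    push_cast
    rw [this, hi₁ t, hi₂ t]
    ring

private lemma aux_sinc (ωm Ts c : ℝ) (hωm : 0 < ωm) (hTs : Ts = Real.pi / ωm) (n₀ : ℤ) :
    IsBandlimited ωm (fun t : ℝ => c * sinc (t / Ts - n₀)) := by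
  have hπ := Real.pi_pos
  have hTs0 : Ts ≠ 0 := by rw [hTs]; positivity
  refine ⟨(Set.Icc (-ωm) ωm).indicator
      (fun ω : ℝ => (c * Ts : ℝ) * Complex.exp (-(Complex.I * ω * (n₀ * Ts)))), ?_, ?_, ?_⟩
  · rw [memLp_indicator_iff_restrict measurableSet_Icc]
    haveI : IsFiniteMeasure (volume.restrict (Set.Icc (-ωm : ℝ) ωm)) := by
      constructor; rw [Measure.restrict_apply_univ]; exact measure_Icc_lt_top
    refine MemLp.of_bound ((Continuous.aestronglyMeasurable (by continuity))) (|c * Ts|) ?_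
    refine Filter.Eventually.of_forall fun ω => ?_
    rw [norm_mul, Complex.norm_exp]
    rw [abs_mul]
    simp [Complex.mul_re]
  · refine Filter.Eventually.of_forall fun ω hω => Set.indicator_of_notMem hω _
  · intro t
    set s : ℝ := t - n₀ * Ts with hsdef
    have heq : (fun ω : ℝ => (Set.Icc (-ωm) ωm).indicator
          (fun ω : ℝ => (c * Ts : ℝ) * Complex.exp (-(Complex.I * ω * (n₀ * Ts)))) ω *
        Complex.exp (Complex.I * ω * t))
        = (Set.Icc (-ωm) ωm).indicator
          (fun ω : ℝ => (c * Ts : ℝ) * Complex.exp ((Complex.I * s) * ω)) := by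
      funext ω
      by_cases hω : ω ∈ Set.Icc (-ωm) ωm
      · rw [Set.indicator_of_mem hω, Set.indicator_of_mem hω]
        rw [mul_assoc, ← Complex.exp_add]
        congr 2
        push_cast [hsdef]
        ring
      · rw [Set.indicator_of_notMem hω, Set.indicator_of_notMem hω, zero_mul]
    have hint0 : ∫ ω : ℝ, (Set.Icc (-ωm) ωm).indicator
          (fun ω : ℝ => (c * Ts : ℝ) * Complex.exp (-(Complex.I * ω * (n₀ * Ts)))) ω *
        Complex.exp (Complex.I * ω * t)
        = ∫ ω in (-ωm)..ωm, (c * Ts : ℝ) * Complex.exp ((Complex.I * s) * ω) := by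
      rw [heq, MeasureTheory.integral_indicator measurableSet_Icc,
        MeasureTheory.integral_Icc_eq_integral_Ioc,
        ← intervalIntegral.integral_of_le (by linarith : -ωm ≤ ωm)]
    by_cases hs : s = 0
    · have ht : t = n₀ * Ts := by rw [hsdef] at hs; linarith
      have harg : t / Ts - n₀ = 0 := by
        rw [ht, mul_div_assoc, div_self hTs0]; ring
      have hci : ∫ ω in (-ωm)..ωm, ((c * Ts : ℝ) : ℂ) * Complex.exp ((Complex.I * s) * ω)
          = ((2 * ωm : ℝ) : ℂ) * ((c * Ts : ℝ) : ℂ) := by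
        have : ∀ ω : ℝ, ((c * Ts : ℝ) : ℂ) * Complex.exp ((Complex.I * s) * ω)
            = ((c * Ts : ℝ) : ℂ) := by
          intro ω; rw [hs]; simp
        rw [intervalIntegral.integral_congr (fun ω _ => this ω),
          intervalIntegral.integral_const]
        push_cast
        rw [Complex.real_smul]
        push_cast
        ring
      beta_reduce
      rw [hint0, hci, harg]
      simp only [sinc, if_pos rfl]
      rw [hTs]
      have hω0 : (ωm : ℂ) ≠ 0 := by exact_mod_cast ne_of_gt hωm
      have hπ0 : (Real.pi : ℂ) ≠ 0 := Complex.ofReal_ne_zero.mpr (ne_of_gt hπ)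
      push_cast
      field_simp
    · rw [hint0, intervalIntegral.integral_const_mul,
        integral_exp_mul_complex (by simpa using Complex.ofReal_ne_zero.mpr hs)]
      have hsinc : sinc (t / Ts - n₀) = Real.sin (ωm * s) / (ωm * s) := by
        have h1 : t / Ts - n₀ = s / Ts := by field_simp [hsdef]; ring
        have h2 : Real.pi * (s / Ts) = ωm * s := by rw [hTs]; field_simp
        rw [sinc, h1, if_neg (div_ne_zero hs hTs0), h2]
      beta_reduce
      rw [hsinc]
      have hexp : Complex.exp (Complex.I * s * ωm) - Complex.exp (Complex.I * s * (-ωm))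
          = 2 * Real.sin (ωm * s) * Complex.I := by
        have e1 : (Complex.I * s * ωm) = ((ωm * s : ℝ) : ℂ) * Complex.I := by push_cast; ring
        have e2 : (Complex.I * s * (-ωm)) = (-(ωm * s : ℝ) : ℂ) * Complex.I := by
          push_cast; ring
        rw [e1, e2, Complex.exp_mul_I, Complex.exp_mul_I, Complex.cos_neg, Complex.sin_neg]
        push_cast [Complex.ofReal_sin]
        ring
      rw [Complex.ofReal_neg, hexp]
      have hω0 : (ωm : ℂ) ≠ 0 := by exact_mod_cast ne_of_gt hωm
      have hs0 : (s : ℂ) ≠ 0 := Complex.ofReal_ne_zero.mpr hs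
      have hπ0 : (Real.pi : ℂ) ≠ 0 := Complex.ofReal_ne_zero.mpr (ne_of_gt hπ)
      rw [hTs]
      push_cast
      field_simp

private lemma aux_sinc_int (Ts : ℝ) (hTs0 : Ts ≠ 0) (n n₀ : ℤ) :
    sinc ((n : ℝ) * Ts / Ts - n₀) = if n = n₀ then 1 else 0 := by
  have harg : (n : ℝ) * Ts / Ts - n₀ = ((n - n₀ : ℤ) : ℝ) := by
    rw [mul_div_assoc, div_self hTs0]; push_cast; ring
  rw [harg]
  by_cases h : n = n₀
  · simp [h, sinc]
  · have hne : ((n - n₀ : ℤ) : ℝ) ≠ 0 := by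
      exact_mod_cast sub_ne_zero.mpr h
    rw [if_neg h, sinc, if_neg hne, mul_comm, Real.sin_int_mul_pi, zero_div]

theorem non_identifiability_at_nyquist
    (ωm lam Ts : ℝ) (hωm : 0 < ωm) (hlam : 0 < lam)
    (hTs : Ts = Real.pi / ωm)
    (g G : ℝ → ℝ) (hg : Set.BijOn g (Set.Icc (-lam) lam) (Set.Icc (-lam) lam))
    (hGbound : ∀ a : ℝ, |G a| ≤ lam)
    (hGin : ∀ a : ℝ, |a| ≤ lam → G a = g a) :
    (∀ f : ℝ → ℝ, IsBandlimited ωm f → (∃ n₀ : ℤ, lam < |f (n₀ * Ts)|) →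
      ∃ fhat : ℝ → ℝ, IsBandlimited ωm fhat ∧ fhat ≠ f ∧
        ∀ n : ℤ, G (fhat (n * Ts)) = G (f (n * Ts))) ∧
    (∀ n₀ : ℤ, IsBandlimited ωm (fun t : ℝ => 2 * lam * sinc (t / Ts - n₀)) ∧
      lam < |2 * lam * sinc ((n₀ : ℝ) * Ts / Ts - n₀)|) := by
  have hTs0 : Ts ≠ 0 := by rw [hTs]; positivity
  constructor
  · intro f hfBL ⟨n₀, hn₀⟩
    set a : ℝ := f (n₀ * Ts) with ha
    have hGa : G a ∈ Set.Icc (-lam) lam := abs_le.mp (hGbound a)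
    obtain ⟨b, hbmem, hgb⟩ := hg.surjOn hGa
    have hbabs : |b| ≤ lam := abs_le.mpr hbmem
    have hba : b ≠ a := fun h => absurd hn₀ (not_lt.mpr (h ▸ hbabs))
    refine ⟨fun t => f t + (b - a) * sinc (t / Ts - n₀),
      aux_add hfBL (aux_sinc ωm Ts (b - a) hωm hTs n₀), ?_, ?_⟩
    · intro hcontra
      have := congrFun hcontra (n₀ * Ts)
      rw [aux_sinc_int Ts hTs0 n₀ n₀, if_pos rfl] at this
      simp only [← ha] at this
      have : b = a := by linarith
      exact hba this
    · intro n
      beta_reduce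
      by_cases hn : n = n₀
      · subst hn
        rw [aux_sinc_int Ts hTs0 n n, if_pos rfl]
        have hval : f (n * Ts) + (b - a) * 1 = b := by rw [← ha]; ring
        rw [hval, hGin b hbabs, hgb]
      · rw [aux_sinc_int Ts hTs0 n n₀, if_neg hn, mul_zero, add_zero]
  · intro n₀
    refine ⟨aux_sinc ωm Ts (2 * lam) hωm hTs n₀, ?_⟩
    rw [aux_sinc_int Ts hTs0 n₀ n₀, if_pos rfl, mul_one, abs_of_pos (by linarith)]
    linarith
end

section
/- Fix ω_m > 0, λ > 0, and a sampling interval T_s > 0. Then the following are equivalent: (a) for all f₁, f₂ that are ω_m-bandlimited with finite energy, if M_λ(f₁(n T_s)) = M_λ(f₂(n T_s)) for every n ∈ ℤ then f₁ = f₂; (b) T_s < π/ω_m, i.e. the sampling rate is strictly above the Nyquist rate. -/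
open MeasureTheory Set Complex Filter AddCircle
open scoped ENNReal

lemma modOp_sub_mem {lam : ℝ} (hlam : 0 < lam) {x y : ℝ}
    (h : modOp lam x = modOp lam y) : ∃ k : ℤ, x - y = 2 * lam * k := by
  have h2 : (0:ℝ) < 2 * lam := by linarith
  have hf : Int.fract ((x + lam)/(2*lam)) = Int.fract ((y + lam)/(2*lam)) := by
    unfold modOp at h
    have := mul_right_cancel₀ (ne_of_gt h2) (by linarith : Int.fract ((x + lam)/(2*lam)) * (2*lam) = Int.fract ((y + lam)/(2*lam)) * (2*lam))
    exact this
  obtain ⟨z, hz⟩ := Int.fract_eq_fract.mp hf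
  refine ⟨z, ?_⟩
  have : (x + lam) / (2*lam) - (y + lam)/(2*lam) = (z:ℝ) := hz
  field_simp at this
  linarith

lemma modOp_two_mul_int (lam : ℝ) (hlam : 0 < lam) (k : ℤ) :
    modOp lam (2 * lam * k) = 0 := by
  have h2 : (2 * lam) ≠ 0 := by positivity
  unfold modOp
  have : (2 * lam * k + lam) / (2 * lam) = (k : ℝ) + 1/2 := by field_simp
  rw [this, Int.fract_intCast_add, Int.fract_eq_self.mpr ⟨by norm_num, by norm_num⟩]
  ring

lemma integrable_of_memL2_support {R : ℝ} {F : ℝ → ℂ} (hF : MeasureTheory.MemLp F 2 volume)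
    (hv : ∀ᵐ ω : ℝ, ω ∉ Icc (-R) R → F ω = 0) : Integrable F volume := by
  have h1 : IntegrableOn F (Icc (-R) R) volume := by
    haveI : IsFiniteMeasure (volume.restrict (Icc (-R) R)) :=
      ⟨by rw [Measure.restrict_apply_univ]; exact measure_Icc_lt_top⟩
    exact (hF.restrict _).integrable (by norm_num)
  have h2 : Integrable (Set.indicator (Icc (-R) R) F) volume :=
    (integrable_indicator_iff measurableSet_Icc).2 h1
  refine h2.congr ?_
  filter_upwards [hv] with ω hω
  by_cases h : ω ∈ Icc (-R) R
  · simp [Set.indicator_of_mem h]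
  · simp [Set.indicator_of_notMem h, hω h]

lemma integrable_mul_exp {R : ℝ} {F : ℝ → ℂ} (hF : MeasureTheory.MemLp F 2 volume)
    (hv : ∀ᵐ ω : ℝ, ω ∉ Icc (-R) R → F ω = 0) (t : ℝ) :
    Integrable (fun ω : ℝ => F ω * Complex.exp (Complex.I * ω * t)) volume := by
  have hint := integrable_of_memL2_support hF hv
  have : (fun ω : ℝ => F ω * Complex.exp (Complex.I * ω * t))
      = fun ω : ℝ => Complex.exp (Complex.I * ω * t) * F ω := by
    funext ω; ring
  rw [this]
  refine hint.bdd_mul (c := 1) ?_ (ae_of_all _ fun ω => ?_)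
  · exact (Continuous.aestronglyMeasurable (by fun_prop))
  · have : Complex.I * ω * t = ((ω * t : ℝ) : ℂ) * Complex.I := by push_cast; ring
    rw [this, Complex.norm_exp_ofReal_mul_I]

lemma sinc_rep (lam Ts : ℝ) (hlam : 0 < lam) (hTs : 0 < Ts) (t : ℝ) :
    ((2 * lam * sinc (t / Ts) : ℝ) : ℂ) = (1 / (2 * Real.pi)) *
      ∫ ω : ℝ, Set.indicator (Icc (-(Real.pi/Ts)) (Real.pi/Ts))
        (fun _ => ((2*lam*Ts : ℝ) : ℂ)) ω * Complex.exp (Complex.I * ω * t) := by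
  have hπ : (0:ℝ) < Real.pi := Real.pi_pos
  set a : ℝ := Real.pi / Ts with ha
  have ha0 : 0 < a := by positivity
  have h1 : (fun ω : ℝ => Set.indicator (Icc (-a) a) (fun _ => ((2*lam*Ts : ℝ) : ℂ)) ω
      * Complex.exp (Complex.I * ω * t))
      = fun ω : ℝ => Set.indicator (Icc (-a) a)
        (fun ω => ((2*lam*Ts : ℝ) : ℂ) * Complex.exp (Complex.I * ω * t)) ω := by
    funext ω
    by_cases h : ω ∈ Icc (-a) a
    · simp [Set.indicator_of_mem h]
    · simp [Set.indicator_of_notMem h]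
  rw [h1, integral_indicator measurableSet_Icc, integral_Icc_eq_integral_Ioc,
    ← intervalIntegral.integral_of_le (by linarith : -a ≤ a),
    intervalIntegral.integral_const_mul]
  have h2 : ∀ ω : ℝ, Complex.exp (Complex.I * ω * t) = Complex.exp ((Complex.I * t) * ω) := by
    intro ω; ring_nf
  simp only [h2]
  by_cases ht : t = 0
  · subst ht
    simp only [Complex.ofReal_zero, mul_zero, zero_mul, Complex.exp_zero]
    rw [intervalIntegral.integral_const]
    rw [show sinc (0 / Ts) = 1 by simp [sinc]]
    rw [show (a - -a : ℝ) = 2 * (Real.pi / Ts) by rw [ha]; ring]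
    have hTs' : (Ts:ℂ) ≠ 0 := by exact_mod_cast hTs.ne'
    have hπ' : (Real.pi:ℂ) ≠ 0 := by exact_mod_cast hπ.ne'
    rw [Complex.real_smul]
    push_cast
    field_simp
  · have hc : (Complex.I * t) ≠ 0 :=
      mul_ne_zero Complex.I_ne_zero (Complex.ofReal_ne_zero.2 ht)
    rw [integral_exp_mul_complex hc]
    have hsin : Complex.exp (Complex.I * ↑t * ↑a) - Complex.exp (Complex.I * ↑t * -↑a)
        = 2 * Complex.I * Complex.sin ((a * t : ℝ)) := by
      rw [Complex.sin]
      have e1 : -((a*t : ℝ):ℂ) * Complex.I = Complex.I * ↑t * -↑a := by push_cast; ring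
      have e2 : ((a*t : ℝ):ℂ) * Complex.I = Complex.I * ↑t * ↑a := by push_cast; ring
      rw [e1, e2]
      linear_combination (Complex.exp (Complex.I * ↑t * ↑a)
        - Complex.exp (Complex.I * ↑t * -↑a)) * Complex.I_sq
    push_cast
    rw [hsin]
    have harg : Real.pi * (t/Ts) = a * t := by rw [ha]; field_simp
    have hsinc : sinc (t / Ts) = Real.sin (a * t) / (a * t) := by
      rw [sinc, if_neg (by exact div_ne_zero ht hTs.ne')]
      rw [harg]
    rw [hsinc]
    have hTs' : (Ts:ℂ) ≠ 0 := by exact_mod_cast hTs.ne'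
    have hπ' : (Real.pi:ℂ) ≠ 0 := by exact_mod_cast hπ.ne'
    have ht' : (t:ℂ) ≠ 0 := Complex.ofReal_ne_zero.2 ht
    have ha' : (a:ℂ) = ↑Real.pi / ↑Ts := by rw [ha]; push_cast; ring
    rw [Complex.ofReal_mul, Complex.ofReal_div, Complex.ofReal_mul, Complex.ofReal_sin,
      Complex.ofReal_mul, ha']
    field_simp


lemma coeFn_finset_sum_fourierLp {T : ℝ} [hT : Fact (0 < T)] (s : Finset ℤ) (c : ℤ → ℂ) :
    (((∑ n ∈ s, c n • fourierLp 2 n : Lp ℂ 2 (@haarAddCircle T hT))) : AddCircle T → ℂ)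
      =ᵐ[@haarAddCircle T hT] fun x => ∑ n ∈ s, c n * fourier n x := by
  classical
  induction s using Finset.induction_on with
  | empty => simp only [Finset.sum_empty]; exact Lp.coeFn_zero ℂ 2 (@haarAddCircle T hT)
  | @insert a s hns ih =>
    rw [Finset.sum_insert hns]
    filter_upwards [Lp.coeFn_add (c a • fourierLp 2 a) (∑ n ∈ s, c n • fourierLp 2 n),
      Lp.coeFn_smul (c a) (fourierLp 2 a), coeFn_fourierLp 2 a, ih] with x h1 h2 h3 h4
    rw [Finset.sum_insert hns, h1]
    simp only [Pi.add_apply]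
    rw [h4, h2]
    simp only [Pi.smul_apply, smul_eq_mul, h3]

set_option maxHeartbeats 1000000 in
lemma ae_zero_of_samples_multiple
    (ωm Ts lam : ℝ) (hωm : 0 < ωm) (hTs : 0 < Ts) (hlam : 0 < lam)
    (hlt : ωm < Real.pi / Ts) {G : ℝ → ℂ} (hGm : Measurable G)
    (hG2 : MeasureTheory.MemLp G 2 volume)
    (hGv : ∀ᵐ ω : ℝ, ω ∉ Icc (-ωm) ωm → G ω = 0)
    (g : ℤ → ℝ)
    (hrep : ∀ n : ℤ, (∫ ω : ℝ, G ω * Complex.exp (Complex.I * ω * ((n : ℝ) * Ts)))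
       = 2 * Real.pi * (g n : ℂ))
    (hmult : ∀ n : ℤ, ∃ k : ℤ, g n = 2 * lam * k) :
    ∀ᵐ ω : ℝ, G ω = 0 := by
  classical
  have hπ : (0:ℝ) < Real.pi := Real.pi_pos
  set a : ℝ := Real.pi / Ts with ha
  have ha0 : 0 < a := by positivity
  have e2a : -a + 2*a = a := by ring
  haveI hT : Fact (0 < 2*a) := ⟨by linarith⟩
  set H : AddCircle (2*a) → ℂ := AddCircle.liftIoc (2*a) (-a) G with hHdef
  have hHm : Measurable H := by
    have : H = (G ∘ (Subtype.val : Ioc (-a) (-a + 2*a) → ℝ))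
        ∘ (AddCircle.measurableEquivIoc (2*a) (-a)) := rfl
    rw [this]
    exact (hGm.comp measurable_subtype_coe).comp
      (AddCircle.measurableEquivIoc (2*a) (-a)).measurable
  have hHG : ∀ x ∈ Ioc (-a) (-a + 2*a), H ↑x = G x := fun x hx =>
    AddCircle.liftIoc_coe_apply hx
  -- Memℒp with respect to volume, then haar
  have hHvol : MeasureTheory.MemLp H 2 (volume : Measure (AddCircle (2*a))) := by
    rw [← (AddCircle.measurePreserving_mk (2*a) (-a)).map_eq]
    refine (memLp_map_measure_iff hHm.aestronglyMeasurable
      AddCircle.measurable_mk'.aemeasurable).2 ?_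
    refine MeasureTheory.MemLp.ae_eq ?_ (hG2.restrict _)
    filter_upwards [ae_restrict_mem measurableSet_Ioc] with x hx
    exact (hHG x hx).symm
  have h2a0 : (ENNReal.ofReal (2*a)) ≠ 0 := by
    simp only [ne_eq, ENNReal.ofReal_eq_zero, not_le]; linarith
  have hhaar : (@haarAddCircle (2*a) hT) =
      (ENNReal.ofReal (2*a))⁻¹ • (volume : Measure (AddCircle (2*a))) := by
    rw [AddCircle.volume_eq_smul_haarAddCircle, ← smul_assoc, smul_eq_mul,
      ENNReal.inv_mul_cancel h2a0 ENNReal.ofReal_ne_top, one_smul]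
  have hHhaar : MeasureTheory.MemLp H 2 (@haarAddCircle (2*a) hT) := by
    rw [hhaar]
    exact hHvol.smul_measure (ENNReal.inv_ne_top.2 h2a0)
  -- the Fourier monomials on ℝ
  have hfour : ∀ (m : ℤ) (x : ℝ), fourier m (x : AddCircle (2*a))
      = Complex.exp (Complex.I * x * ((m:ℝ) * Ts)) := by
    intro m x
    rw [fourier_coe_apply]
    congr 1
    have hπ' : (Real.pi:ℂ) ≠ 0 := by exact_mod_cast hπ.ne'
    have hTs' : (Ts:ℂ) ≠ 0 := by exact_mod_cast hTs.ne'
    rw [ha]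
    push_cast
    field_simp
  -- Fourier coefficients of H
  have hc : ∀ n : ℤ, fourierCoeff H n = ((Ts * g (-n) : ℝ) : ℂ) := by
    intro n
    rw [fourierCoeff_eq_intervalIntegral H n (-a)]
    have h1 : (∫ x in (-a)..(-a + 2*a), fourier (-n) (x : AddCircle (2*a)) • H ↑x)
        = ∫ x in Ioc (-a) (-a+2*a), G x * Complex.exp (Complex.I * x * (((-n : ℤ) : ℝ) * Ts)) := by
      rw [intervalIntegral.integral_of_le (by linarith)]
      refine setIntegral_congr_ae measurableSet_Ioc (ae_of_all _ fun x hx => ?_)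
      rw [hfour (-n) x, hHG x hx, smul_eq_mul, mul_comm]
    have h2 : (∫ x in Ioc (-a) (-a+2*a), G x * Complex.exp (Complex.I * x * (((-n:ℤ):ℝ) * Ts)))
        = ∫ x : ℝ, G x * Complex.exp (Complex.I * x * (((-n:ℤ):ℝ) * Ts)) := by
      refine setIntegral_eq_integral_of_ae_compl_eq_zero ?_
      filter_upwards [hGv] with x hx hxn
      have hni : x ∉ Icc (-ωm) ωm := by
        intro hmem
        exact hxn ⟨by linarith [hmem.1], by linarith [hmem.2]⟩
      rw [hx hni, zero_mul]
    rw [h1, h2, hrep (-n)]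
    have hπ' : (Real.pi:ℂ) ≠ 0 := by exact_mod_cast hπ.ne'
    have hTs' : (Ts:ℂ) ≠ 0 := by exact_mod_cast hTs.ne'
    rw [Complex.real_smul]
    push_cast
    rw [ha]
    push_cast
    field_simp
  -- L² machinery
  set Hlp : Lp ℂ 2 (@haarAddCircle (2*a) hT) := hHhaar.toLp H with hHlpdef
  have hHlp_ae : (Hlp : AddCircle (2*a) → ℂ) =ᵐ[@haarAddCircle (2*a) hT] H :=
    hHhaar.coeFn_toLp
  have hcoeff : ∀ n : ℤ, fourierCoeff (Hlp : AddCircle (2*a) → ℂ) n = fourierCoeff H n := by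
    intro n
    simp only [fourierCoeff]
    exact integral_congr_ae (hHlp_ae.mono fun x hx => by dsimp only; rw [hx])
  have hrepr : ∀ n : ℤ, fourierBasis.repr Hlp n = fourierCoeff H n := by
    intro n; rw [fourierBasis_repr, hcoeff]
  have hsum : Summable (fun n : ℤ => ‖fourierCoeff H n‖ ^ (2:ℝ)) := by
    have hmem := lp.memℓp (fourierBasis.repr Hlp)
    rw [memℓp_gen_iff (by norm_num : 0 < (2:ℝ≥0∞).toReal)] at hmem
    have heq : (fun n : ℤ => ‖(fourierBasis.repr Hlp) n‖ ^ ((2:ℝ≥0∞)).toReal)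
        = fun n : ℤ => ‖fourierCoeff H n‖ ^ (2:ℝ) := by
      funext n; rw [hrepr n]; norm_num
    rwa [heq] at hmem
  -- the set of nonzero coefficients is finite
  set S : Set ℤ := {n : ℤ | fourierCoeff H n ≠ 0} with hSdef
  have hfinS : S.Finite := by
    have hev : ∀ᶠ n in cofinite, ‖fourierCoeff H n‖ ^ (2:ℝ) < (Ts * (2*lam)) ^ (2:ℝ) := by
      refine hsum.tendsto_cofinite_zero.eventually_lt_const ?_
      positivity
    refine (eventually_cofinite.mp hev).subset ?_
    intro n hn
    simp only [hSdef, mem_setOf_eq] at hn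
    simp only [mem_setOf_eq, not_lt]
    have hgn : g (-n) ≠ 0 := by
      intro h0
      apply hn
      rw [hc n, h0, mul_zero, Complex.ofReal_zero]
    obtain ⟨k, hk⟩ := hmult (-n)
    have hk0 : k ≠ 0 := by rintro rfl; simp at hk; exact hgn hk
    have habs : 2 * lam ≤ |g (-n)| := by
      rw [hk, abs_mul]
      have h1 : (1:ℝ) ≤ |(k:ℝ)| := by
        have := Int.one_le_abs hk0
        calc (1:ℝ) = ((1:ℤ):ℝ) := by norm_num
        _ ≤ ((|k|:ℤ):ℝ) := by exact_mod_cast this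
        _ = |(k:ℝ)| := by push_cast; ring
      have h2 : |2 * lam| = 2 * lam := abs_of_pos (by linarith)
      rw [h2]
      nlinarith
    have hnorm : Ts * (2*lam) ≤ ‖fourierCoeff H n‖ := by
      rw [hc n, Complex.norm_real, Real.norm_eq_abs, abs_mul, abs_of_pos hTs]
      nlinarith
    exact Real.rpow_le_rpow (by positivity) hnorm (by norm_num)
  set Sf : Finset ℤ := hfinS.toFinset with hSfdef
  have hSf_mem : ∀ n : ℤ, n ∈ Sf ↔ fourierCoeff H n ≠ 0 := fun n => hfinS.mem_toFinset
  -- H is a.e. equal to a trigonometric polynomial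
  set Plp : Lp ℂ 2 (@haarAddCircle (2*a) hT) :=
    ∑ n ∈ Sf, (fourierCoeff H n) • fourierLp 2 n with hPlpdef
  have hreprP : ∀ m : ℤ, fourierBasis.repr Plp m = fourierCoeff H m := by
    intro m
    rw [hPlpdef, map_sum]
    have hterm : ∀ n ∈ Sf, (fourierBasis.repr ((fourierCoeff H n) •
          (fourierLp 2 n : Lp ℂ 2 (@haarAddCircle (2*a) hT)))) m
        = if m = n then fourierCoeff H n else 0 := by
      intro n _
      rw [_root_.map_smul]
      have hfb : (fourierLp 2 n : Lp ℂ 2 (@haarAddCircle (2*a) hT)) = fourierBasis n := by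
        rw [coe_fourierBasis]
      rw [hfb, fourierBasis.repr_self]
      by_cases hmn : m = n
      · subst hmn
        simp [lp.single_apply_self]
      · simp [lp.single_apply_ne 2 n _ hmn, hmn]
    have : ((∑ n ∈ Sf, fourierBasis.repr ((fourierCoeff H n) •
          (fourierLp 2 n : Lp ℂ 2 (@haarAddCircle (2*a) hT)))) :
        lp (fun _ : ℤ => ℂ) 2) m
        = ∑ n ∈ Sf, (fourierBasis.repr ((fourierCoeff H n) •
          (fourierLp 2 n : Lp ℂ 2 (@haarAddCircle (2*a) hT)))) m := by
      rw [lp.coeFn_sum, Finset.sum_apply]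
    rw [this, Finset.sum_congr rfl hterm, Finset.sum_ite_eq Sf m (fun n => fourierCoeff H n)]
    by_cases hm : m ∈ Sf
    · rw [if_pos hm]
    · rw [if_neg hm]
      by_contra hne
      exact hm ((hSf_mem m).2 (Ne.symm hne))
  have hHPlp : Hlp = Plp := by
    apply fourierBasis.repr.injective
    apply lp.ext
    funext m
    rw [hrepr m, hreprP m]
  have hHP : H =ᵐ[@haarAddCircle (2*a) hT]
      (fun x => ∑ n ∈ Sf, fourierCoeff H n * fourier n x) := by
    refine (hHlp_ae.symm.trans ?_)
    rw [hHPlp, hPlpdef]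
    exact coeFn_finset_sum_fourierLp Sf (fun n => fourierCoeff H n)
  -- transfer to the real line
  have hHPvol : H =ᵐ[(volume : Measure (AddCircle (2*a)))]
      (fun x => ∑ n ∈ Sf, fourierCoeff H n * fourier n x) := by
    rw [AddCircle.volume_eq_smul_haarAddCircle]
    exact Measure.ae_smul_measure hHP _
  have hqmp := (AddCircle.measurePreserving_mk (2*a) (-a)).quasiMeasurePreserving
  have hpull : (fun x : ℝ => H ↑x) =ᵐ[volume.restrict (Ioc (-a) (-a+2*a))]
      (fun x : ℝ => ∑ n ∈ Sf, fourierCoeff H n * fourier n (↑x : AddCircle (2*a))) :=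
    hHPvol.comp_tendsto hqmp.tendsto_ae
  have hGP : G =ᵐ[volume.restrict (Ioc (-a) (-a+2*a))]
      (fun x : ℝ => ∑ n ∈ Sf, fourierCoeff H n * fourier n (↑x : AddCircle (2*a))) := by
    filter_upwards [hpull, ae_restrict_mem measurableSet_Ioc] with x h1 h2
    rw [← hHG x h2]
    exact h1
  -- the trigonometric polynomial vanishes a.e. on (ωm, a]
  have hsub : Ioc ωm a ⊆ Ioc (-a) (-a+2*a) := by
    intro x hx
    exact ⟨by linarith [hx.1], by linarith [hx.2]⟩
  have hP0 : ∀ᵐ x : ℝ ∂volume.restrict (Ioc ωm a),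
      (∑ n ∈ Sf, fourierCoeff H n * fourier n (↑x : AddCircle (2*a))) = 0 := by
    have h1 := ae_restrict_of_ae_restrict_of_subset hsub hGP
    filter_upwards [h1, ae_restrict_of_ae hGv, ae_restrict_mem measurableSet_Ioc]
      with x hx1 hx2 hx3
    rw [← hx1]
    refine hx2 fun hmem => ?_
    exact absurd hx3.1 (not_lt.2 hmem.2)
  -- all Fourier coefficients vanish
  have hSempty : ∀ n : ℤ, fourierCoeff H n = 0 := by
    by_contra hne
    push_neg at hne
    obtain ⟨m, hm⟩ := hne
    have hmSf : m ∈ Sf := (hSf_mem m).2 hm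
    have hSfne : Sf.Nonempty := ⟨m, hmSf⟩
    set N : ℤ := Sf.min' hSfne with hNdef
    have hN : ∀ n ∈ Sf, N ≤ n := fun n hn => Finset.min'_le _ _ hn
    set Q : Polynomial ℂ :=
      ∑ n ∈ Sf, Polynomial.C (fourierCoeff H n) * Polynomial.X ^ ((n - N).toNat) with hQdef
    have hQm : Q.coeff ((m - N).toNat) = fourierCoeff H m := by
      rw [hQdef, Polynomial.finset_sum_coeff]
      rw [Finset.sum_eq_single m]
      · rw [Polynomial.coeff_C_mul, Polynomial.coeff_X_pow, if_pos rfl, mul_one]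
      · intro n hn hne'
        rw [Polynomial.coeff_C_mul, Polynomial.coeff_X_pow, if_neg, mul_zero]
        intro heq
        apply hne'
        have h1 := Int.toNat_of_nonneg (sub_nonneg.mpr (hN n hn))
        have h2 := Int.toNat_of_nonneg (sub_nonneg.mpr (hN m hmSf))
        omega
      · intro hmn; exact absurd hmSf hmn
    have hQ0 : Q ≠ 0 := by
      intro h0
      rw [h0, Polynomial.coeff_zero] at hQm
      exact hm hQm.symm
    have heval : ∀ x : ℝ, (∑ n ∈ Sf, fourierCoeff H n * fourier n (↑x : AddCircle (2*a)))
        = Complex.exp (Complex.I * x * ((N:ℝ) * Ts)) *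
          Q.eval (Complex.exp (Complex.I * Ts * x)) := by
      intro x
      rw [hQdef, Polynomial.eval_finset_sum, Finset.mul_sum]
      refine Finset.sum_congr rfl fun n hn => ?_
      rw [Polynomial.eval_mul, Polynomial.eval_C, Polynomial.eval_pow, Polynomial.eval_X]
      rw [hfour n x, ← Complex.exp_nat_mul]
      have hcast : (((n - N).toNat : ℂ)) = (n:ℂ) - (N:ℂ) := by
        have h1 := Int.toNat_of_nonneg (sub_nonneg.mpr (hN n hn))
        have h2 := congrArg (fun z : ℤ => (z : ℂ)) h1
        push_cast at h2
        exact h2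
      have hkey : Complex.exp (Complex.I * ↑x * (((N:ℤ):ℝ) * Ts)) *
          Complex.exp (((n - N).toNat : ℂ) * (Complex.I * Ts * x))
          = Complex.exp (Complex.I * ↑x * (((n:ℤ):ℝ) * Ts)) := by
        rw [← Complex.exp_add]
        congr 1
        rw [hcast]
        push_cast
        ring
      rw [← hkey]
      ring
    -- hence Q vanishes at exp(I Ts x) for a.e. x in (ωm, a]
    have hQeval0 : ∀ᵐ x : ℝ ∂volume.restrict (Ioc ωm a),
        Q.eval (Complex.exp (Complex.I * Ts * x)) = 0 := by
      filter_upwards [hP0] with x hx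
      rw [heval x] at hx
      rcases mul_eq_zero.mp hx with h | h
      · exact absurd h (Complex.exp_ne_zero _)
      · exact h
    -- but the zero set of Q along exp is finite
    set Z : Set ℝ := {x : ℝ | Q.eval (Complex.exp (Complex.I * Ts * x)) = 0} with hZdef
    have hZfin : (Ioc ωm a ∩ Z).Finite := by
      have hroots : {z : ℂ | Q.IsRoot z}.Finite := Q.finite_setOf_isRoot hQ0
      have hinj : Set.InjOn (fun x : ℝ => Complex.exp (Complex.I * Ts * x)) (Ioc ωm a ∩ Z) := by
        intro x hx y hy hxy
        obtain ⟨k, hk⟩ := Complex.exp_eq_exp_iff_exists_int.mp hxy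
        have h1 : (Complex.I) * ((Ts*x : ℝ):ℂ) =
            Complex.I * (((Ts*y + k*(2*Real.pi)) : ℝ):ℂ) := by
          push_cast
          linear_combination hk
        have h2 : (Ts*x : ℝ) = Ts*y + k*(2*Real.pi) := by
          exact_mod_cast mul_left_cancel₀ Complex.I_ne_zero h1
        have hxI := hx.1
        have hyI := hy.1
        have hTa : Ts * a = Real.pi := by
          rw [ha]
          field_simp
        have hk0 : k = 0 := by
          by_contra hkne
          have hk1 : (1:ℝ) ≤ |(k:ℝ)| := by
            have := Int.one_le_abs hkne
            calc (1:ℝ) = ((1:ℤ):ℝ) := by norm_num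
            _ ≤ ((|k|:ℤ):ℝ) := by exact_mod_cast this
            _ = |(k:ℝ)| := by push_cast; ring
          have hωmpos : 0 < Ts * ωm := by positivity
          have hb1 : Ts * x ≤ Ts * a := mul_le_mul_of_nonneg_left hxI.2 hTs.le
          have hb2 : Ts * ωm < Ts * y := (mul_lt_mul_iff_right₀ hTs).2 hyI.1
          have hb3 : Ts * y ≤ Ts * a := mul_le_mul_of_nonneg_left hyI.2 hTs.le
          have hb4 : Ts * ωm < Ts * x := (mul_lt_mul_iff_right₀ hTs).2 hxI.1
          have h3 : |Ts*x - Ts*y| < Real.pi := by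
            rw [abs_sub_lt_iff]
            constructor <;> linarith [hTa]
          have h5 : |Ts*x - Ts*y| = |(k:ℝ)| * (2*Real.pi) := by
            rw [show Ts*x - Ts*y = (k:ℝ)*(2*Real.pi) by linarith, abs_mul,
              abs_of_pos (by linarith : (0:ℝ) < 2*Real.pi)]
          nlinarith
        rw [hk0] at h2
        push_cast at h2
        have : Ts * x = Ts * y := by linarith
        exact mul_left_cancel₀ hTs.ne' this
      refine Set.Finite.of_finite_image ?_ hinj
      refine hroots.subset ?_
      rintro z ⟨x, hx, rfl⟩
      exact hx.2
    -- measure contradiction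
    have hZmeas : MeasurableSet Z := by
      have hcont : Continuous fun x : ℝ => Q.eval (Complex.exp (Complex.I * Ts * x)) :=
        (Polynomial.continuous Q).comp
          (Complex.continuous_exp.comp (continuous_const.mul Complex.continuous_ofReal))
      exact hcont.measurable (measurableSet_singleton 0)
    have hbad : volume.restrict (Ioc ωm a) ((Ioc ωm a ∩ Z)ᶜ) = 0 := by
      have hmem : ∀ᵐ x : ℝ ∂volume.restrict (Ioc ωm a), x ∈ Ioc ωm a ∩ Z := by
        filter_upwards [hQeval0, ae_restrict_mem measurableSet_Ioc] with x h1' h2'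
        exact ⟨h2', h1'⟩
      exact ae_iff.mp hmem
    have hgood : volume.restrict (Ioc ωm a) (Ioc ωm a ∩ Z) = 0 := by
      rw [Measure.restrict_apply (measurableSet_Ioc.inter hZmeas)]
      exact measure_mono_null Set.inter_subset_left (hZfin.measure_zero volume)
    have htot : volume.restrict (Ioc ωm a) univ ≤ 0 := by
      calc volume.restrict (Ioc ωm a) univ
          ≤ volume.restrict (Ioc ωm a) (Ioc ωm a ∩ Z) +
            volume.restrict (Ioc ωm a) ((Ioc ωm a ∩ Z)ᶜ) := by
            rw [← Set.union_compl_self (Ioc ωm a ∩ Z)]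
            exact measure_union_le _ _
      _ = 0 := by rw [hbad, hgood, add_zero]
    rw [Measure.restrict_apply_univ, Real.volume_Ioc] at htot
    have hpos : ¬ (ENNReal.ofReal (a - ωm) ≤ 0) := by
      simp only [nonpos_iff_eq_zero, ENNReal.ofReal_eq_zero, not_le]
      linarith
    exact hpos htot
  -- conclude : G vanishes a.e.
  have hGzero : G =ᵐ[volume.restrict (Ioc (-a) (-a+2*a))] 0 := by
    have hSfempty : Sf = ∅ := by
      rw [Finset.eq_empty_iff_forall_notMem]
      intro n hn
      exact (hSf_mem n).1 hn (hSempty n)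
    filter_upwards [hGP] with x hx
    rw [hx, hSfempty, Finset.sum_empty]
    rfl
  have h1 := ae_imp_of_ae_restrict hGzero
  filter_upwards [h1, hGv] with x hx1 hx2
  by_cases hmem : x ∈ Icc (-ωm) ωm
  · have : x ∈ Ioc (-a) (-a+2*a) := ⟨by linarith [hmem.1], by linarith [hmem.2]⟩
    exact hx1 this
  · exact hx2 hmem

theorem identifiability_iff_above_nyquist_modulo
    (ωm lam Ts : ℝ) (hωm : 0 < ωm) (hlam : 0 < lam) (hTs : 0 < Ts) :
    (∀ f₁ f₂ : ℝ → ℝ, IsBandlimited ωm f₁ → IsBandlimited ωm f₂ →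
      (∀ n : ℤ, modOp lam (f₁ (n * Ts)) = modOp lam (f₂ (n * Ts))) → f₁ = f₂)
    ↔ Ts < Real.pi / ωm := by
  have hπ : (0:ℝ) < Real.pi := Real.pi_pos
  constructor
  · -- identifiability implies sampling above the Nyquist rate
    intro hid
    by_contra hge
    push_neg at hge
    have ha_le : Real.pi / Ts ≤ ωm := by
      rw [div_le_iff₀ hTs]
      have := (div_le_iff₀ hωm).mp hge
      linarith [mul_comm Ts ωm]
    set f₁ : ℝ → ℝ := fun _ => 0 with hf₁
    set f₂ : ℝ → ℝ := fun t => 2 * lam * sinc (t / Ts) with hf₂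
    have hb₁ : IsBandlimited ωm f₁ := by
      refine ⟨fun _ => 0, ?_, ae_of_all _ fun ω _ => rfl, fun t => by simp [hf₁]⟩
      simpa using MeasureTheory.zero_memLp (p := 2) (μ := (volume : Measure ℝ))
    have hb₂ : IsBandlimited ωm f₂ := by
      refine ⟨Set.indicator (Icc (-(Real.pi/Ts)) (Real.pi/Ts)) (fun _ => ((2*lam*Ts : ℝ) : ℂ)),
        ?_, ?_, ?_⟩
      · exact memLp_indicator_const 2 measurableSet_Icc _ (Or.inr measure_Icc_lt_top.ne)
      · refine ae_of_all _ fun ω hω => ?_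
        refine Set.indicator_of_notMem (fun hmem => hω ⟨by linarith [hmem.1], by
          linarith [hmem.2]⟩) _
      · exact fun t => sinc_rep lam Ts hlam hTs t
    have hsamp : ∀ n : ℤ, modOp lam (f₁ (n * Ts)) = modOp lam (f₂ (n * Ts)) := by
      intro n
      have h0 : modOp lam 0 = 0 := by
        have := modOp_two_mul_int lam hlam 0
        simpa using this
      have h1 : modOp lam (f₁ (n * Ts)) = 0 := by rw [hf₁]; exact h0
      have h2 : modOp lam (f₂ (n * Ts)) = 0 := by
        rw [hf₂]
        dsimp only
        rw [show ((n:ℝ) * Ts) / Ts = (n:ℝ) from by field_simp]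
        by_cases hn : n = 0
        · subst hn
          rw [Int.cast_zero, show sinc 0 = 1 from if_pos rfl, mul_one]
          have := modOp_two_mul_int lam hlam 1
          simpa using this
        · have hs : sinc (n:ℝ) = 0 := by
            rw [sinc, if_neg (Int.cast_ne_zero.mpr hn), mul_comm Real.pi ((n:ℝ)),
              Real.sin_int_mul_pi n, zero_div]
          rw [hs, mul_zero, h0]
      rw [h1, h2]
    have := hid f₁ f₂ hb₁ hb₂ hsamp
    have h0 := congrFun this 0
    rw [hf₁, hf₂] at h0
    dsimp only at h0
    rw [zero_div, show sinc 0 = 1 from if_pos rfl, mul_one] at h0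
    linarith
  · -- above Nyquist rate implies identifiability
    intro hlt f₁ f₂ hb₁ hb₂ hsamp
    obtain ⟨F₁, h₁2, h₁v, h₁r⟩ := hb₁
    obtain ⟨F₂, h₂2, h₂v, h₂r⟩ := hb₂
    have hωa : ωm < Real.pi / Ts := by
      rw [lt_div_iff₀ hTs]
      rw [lt_div_iff₀ hωm] at hlt
      linarith [mul_comm Ts ωm]
    set M₁ : ℝ → ℂ := h₁2.aestronglyMeasurable.mk F₁ with hM₁
    set M₂ : ℝ → ℂ := h₂2.aestronglyMeasurable.mk F₂ with hM₂
    have hae₁ : F₁ =ᵐ[volume] M₁ := h₁2.aestronglyMeasurable.ae_eq_mk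
    have hae₂ : F₂ =ᵐ[volume] M₂ := h₂2.aestronglyMeasurable.ae_eq_mk
    set G : ℝ → ℂ := fun ω => M₁ ω - M₂ ω with hG
    have hGm : Measurable G :=
      (h₁2.aestronglyMeasurable.stronglyMeasurable_mk.sub
        h₂2.aestronglyMeasurable.stronglyMeasurable_mk).measurable
    have hG2 : MeasureTheory.MemLp G 2 volume := (h₁2.ae_eq hae₁).sub (h₂2.ae_eq hae₂)
    have hGv : ∀ᵐ ω : ℝ, ω ∉ Icc (-ωm) ωm → G ω = 0 := by
      filter_upwards [h₁v, h₂v, hae₁, hae₂] with ω hv1 hv2 he1 he2 hnot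
      rw [hG]
      dsimp only
      rw [← he1, ← he2, hv1 hnot, hv2 hnot, sub_zero]
    have hint₁ := integrable_mul_exp h₁2 h₁v
    have hint₂ := integrable_mul_exp h₂2 h₂v
    have key : ∀ t : ℝ, ((f₁ t - f₂ t : ℝ) : ℂ)
        = (1/(2*Real.pi)) * ∫ ω : ℝ, G ω * Complex.exp (Complex.I * ω * t) := by
      intro t
      rw [Complex.ofReal_sub, h₁r t, h₂r t, ← mul_sub]
      congr 1
      rw [← integral_sub (hint₁ t) (hint₂ t)]
      refine integral_congr_ae ?_
      filter_upwards [hae₁, hae₂] with ω hω1 hω2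
      rw [hω1, hω2]
      ring
    have h2π : ((2*Real.pi : ℝ) : ℂ) ≠ 0 := by
      exact_mod_cast (by positivity : (0:ℝ) < 2*Real.pi).ne'
    have hg : ∀ n : ℤ, (∫ ω : ℝ, G ω * Complex.exp (Complex.I * ω * ((n:ℝ) * Ts)))
        = 2 * Real.pi * ((f₁ ((n:ℝ) * Ts) - f₂ ((n:ℝ) * Ts) : ℝ) : ℂ) := by
      intro n
      have hk := key ((n:ℝ) * Ts)
      rw [hk]
      have h2π' : (2:ℂ) * (Real.pi:ℝ) ≠ 0 := by push_cast at h2π; exact h2π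
      push_cast
      rw [← mul_assoc, mul_one_div, div_self h2π', one_mul]
    have hmult : ∀ n : ℤ, ∃ k : ℤ, f₁ ((n:ℝ) * Ts) - f₂ ((n:ℝ) * Ts) = 2 * lam * k :=
      fun n => modOp_sub_mem hlam (hsamp n)
    have hG0 := ae_zero_of_samples_multiple ωm Ts lam hωm hTs hlam hωa hGm hG2 hGv
      (fun n => f₁ ((n:ℝ) * Ts) - f₂ ((n:ℝ) * Ts)) hg hmult
    funext t
    have hzero : (∫ ω : ℝ, G ω * Complex.exp (Complex.I * ω * t)) = 0 := by
      have : (fun ω : ℝ => G ω * Complex.exp (Complex.I * ω * t)) =ᵐ[volume]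
          (fun _ => (0:ℂ)) := by
        filter_upwards [hG0] with ω hω
        rw [hω, zero_mul]
      rw [integral_congr_ae this, integral_zero]
    have hkt := key t
    rw [hzero, mul_zero] at hkt
    have : f₁ t - f₂ t = 0 := by exact_mod_cast hkt
    linarith
end

section
/- Let ω_m > 0, let 0 < T_s < π/ω_m, let h be ω_m-bandlimited with finite energy, and suppose there is N ∈ ℕ with h(n T_s) = 0 for all integers |n| > N. Then for every real ω with ω_m < |ω| < π/T_s, the finite sum Σ_{n=-N}^{N} h(n T_s) e^{-i n T_s ω} equals 0. -/
open MeasureTheory Set Complex Filter AddCircle ContinuousMap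
open scoped Real

namespace DTFTAux

variable {T : ℝ} [hT : Fact (0 < T)]

lemma fourierCoeff_congr_ae {f g : AddCircle T → ℂ} (h : f =ᵐ[haarAddCircle] g) (n : ℤ) :
    fourierCoeff f n = fourierCoeff g n := by
  unfold fourierCoeff
  refine integral_congr_ae ?_
  filter_upwards [h] with t ht
  rw [ht]

lemma integral_fourier_mul (j k : ℤ) :
    (∫ z : AddCircle T, fourier j z * fourier k z ∂haarAddCircle) =
      if j + k = 0 then 1 else 0 := by
  have hfa : ∀ z : AddCircle T, fourier j z * fourier k z = fourier (j + k) z := fun z =>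
    fourier_add.symm
  simp_rw [hfa]
  by_cases hjk : j + k = 0
  · rw [if_pos hjk, hjk]
    have : ⇑(@fourier T 0) = (fun _ => 1 : AddCircle T → ℂ) := by ext1; exact fourier_zero
    rw [this, integral_const]
    simp
  · rw [if_neg hjk]
    exact integral_eq_zero_of_add_right_eq_neg (μ := haarAddCircle)
      (fourier_add_half_inv_index hjk hT.elim)

end DTFTAux

set_option maxHeartbeats 1000000 in
theorem dtft_vanishes_out_of_band_finite_support
    (ωm Ts : ℝ) (hωm : 0 < ωm) (hTs : 0 < Ts) (hNyq : Ts < Real.pi / ωm)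
    (h : ℝ → ℝ) (hbl : IsBandlimited ωm h)
    (N : ℕ) (hsupp : ∀ n : ℤ, (N : ℤ) < |n| → h (n * Ts) = 0) :
    ∀ ω : ℝ, ωm < |ω| → |ω| < Real.pi / Ts →
      ∑ n ∈ Finset.Icc (-(N : ℤ)) (N : ℤ),
        (h (n * Ts) : ℂ) * Complex.exp (-Complex.I * (n : ℂ) * (Ts : ℂ) * (ω : ℂ)) = 0 := by
  intro ω hω1 hω2
  obtain ⟨F₀, hF₀2, hF₀supp, hF₀rep⟩ := hbl
  have hπ : (0:ℝ) < Real.pi := Real.pi_pos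
  have hπ' : (Real.pi : ℂ) ≠ 0 := by exact_mod_cast hπ.ne'
  have hTs' : (Ts : ℂ) ≠ 0 := by exact_mod_cast hTs.ne'
  -- replace F₀ by a strongly measurable representative
  set F : ℝ → ℂ := hF₀2.1.mk F₀ with hFdef
  have hFsm : StronglyMeasurable F := hF₀2.1.stronglyMeasurable_mk
  have hFae : F₀ =ᵐ[volume] F := hF₀2.1.ae_eq_mk
  have hF2 : MemLp F 2 volume := hF₀2.ae_eq hFae
  have hFsupp : ∀ᵐ x : ℝ ∂volume, x ∉ Set.Icc (-ωm) ωm → F x = 0 := by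
    filter_upwards [hF₀supp, hFae] with x h1 h2 hx
    rw [← h2]; exact h1 hx
  have hFint : ∀ t : ℝ,
      (∫ x : ℝ, F x * Complex.exp (Complex.I * x * t)) = 2 * (Real.pi : ℂ) * (h t : ℂ) := by
    intro t
    have h1 : (∫ x : ℝ, F₀ x * Complex.exp (Complex.I * x * t))
        = ∫ x : ℝ, F x * Complex.exp (Complex.I * x * t) := by
      refine integral_congr_ae ?_
      filter_upwards [hFae] with x hx
      rw [hx]
    have h2 := hF₀rep t
    rw [h1] at h2
    rw [h2]
    field_simp
    congr 1
    funext x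
    ring
  -- the circle
  set T : ℝ := 2 * Real.pi / Ts with hTdef
  have hT0 : 0 < T := by positivity
  haveI : Fact (0 < T) := ⟨hT0⟩
  set a : ℝ := -(Real.pi / Ts) with hadef
  have haT : a + T = Real.pi / Ts := by rw [hadef, hTdef]; ring
  have hband : ωm < Real.pi / Ts := by
    rw [lt_div_iff₀ hTs]
    have := (lt_div_iff₀ hωm).mp hNyq
    nlinarith
  have hIccIoc : Set.Icc (-ωm) ωm ⊆ Set.Ioc a (a + T) := by
    intro x hx
    rw [Set.mem_Ioc, haT, hadef]
    obtain ⟨hx1, hx2⟩ := hx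
    constructor <;> nlinarith
  have hfour : ∀ (n : ℤ) (x : ℝ),
      (fourier (-n) (x : AddCircle T) : ℂ) = Complex.exp (-(Complex.I * n * Ts * x)) := by
    intro n x
    rw [fourier_coe_apply]
    congr 1
    rw [hTdef]
    push_cast
    field_simp
  -- the trigonometric polynomial
  set c : ℤ → ℂ := fun n => ((h (n * Ts) : ℝ) : ℂ) with hcdef
  set Pc : C(AddCircle T, ℂ) := ∑ n ∈ Finset.Icc (-(N:ℤ)) (N:ℤ), c n • fourier (-n) with hPcdef
  have hPcapp : ∀ z : AddCircle T,
      Pc z = ∑ n ∈ Finset.Icc (-(N:ℤ)) (N:ℤ), c n * fourier (-n) z := by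
    intro z
    rw [hPcdef]
    simp
  have hc_out : ∀ m : ℤ, m ∉ Finset.Icc (-(N:ℤ)) (N:ℤ) → c m = 0 := by
    intro m hm
    have habs : (N:ℤ) < |m| := by
      rw [Finset.mem_Icc, not_and_or, not_le, not_le] at hm
      rcases abs_cases (m : ℤ) with ⟨he, _⟩ | ⟨he, _⟩ <;> rw [he] <;> omega
    simp [hcdef, hsupp m habs]
  have hPc_coeff : ∀ m : ℤ, fourierCoeff (⇑Pc) m = c (-m) := by
    intro m
    have hcoe : ⇑Pc = fun z => ∑ n ∈ Finset.Icc (-(N:ℤ)) (N:ℤ), c n * fourier (-n) z := by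
      funext z; exact hPcapp z
    rw [hcoe]
    unfold fourierCoeff
    have hint : ∀ n ∈ Finset.Icc (-(N:ℤ)) (N:ℤ),
        Integrable (fun z : AddCircle T => fourier (-m) z • (c n * fourier (-n) z))
          haarAddCircle := by
      intro n _
      apply Continuous.integrable_of_hasCompactSupport
      · exact (map_continuous (fourier (-m))).smul
          (continuous_const.mul (map_continuous (fourier (-n))))
      · exact HasCompactSupport.of_compactSpace _
    calc (∫ z : AddCircle T, fourier (-m) z •
            (∑ n ∈ Finset.Icc (-(N:ℤ)) (N:ℤ), c n * fourier (-n) z) ∂haarAddCircle)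
        = ∫ z : AddCircle T, (∑ n ∈ Finset.Icc (-(N:ℤ)) (N:ℤ),
            fourier (-m) z • (c n * fourier (-n) z)) ∂haarAddCircle := by
          congr 1
          funext z
          rw [Finset.smul_sum]
      _ = ∑ n ∈ Finset.Icc (-(N:ℤ)) (N:ℤ),
            ∫ z : AddCircle T, fourier (-m) z • (c n * fourier (-n) z) ∂haarAddCircle :=
          integral_finset_sum _ hint
      _ = ∑ n ∈ Finset.Icc (-(N:ℤ)) (N:ℤ), c n * (if n = -m then 1 else 0) := by
          refine Finset.sum_congr rfl fun n _ => ?_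
          have : (fun z : AddCircle T => fourier (-m) z • (c n * fourier (-n) z))
              = fun z : AddCircle T => c n * (fourier (-m) z * fourier (-n) z) := by
            funext z
            rw [smul_eq_mul]
            ring
          rw [this, integral_const_mul, DTFTAux.integral_fourier_mul]
          congr 1
          have : (-m + -n = 0) ↔ (n = -m) := by omega
          simp [this]
      _ = c (-m) := by
          have hterm : ∀ n ∈ Finset.Icc (-(N:ℤ)) (N:ℤ),
              c n * (if n = -m then 1 else 0) = if n = -m then c n else 0 := by
            intro n _
            rw [mul_ite, mul_one, mul_zero]
          rw [Finset.sum_congr rfl hterm,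
            Finset.sum_ite_eq' (Finset.Icc (-(N:ℤ)) (N:ℤ)) (-m) c]
          split_ifs with hmem
          · rfl
          · exact (hc_out (-m) hmem).symm
  -- the lift of (1/Ts) F to the circle
  set G : AddCircle T → ℂ := AddCircle.liftIoc T a (fun x => (Ts:ℂ)⁻¹ * F x) with hGdef
  have hGsm : StronglyMeasurable G := by
    have hm : Measurable (fun z : AddCircle T => ((AddCircle.equivIoc T a z : ℝ))) :=
      measurable_subtype_coe.comp (AddCircle.measurableEquivIoc T a).measurable
    have : G = fun z => (Ts:ℂ)⁻¹ * F ((AddCircle.equivIoc T a z : ℝ)) := rfl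
    rw [this]
    exact stronglyMeasurable_const.mul (hFsm.comp_measurable hm)
  have hGcomp : (fun x : ℝ => G (x : AddCircle T))
      =ᵐ[volume.restrict (Set.Ioc a (a+T))] (fun x => (Ts:ℂ)⁻¹ * F x) := by
    filter_upwards [self_mem_ae_restrict measurableSet_Ioc] with x hx
    exact AddCircle.liftIoc_coe_apply hx
  have hGmem : MemLp G 2 haarAddCircle := by
    have hvol : MemLp G 2 (volume : Measure (AddCircle T)) := by
      refine ⟨hGsm.aestronglyMeasurable, ?_⟩
      calc eLpNorm G 2 (volume : Measure (AddCircle T))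
          = eLpNorm (G ∘ (fun x : ℝ => (x : AddCircle T))) 2
              (volume.restrict (Set.Ioc a (a+T))) :=
            (eLpNorm_comp_measurePreserving hGsm.aestronglyMeasurable
              (AddCircle.measurePreserving_mk T a)).symm
        _ = eLpNorm (fun x : ℝ => (Ts:ℂ)⁻¹ * F x) 2 (volume.restrict (Set.Ioc a (a+T))) :=
            eLpNorm_congr_ae hGcomp
        _ < ⊤ := ((hF2.const_mul _).restrict _).2
    have hhaar : (haarAddCircle : Measure (AddCircle T))
        = (ENNReal.ofReal T)⁻¹ • (volume : Measure (AddCircle T)) := by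
      rw [AddCircle.volume_eq_smul_haarAddCircle, smul_smul,
        ENNReal.inv_mul_cancel (by simp [hT0, hT0.ne']) ENNReal.ofReal_ne_top, one_smul]
    rw [hhaar]
    exact hvol.smul_measure (by simp [hT0])
  have hG_coeff : ∀ m : ℤ, fourierCoeff G m = c (-m) := by
    intro m
    rw [hGdef, fourierCoeff_eq_intervalIntegral _ m a]
    rw [intervalIntegral.integral_of_le (by linarith : a ≤ a + T)]
    have heq : ∀ x ∈ Set.Ioc a (a + T),
        (fourier (-m) (x : AddCircle T)) •
          (AddCircle.liftIoc T a (fun y => (Ts:ℂ)⁻¹ * F y) (x : AddCircle T))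
          = Complex.exp (Complex.I * x * ((((-m : ℤ) : ℝ) * Ts : ℝ) : ℂ)) * ((Ts:ℂ)⁻¹ * F x) := by
      intro x hx
      rw [smul_eq_mul, AddCircle.liftIoc_coe_apply hx, hfour]
      congr 2
      push_cast
      ring
    rw [setIntegral_congr_fun measurableSet_Ioc heq]
    rw [setIntegral_eq_integral_of_ae_compl_eq_zero ?hvanish]
    case hvanish =>
      filter_upwards [hFsupp] with x hFx hx
      rw [hFx (fun hIcc => hx (hIccIoc hIcc)), mul_zero, mul_zero]
    have hre : (fun x : ℝ => Complex.exp (Complex.I * x * ((((-m : ℤ) : ℝ) * Ts : ℝ) : ℂ))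
          * ((Ts:ℂ)⁻¹ * F x))
        = fun x : ℝ => (Ts:ℂ)⁻¹ *
            (F x * Complex.exp (Complex.I * x * ((((-m : ℤ) : ℝ) * Ts : ℝ) : ℂ))) := by
      funext x
      ring
    rw [hre, integral_const_mul, hFint (((-m : ℤ) : ℝ) * Ts)]
    rw [Complex.real_smul, hcdef]
    push_cast
    rw [hTdef]
    have : ((2 * Real.pi / Ts : ℝ) : ℂ) = 2 * (Real.pi : ℂ) / (Ts : ℂ) := by push_cast; ring
    field_simp
    push_cast
    field_simp
  -- identify in L²
  set u : Lp ℂ 2 (@haarAddCircle T _) := ContinuousMap.toLp (E := ℂ) 2 haarAddCircle ℂ Pc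
    with hudef
  have hu_ae : ⇑u =ᵐ[haarAddCircle] ⇑Pc := ContinuousMap.coeFn_toLp haarAddCircle Pc
  set v : Lp ℂ 2 (@haarAddCircle T _) := hGmem.toLp G with hvdef
  have hv_ae : ⇑v =ᵐ[haarAddCircle] G := hGmem.coeFn_toLp
  have huv : u = v := by
    apply (fourierBasis (T := T)).repr.injective
    ext m
    rw [fourierBasis_repr, fourierBasis_repr,
      DTFTAux.fourierCoeff_congr_ae hu_ae, DTFTAux.fourierCoeff_congr_ae hv_ae,
      hPc_coeff, hG_coeff]
  have hPG : ⇑Pc =ᵐ[haarAddCircle] G := by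
    refine hu_ae.symm.trans ?_
    rw [huv]
    exact hv_ae
  -- pull back to ℝ
  have hacv : (volume : Measure (AddCircle T)) ≪ haarAddCircle := by
    rw [AddCircle.volume_eq_smul_haarAddCircle]
    exact Measure.absolutelyContinuous_of_le_smul le_rfl
  have hPGvol : ⇑Pc =ᵐ[(volume : Measure (AddCircle T))] G := hPG.filter_mono hacv.ae_le
  have hreal : (⇑Pc) ∘ (((↑) : ℝ → AddCircle T))
      =ᵐ[volume.restrict (Set.Ioc a (a+T))] (G ∘ (((↑) : ℝ → AddCircle T))) :=
    (AddCircle.measurePreserving_mk T a).quasiMeasurePreserving.ae_eq_comp hPGvol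
  have hg0 : ∀ᵐ x ∂(volume.restrict (Set.Ioc a (a+T))),
      x ∉ Set.Icc (-ωm) ωm → Pc (x : AddCircle T) = 0 := by
    filter_upwards [hreal, ae_restrict_of_ae hFsupp,
      self_mem_ae_restrict measurableSet_Ioc] with x h1 h2 h3 hx
    simp only [Function.comp_apply] at h1
    rw [h1, hGdef, AddCircle.liftIoc_coe_apply h3, h2 hx, mul_zero]
  -- the out-of-band open set
  set g : ℝ → ℂ := fun x : ℝ => Pc ((x : ℝ) : AddCircle T) with hgdef
  have hcont : Continuous g := (map_continuous Pc).comp (AddCircle.continuous_mk' T)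
  set J : Set ℝ := (fun x : ℝ => |x|) ⁻¹' Set.Ioo ωm (Real.pi / Ts) with hJdef
  have hJopen : IsOpen J := isOpen_Ioo.preimage (_root_.continuous_abs)
  have hJsub : J ⊆ Set.Ioc a (a + T) := by
    intro x hx
    obtain ⟨h1, h2⟩ := hx
    have := abs_lt.mp h2
    rw [Set.mem_Ioc, haT, hadef]
    constructor
    · linarith [this.1]
    · linarith [this.2]
  have hJdisj : ∀ x ∈ J, x ∉ Set.Icc (-ωm) ωm := by
    intro x hx hIcc
    have : |x| ≤ ωm := abs_le.mpr ⟨hIcc.1, hIcc.2⟩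
    exact absurd hx.1 (not_lt.mpr this)
  have hgJ : ∀ᵐ x ∂(volume.restrict J), g x = 0 := by
    filter_upwards [ae_restrict_of_ae_restrict_of_subset hJsub hg0,
      self_mem_ae_restrict hJopen.measurableSet] with x h1 h2
    exact h1 (hJdisj x h2)
  have hωJ : ω ∈ J := ⟨hω1, hω2⟩
  have hPcω : g ω = 0 := by
    by_contra hne
    set U : Set ℝ := g ⁻¹' {0}ᶜ with hU
    have hUopen : IsOpen U := isOpen_compl_singleton.preimage hcont
    have hopen : IsOpen (U ∩ J) := hUopen.inter hJopen
    have hne' : (U ∩ J).Nonempty := ⟨ω, hne, hωJ⟩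
    have hpos : 0 < volume (U ∩ J) := hopen.measure_pos volume hne'
    have hz : (volume.restrict J) {x : ℝ | ¬ g x = 0} = 0 := ae_iff.mp hgJ
    have hle : volume (U ∩ J) ≤ (volume.restrict J) {x : ℝ | ¬ g x = 0} := by
      rw [Measure.restrict_apply' hJopen.measurableSet]
      exact measure_mono fun x hx => ⟨hx.1, hx.2⟩
    exact absurd (hle.trans_eq hz) hpos.not_ge
  -- done
  have hfinal : ∑ n ∈ Finset.Icc (-(N : ℤ)) (N : ℤ),
      (h (n * Ts) : ℂ) * Complex.exp (-Complex.I * (n : ℂ) * (Ts : ℂ) * (ω : ℂ))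
      = g ω := by
    rw [hgdef]
    simp only []
    rw [hPcapp]
    refine Finset.sum_congr rfl fun n _ => ?_
    rw [hfour n ω]
    simp only [hcdef]
    congr 1
    congr 1
    ring
  rw [hfinal, hPcω]
end

section
/- Let ω_m > 0 and 0 < T_s < π/ω_m. If h is ω_m-bandlimited with finite energy and there exists N ∈ ℕ such that h(n T_s) = 0 for every integer n with |n| > N, then h is identically zero on ℝ. -/
open MeasureTheory Complex Filter Set
open scoped Real Topology

lemma exists_frequently_of_pos_measure {S : Set ℝ} (hS : MeasureTheory.volume S ≠ 0) :
    ∃ x : ℝ, ∃ᶠ z in 𝓝[≠] x, z ∈ S := by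
  by_contra hc
  push_neg at hc
  have hc' : ∀ x : ℝ, ∀ᶠ z in 𝓝[≠] x, z ∉ S := fun x => (hc x)
  have key : ∀ x ∈ S, {z : ℝ | z ≠ x → z ∉ S} ∈ 𝓝[S] x := by
    intro x _
    refine mem_nhdsWithin_of_mem_nhds ?_
    have := hc' x
    rw [eventually_nhdsWithin_iff] at this
    exact this
  obtain ⟨t, hts, htc, hcov⟩ := TopologicalSpace.countable_cover_nhdsWithin key
  have hsub : S ⊆ t := by
    intro y hy
    obtain ⟨x, hxt, hyx⟩ := by simpa using hcov hy
    by_cases hxy : y = x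
    · rwa [hxy]
    · exact absurd hy (hyx hxy)
  exact hS ((htc.mono hsub).measure_zero _)

lemma analyticOnNhd_trigPoly (s : Finset ℤ) (c k : ℤ → ℂ) :
    AnalyticOnNhd ℝ (fun x : ℝ => ∑ n ∈ s, c n * Complex.exp (k n * x)) Set.univ := by
  intro x _
  apply Finset.analyticAt_fun_sum
  intro n _
  have h1 : AnalyticAt ℝ (fun x : ℝ => ((k n) * x : ℂ)) x := by
    have := (k n • Complex.ofRealCLM).analyticAt (𝕜 := ℝ) x
    convert this using 1
    funext y
    simp [ContinuousLinearMap.smul_apply, smul_eq_mul]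
  have h2 : AnalyticAt ℝ Complex.exp ((k n) * x) :=
    (analyticAt_cexp).restrictScalars
  have h3 : AnalyticAt ℝ (fun x : ℝ => Complex.exp (k n * x)) x :=
    AnalyticAt.comp (g := Complex.exp) (f := fun x : ℝ => ((k n) * x : ℂ)) h2 h1
  exact analyticAt_const.mul h3

lemma Lp_coeFn_finset_sum {α : Type*} [MeasurableSpace α] {μ : MeasureTheory.Measure α}
    {ι : Type*} (s : Finset ι) (f : ι → MeasureTheory.Lp ℂ 2 μ) :
    ⇑(∑ i ∈ s, f i) =ᵐ[μ] fun x => ∑ i ∈ s, f i x := by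
  classical
  induction s using Finset.induction_on with
  | empty =>
    simp only [Finset.sum_empty]
    exact MeasureTheory.Lp.coeFn_zero ℂ 2 μ
  | insert a s' hnotmem ih =>
    have h1 := MeasureTheory.Lp.coeFn_add (f a) (∑ i ∈ s', f i)
    rw [Finset.sum_insert hnotmem]
    filter_upwards [h1, ih] with x hx hx2
    rw [Finset.sum_insert hnotmem, ← hx2]
    simpa using hx




theorem bandlimited_zero_of_samples_finitely_supported
    (ωm Ts : ℝ) (hωm : 0 < ωm) (hTs : 0 < Ts) (hNyq : Ts < Real.pi / ωm)
    (h : ℝ → ℝ) (hbl : IsBandlimited ωm h)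
    (N : ℕ) (hsupp : ∀ n : ℤ, (N : ℤ) < |n| → h (n * Ts) = 0) :
    ∀ t : ℝ, h t = 0 := by
  classical
  obtain ⟨F, hF2, hFout, hFeq⟩ := hbl
  have hπ := Real.pi_pos
  -- measurable representative of F
  set F' : ℝ → ℂ := hF2.aestronglyMeasurable.mk F with hF'def
  have hF'sm : StronglyMeasurable F' := hF2.aestronglyMeasurable.stronglyMeasurable_mk
  have hFF' : F =ᵐ[volume] F' := hF2.aestronglyMeasurable.ae_eq_mk
  have hF'2 : MemLp F' 2 volume := hF2.ae_eq hFF'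
  set L : ℝ := 2 * Real.pi / Ts with hLdef
  have hL : 0 < L := by positivity
  haveI instL : Fact (0 < L) := ⟨hL⟩
  set a : ℝ := -(L/2) with hadef
  have hab : a + L = L / 2 := by rw [hadef]; ring
  have hωmL : ωm < L / 2 := by
    have h1 : Ts * ωm < Real.pi := (lt_div_iff₀ hωm).mp hNyq
    have h2 : L / 2 = Real.pi / Ts := by rw [hLdef]; ring
    rw [h2, lt_div_iff₀ hTs]
    nlinarith
  have haneg : a < -ωm := by rw [hadef]; linarith
  -- the lift of F' to the circle of circumference L
  set G : AddCircle L → ℂ := AddCircle.liftIoc L a F' with hGdef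
  have hGsm : StronglyMeasurable G := by
    have : G = (fun y : Set.Ioc a (a + L) => F' y) ∘ (AddCircle.measurableEquivIoc L a) := rfl
    rw [this]
    exact (hF'sm.comp_measurable measurable_subtype_coe).comp_measurable
      (AddCircle.measurableEquivIoc L a).measurable
  have hmk : Measurable (QuotientAddGroup.mk : ℝ → AddCircle L) :=
    AddCircle.measurable_mk'
  have hmp := AddCircle.measurePreserving_mk L a
  have hcomp : MemLp (G ∘ (QuotientAddGroup.mk : ℝ → AddCircle L)) 2
      (volume.restrict (Set.Ioc a (a + L))) := by
    apply (hF'2.restrict _).ae_eq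
    filter_upwards [ae_restrict_mem measurableSet_Ioc] with x hx
    exact (AddCircle.liftIoc_coe_apply hx).symm
  have hGvol : MemLp G 2 (volume : Measure (AddCircle L)) := by
    rw [← hmp.map_eq]
    exact (memLp_map_measure_iff hGsm.aestronglyMeasurable hmk.aemeasurable).mpr hcomp
  have hGhaar : MemLp G 2 (AddCircle.haarAddCircle : Measure (AddCircle L)) := by
    have h1 : (AddCircle.haarAddCircle : Measure (AddCircle L)) =
        (ENNReal.ofReal L)⁻¹ • (volume : Measure (AddCircle L)) := by
      rw [AddCircle.volume_eq_smul_haarAddCircle, smul_smul,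
        ENNReal.inv_mul_cancel (ENNReal.ofReal_pos.mpr hL).ne' ENNReal.ofReal_ne_top, one_smul]
    rw [h1]
    exact hGvol.smul_measure (ENNReal.inv_ne_top.mpr (ENNReal.ofReal_pos.mpr hL).ne')
  -- Fourier coefficients
  set c : ℤ → ℂ := fun n => fourierCoeff G n with hcdef
  have hLC : (L : ℂ) = 2 * (Real.pi : ℂ) / (Ts : ℂ) := by
    rw [hLdef]; push_cast; ring
  have hTsC : (Ts : ℂ) ≠ 0 := Complex.ofReal_ne_zero.mpr hTs.ne'
  have hπC : (Real.pi : ℂ) ≠ 0 := Complex.ofReal_ne_zero.mpr Real.pi_ne_zero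
  have hLC0 : (L : ℂ) ≠ 0 := Complex.ofReal_ne_zero.mpr hL.ne'
  have hc : ∀ n : ℤ, c n = (Ts : ℂ) * ((h (((-n : ℤ) : ℝ) * Ts) : ℝ) : ℂ) := by
    intro n
    set t : ℝ := ((-n : ℤ) : ℝ) * Ts with htdef
    have e1 : c n = (1 / L) • ∫ x in a..(a + L),
        fourier (-n) (x : AddCircle L) • G ↑x := by
      show fourierCoeff G n = _
      exact fourierCoeff_eq_intervalIntegral G n a
    have e1' : ∫ x in a..(a + L), fourier (-n) (x : AddCircle L) • G ↑x
        = ∫ x in a..(a + L), fourier (-n) (x : AddCircle L) • F' x := by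
      rw [intervalIntegral.integral_of_le (by linarith : a ≤ a + L),
        intervalIntegral.integral_of_le (by linarith : a ≤ a + L)]
      apply integral_congr_ae
      filter_upwards [ae_restrict_mem measurableSet_Ioc] with x hx
      rw [hGdef, AddCircle.liftIoc_coe_apply hx]
    have e2 : ∫ x in a..(a + L), fourier (-n) (x : AddCircle L) • F' x
        = ∫ x : ℝ, F x * Complex.exp (Complex.I * x * t) := by
      rw [intervalIntegral.integral_of_le (by linarith : a ≤ a + L)]
      rw [setIntegral_eq_integral_of_ae_compl_eq_zero ?hz]
      case hz =>
        filter_upwards [hFout, hFF'] with x hx hx2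
        intro hxn
        have hxn2 : x ∉ Set.Icc (-ωm) ωm := by
          intro hmem
          exact hxn ⟨lt_of_lt_of_le haneg hmem.1, by rw [hab]; linarith [hmem.2]⟩
        rw [← hx2, hx hxn2, smul_zero]
      have harg : ∀ x : ℝ, (2 * (Real.pi : ℂ) * Complex.I * ((-n : ℤ) : ℂ) * (x : ℂ) / (L : ℂ))
          = Complex.I * (x : ℂ) * (t : ℂ) := by
        intro x
        rw [hLC, htdef]
        push_cast
        field_simp
      apply integral_congr_ae
      filter_upwards [hFF'] with x hx
      rw [smul_eq_mul, fourier_coe_apply, ← hx, mul_comm]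
      exact congrArg (fun w => F x * Complex.exp w) (harg x)
    have e3 : ∫ x : ℝ, F x * Complex.exp (Complex.I * x * t)
        = 2 * (Real.pi : ℂ) * ((h t : ℝ) : ℂ) := by
      have h2π : (2 * (Real.pi : ℂ)) ≠ 0 := by simp [hπC]
      rw [hFeq t, ← mul_assoc, mul_one_div, div_self h2π, one_mul]
    rw [e1, e1', e2, e3, Complex.real_smul]
    push_cast
    rw [hLC]
    field_simp
  set s : Finset ℤ := Finset.Icc (-(N : ℤ)) (N : ℤ) with hsdef
  have hcn0 : ∀ n : ℤ, n ∉ s → c n = 0 := by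
    intro n hn
    rw [hc n]
    have habs : (N : ℤ) < |(-n)| := by
      rw [hsdef, Finset.mem_Icc, not_and_or, not_le, not_le] at hn
      rw [abs_neg]
      rcases hn with h1 | h1
      · exact lt_abs.mpr (Or.inr (by omega))
      · exact lt_abs.mpr (Or.inl h1)
    have := hsupp (-n) habs
    rw [this]
    simp
  -- the Lp element and its Fourier expansion
  set g0 : Lp ℂ 2 (AddCircle.haarAddCircle : Measure (AddCircle L)) := hGhaar.toLp G with hg0def
  have hcoeff_eq : ∀ m : ℤ, fourierCoeff (⇑g0) m = c m := by
    intro m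
    rw [hcdef]
    simp only [fourierCoeff]
    apply integral_congr_ae
    filter_upwards [hGhaar.coeFn_toLp] with z hz
    rw [hz]
  have hrepr : ∀ m : ℤ, fourierBasis.repr g0 m = c m := by
    intro m
    rw [fourierBasis_repr]
    exact hcoeff_eq m
  set P : Lp ℂ 2 (AddCircle.haarAddCircle : Measure (AddCircle L)) :=
    ∑ n ∈ s, c n • (fourierBasis (T := L) n) with hPdef
  have hg0P : g0 = P := by
    apply fourierBasis.repr.injective
    ext m
    rw [hrepr m, hPdef, map_sum]
    simp only [LinearIsometryEquiv.map_smul, HilbertBasis.repr_self]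
    rw [lp.coeFn_sum, Finset.sum_apply]
    simp only [lp.coeFn_smul, Pi.smul_apply, lp.single_apply, smul_eq_mul]
    by_cases hm : m ∈ s
    · rw [Finset.sum_eq_single m]
      · simp
      · intro b _ hbm
        simp [Ne.symm hbm]
      · intro hms; exact absurd hm hms
    · rw [hcn0 m hm]
      apply (Finset.sum_eq_zero ?_).symm
      intro b hb
      have : m ≠ b := fun hmb => hm (hmb ▸ hb)
      simp [this]
  have hGP : G =ᵐ[(AddCircle.haarAddCircle : Measure (AddCircle L))]
      fun z => ∑ n ∈ s, c n * fourier n z := by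
    have h1 : ⇑g0 =ᵐ[(AddCircle.haarAddCircle : Measure (AddCircle L))] G := hGhaar.coeFn_toLp
    have h4 : ∀ᵐ z ∂(AddCircle.haarAddCircle : Measure (AddCircle L)),
        ∀ n ∈ s, ((c n • (fourierBasis (T := L) n) : Lp ℂ 2 _) : AddCircle L → ℂ) z
          = c n * fourier n z := by
      rw [show (∀ᵐ z ∂(AddCircle.haarAddCircle : Measure (AddCircle L)),
          ∀ n ∈ s, ((c n • (fourierBasis (T := L) n) : Lp ℂ 2 _) : AddCircle L → ℂ) z
            = c n * fourier n z) ↔ (∀ᵐ z ∂(AddCircle.haarAddCircle : Measure (AddCircle L)),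
          ∀ n ∈ (s : Set ℤ), ((c n • (fourierBasis (T := L) n) : Lp ℂ 2 _) : AddCircle L → ℂ) z
            = c n * fourier n z) from by simp,
        MeasureTheory.ae_ball_iff (s : Set ℤ).to_countable]
      intro n _
      filter_upwards [Lp.coeFn_smul (c n) (fourierBasis (T := L) n : Lp ℂ 2 _),
        coeFn_fourierLp 2 n] with z hz hz2
      rw [hz]
      simp only [Pi.smul_apply, smul_eq_mul]
      congr 1
      rw [← hz2]
      congr 1
      exact congrArg _ (congrFun coe_fourierBasis n)
    have h2 : ⇑P =ᵐ[(AddCircle.haarAddCircle : Measure (AddCircle L))]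
        fun z => ∑ n ∈ s, c n * fourier n z := by
      filter_upwards [Lp_coeFn_finset_sum s
        (fun n => c n • (fourierBasis (T := L) n)), h4] with z hz hz2
      rw [hPdef, hz]
      exact Finset.sum_congr rfl fun n hn => hz2 n hn
    have h5 : G =ᵐ[(AddCircle.haarAddCircle : Measure (AddCircle L))] ⇑P := by
      rw [← hg0P]; exact h1.symm
    exact h5.trans h2
  -- transfer to ℝ
  have hvol : G =ᵐ[(volume : Measure (AddCircle L))] fun z => ∑ n ∈ s, c n * fourier n z := by
    rw [AddCircle.volume_eq_smul_haarAddCircle]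
    exact MeasureTheory.Measure.ae_smul_measure hGP _
  have hpull : (fun x : ℝ => G ↑x) =ᵐ[volume.restrict (Set.Ioc a (a + L))]
      (fun x : ℝ => ∑ n ∈ s, c n * fourier n (x : AddCircle L)) := by
    have hmap := hmp.map_eq
    exact ae_eq_comp hmk.aemeasurable (hmap ▸ hvol)
  set p : ℝ → ℂ :=
    fun x => ∑ n ∈ s, c n * Complex.exp ((2 * (Real.pi : ℂ) * Complex.I * n / L) * x) with hpdef
  have hfp : ∀ x : ℝ, (∑ n ∈ s, c n * fourier n (x : AddCircle L)) = p x := by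
    intro x
    apply Finset.sum_congr rfl
    intro n _
    rw [fourier_coe_apply]
    congr 1
    ring
  have hF'p : F' =ᵐ[volume.restrict (Set.Ioc a (a + L))] p := by
    filter_upwards [hpull, ae_restrict_mem measurableSet_Ioc] with x hx hx2
    have hG : G ↑x = F' x := by rw [hGdef]; exact AddCircle.liftIoc_coe_apply hx2
    rw [← hG, hx]
    exact hfp x
  have hsub2 : Set.Ioc ωm (L / 2) ⊆ Set.Ioc a (a + L) := by
    intro x hx
    have ha0 : a < ωm := by rw [hadef]; linarith
    exact ⟨lt_trans ha0 hx.1, by rw [hab]; exact hx.2⟩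
  have hp0ae : ∀ᵐ x ∂volume.restrict (Set.Ioc ωm (L / 2)), p x = 0 := by
    have hF'p2 : F' =ᵐ[volume.restrict (Set.Ioc ωm (L / 2))] p :=
      ae_restrict_of_ae_restrict_of_subset hsub2 hF'p
    have hF'02 : ∀ᵐ x ∂volume.restrict (Set.Ioc ωm (L / 2)), F' x = 0 := by
      have h0 : ∀ᵐ x ∂volume, x ∈ Set.Ioc ωm (L / 2) → F' x = 0 := by
        filter_upwards [hFout, hFF'] with x hx hx2
        intro hmem
        rw [← hx2]
        exact hx (fun hIcc => absurd hmem.1 (not_lt.mpr hIcc.2))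
      exact (ae_restrict_iff' measurableSet_Ioc).mpr h0
    filter_upwards [hF'p2, hF'02] with x hx hx2
    rw [← hx, hx2]
  set S : Set ℝ := Set.Ioc ωm (L / 2) ∩ {x | p x = 0} with hSdef
  have hSpos : volume S ≠ 0 := by
    have hnull : volume.restrict (Set.Ioc ωm (L / 2)) {x | ¬ p x = 0} = 0 :=
      MeasureTheory.ae_iff.mp hp0ae
    have hnull2 : volume ({x | ¬ p x = 0} ∩ Set.Ioc ωm (L / 2)) = 0 := by
      rw [← Measure.restrict_apply' measurableSet_Ioc]
      exact hnull
    intro hS0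
    have hcover : Set.Ioc ωm (L / 2) ⊆ S ∪ ({x | ¬ p x = 0} ∩ Set.Ioc ωm (L / 2)) := by
      intro x hx
      by_cases hpx : p x = 0
      · exact Or.inl ⟨hx, hpx⟩
      · exact Or.inr ⟨hpx, hx⟩
    have hle : volume (Set.Ioc ωm (L / 2)) ≤
        volume S + volume ({x | ¬ p x = 0} ∩ Set.Ioc ωm (L / 2)) :=
      (measure_mono hcover).trans (measure_union_le _ _)
    rw [hS0, hnull2, add_zero] at hle
    have hIoc0 : volume (Set.Ioc ωm (L / 2)) = 0 := le_antisymm hle (zero_le)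
    rw [Real.volume_Ioc] at hIoc0
    have : (0 : ℝ) < L / 2 - ωm := by linarith
    simp only [ENNReal.ofReal_eq_zero, not_le] at hIoc0
    linarith
  obtain ⟨x₀, hx₀⟩ := exists_frequently_of_pos_measure hSpos
  have hfreq : ∃ᶠ z in 𝓝[≠] x₀, p z = 0 := hx₀.mono fun z hz => hz.2
  have hpan : AnalyticOnNhd ℝ p Set.univ :=
    analyticOnNhd_trigPoly s c (fun n => 2 * (Real.pi : ℂ) * Complex.I * n / L)
  have hp0 : ∀ x : ℝ, p x = 0 := fun x =>
    hpan.eqOn_zero_of_preconnected_of_frequently_eq_zero isPreconnected_univ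
      (Set.mem_univ x₀) hfreq (Set.mem_univ x)
  have hF'null : ∀ᵐ x ∂volume, x ∈ Set.Ioc a (a + L) → F' x = 0 := by
    rw [← ae_restrict_iff' measurableSet_Ioc]
    filter_upwards [hF'p] with x hx
    rw [hx, hp0 x]
  have hF0 : F =ᵐ[volume] (fun _ => (0 : ℂ)) := by
    filter_upwards [hFF', hFout, hF'null] with x h1 h2 h3
    by_cases hx : x ∈ Set.Ioc a (a + L)
    · rw [h1]; exact h3 hx
    · refine h2 (fun hmem => hx ⟨lt_of_lt_of_le haneg hmem.1, ?_⟩)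
      rw [hab]; linarith [hmem.2, hωmL]
  intro t
  have hfeqt := hFeq t
  have hint : ∫ ω : ℝ, F ω * Complex.exp (Complex.I * ω * t) = 0 := by
    apply integral_eq_zero_of_ae
    filter_upwards [hF0] with ω hω
    simp [hω]
  rw [hint, mul_zero] at hfeqt
  exact_mod_cast hfeqt
end

section
/- Let ω_m > 0, let 0 < T_s < π/ω_m, and let f be ω_m-bandlimited with finite energy whose samples are absolutely summable, i.e. Σ_{n∈ℤ} |f(n T_s)| < ∞. Then for every real ω with ω_m < |ω| < π/T_s, the discrete-time Fourier transform of the samples vanishes: Σ_{n∈ℤ} f(n T_s) e^{-i n T_s ω} = 0. -/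
open MeasureTheory Complex Filter
open scoped FourierTransform Real Topology

lemma tendsto_Icc_finset' : Tendsto (fun N : ℕ => Finset.Icc (-(N:ℤ)) (N:ℤ)) atTop atTop := by
  apply tendsto_atTop_finset_of_monotone
  · intro m n hmn
    exact Finset.Icc_subset_Icc (by exact_mod_cast neg_le_neg (Int.ofNat_le.mpr hmn))
      (by exact_mod_cast Int.ofNat_le.mpr hmn)
  · intro x
    exact ⟨x.natAbs, Finset.mem_Icc.mpr ⟨by omega, by omega⟩⟩

lemma rl_aux (G : ℝ → ℂ) (a : ℕ → ℝ)
    (ha : Tendsto (fun N => |a N|) atTop atTop) :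
    Tendsto (fun N => ∫ ν : ℝ, G ν * Complex.exp (Complex.I * (a N) * ν)) atTop (𝓝 0) := by
  have h := Real.tendsto_integral_exp_smul_cocompact G
  have hw : Tendsto (fun N : ℕ => -(a N) / (2 * Real.pi)) atTop (cocompact ℝ) := by
    apply tendsto_cocompact_of_tendsto_dist_comp_atTop (0:ℝ)
    have heq : ∀ N, dist (-(a N) / (2 * Real.pi)) 0 = |a N| / (2 * Real.pi) := by
      intro N
      rw [Real.dist_eq, sub_zero, abs_div, abs_neg, abs_of_pos Real.two_pi_pos]
    simp only [heq]
    exact ha.atTop_div_const Real.two_pi_pos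
  have h2 := h.comp hw
  refine h2.congr fun N => integral_congr_ae (Eventually.of_forall fun v => ?_)
  show 𝐞 (-(v * (-(a N) / (2 * Real.pi)))) • G v = G v * Complex.exp (Complex.I * (a N) * v)
  rw [Circle.smul_def, Real.fourierChar_apply]
  have harg : 2 * Real.pi * (-(v * (-(a N) / (2 * Real.pi)))) = a N * v := by
    field_simp
  rw [harg, show ((↑(a N * v) : ℂ) * Complex.I) = Complex.I * (a N) * v by push_cast; ring,
    mul_comm, smul_eq_mul, mul_comm]

lemma geom_Icc (w : ℂ) (hw0 : w ≠ 0) (hw1 : w ≠ 1) (N : ℕ) :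
    ∑ n ∈ Finset.Icc (-(N:ℤ)) (N:ℤ), w ^ n
      = (w ^ ((N:ℤ)+1) - w ^ (-(N:ℤ))) / (w - 1) := by
  have hinj : Function.Injective (fun k : ℕ => (k:ℤ) - N) := by
    intro a b h; simp only at h; omega
  have hmap : (Finset.range (2*N+1)).map
        (⟨fun k : ℕ => (k:ℤ) - N, hinj⟩ : ℕ ↪ ℤ)
      = Finset.Icc (-(N:ℤ)) (N:ℤ) := by
    ext x
    simp only [Finset.mem_map, Finset.mem_range, Finset.mem_Icc,
      Function.Embedding.coeFn_mk]
    constructor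
    · rintro ⟨a, ha, rfl⟩; omega
    · intro hx; exact ⟨(x + N).toNat, by omega, by omega⟩
  rw [← hmap, Finset.sum_map]
  simp only [Function.Embedding.coeFn_mk]
  have hsplit : ∀ k : ℕ, w ^ ((k:ℤ) - N) = w ^ k * w ^ (-(N:ℤ)) := by
    intro k
    rw [zpow_sub₀ hw0, zpow_natCast, div_eq_mul_inv, ← zpow_neg]
  simp only [hsplit]
  rw [← Finset.sum_mul, geom_sum_eq hw1, div_mul_eq_mul_div]
  congr 1
  rw [sub_mul, one_mul, ← zpow_natCast w (2*N+1), ← zpow_add₀ hw0]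
  have : ((2*N+1 : ℕ):ℤ) + -(N:ℤ) = (N:ℤ)+1 := by push_cast; ring
  rw [this]

set_option maxHeartbeats 1000000 in
theorem dtft_vanishes_out_of_band
    (ωm Ts : ℝ) (hωm : 0 < ωm) (hTs : 0 < Ts) (hNyq : Ts < Real.pi / ωm)
    (f : ℝ → ℝ) (hf : IsBandlimited ωm f)
    (hsum : Summable (fun n : ℤ => |f (n * Ts)|)) :
    ∀ ω : ℝ, ωm < |ω| → |ω| < Real.pi / Ts →
      ∑' n : ℤ, (f (n * Ts) : ℂ) *
        Complex.exp (-Complex.I * (n : ℂ) * (Ts : ℂ) * (ω : ℂ)) = 0 := by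
  intro ω hω1 hω2
  obtain ⟨F, hF2, hFsupp, hFrep⟩ := hf
  have hπ := Real.pi_pos
  have hωmlt : ωm < Real.pi / Ts := by
    rw [lt_div_iff₀ hTs]
    rw [lt_div_iff₀ hωm] at hNyq
    linarith
  set S : Set ℝ := Set.Icc (-ωm) ωm with hSdef
  set F' : ℝ → ℂ := S.indicator F with hF'def
  have hF'eq : F' =ᵐ[volume] F := by
    filter_upwards [hFsupp] with ν hν
    by_cases h : ν ∈ S
    · simp [hF'def, Set.indicator_of_mem h]
    · simp [hF'def, Set.indicator_of_notMem h, hν h]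
  have hF'2 : MemLp F' 2 volume := hF2.ae_eq hF'eq.symm
  have hF'int : Integrable F' volume := by
    rw [← memLp_one_iff_integrable]
    exact hF'2.mono_exponent_of_measure_support_ne_top
      (fun x hx => Set.indicator_of_notMem hx F)
      (measure_Icc_lt_top).ne one_le_two
  set z : ℝ → ℂ := fun ν => Complex.exp (Complex.I * Ts * (ν - ω)) with hzdef
  have hzcont : Continuous z := by
    apply Complex.continuous_exp.comp
    fun_prop
  have hz0 : ∀ ν, z ν ≠ 0 := fun ν => Complex.exp_ne_zero _
  have hzpow : ∀ (ν : ℝ) (n : ℤ), z ν ^ n = Complex.exp (Complex.I * n * Ts * (ν - ω)) := by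
    intro ν n
    show Complex.exp (Complex.I * Ts * (ν - ω)) ^ n = _
    rw [← Complex.exp_int_mul]
    congr 1
    push_cast
    ring
  have hnorm_z : ∀ (ν : ℝ) (n : ℤ), ‖z ν ^ n‖ = 1 := by
    intro ν n
    rw [hzpow]
    rw [show Complex.I * (n:ℂ) * Ts * ((ν:ℂ) - ω) = (((n:ℝ)*Ts*(ν-ω) : ℝ) : ℂ) * Complex.I by
      push_cast; ring]
    rw [Complex.norm_exp_ofReal_mul_I]
  have hθ : ∀ ν ∈ S, 0 < |Ts * (ν - ω)| ∧ |Ts * (ν - ω)| < 2 * Real.pi := by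
    intro ν hν
    obtain ⟨h1, h2⟩ := hν
    have hνabs : |ν| ≤ ωm := abs_le.mpr ⟨h1, h2⟩
    have hlow : |ω| - ωm ≤ |ν - ω| := by
      have h3 := abs_sub_abs_le_abs_sub ω ν
      rw [abs_sub_comm] at h3
      linarith
    have hup : |ν - ω| ≤ ωm + |ω| := by
      have h4 : |ν - ω| ≤ |ν| + |ω| := by
        rw [sub_eq_add_neg]
        exact (abs_add_le ν (-ω)).trans_eq (by rw [abs_neg])
      linarith
    constructor
    · rw [abs_mul, abs_of_pos hTs]
      have h5 : 0 < |ν - ω| := lt_of_lt_of_le (by linarith) hlow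
      positivity
    · rw [abs_mul, abs_of_pos hTs]
      have h6 : Ts * |ν - ω| ≤ Ts * (ωm + |ω|) := by nlinarith
      have h7 : Ts * (ωm + |ω|) < 2 * Real.pi := by
        have h8 : ωm + |ω| < 2 * (Real.pi / Ts) := by linarith
        calc Ts * (ωm + |ω|) < Ts * (2 * (Real.pi / Ts)) := by nlinarith
          _ = 2 * Real.pi := by field_simp
      linarith
  have hzne1 : ∀ ν ∈ S, z ν ≠ 1 := by
    intro ν hν h1
    obtain ⟨hpos, hlt⟩ := hθ ν hν
    rw [show z ν = Complex.exp (Complex.I * Ts * (ν - ω)) from rfl,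
      Complex.exp_eq_one_iff] at h1
    obtain ⟨k, hk⟩ := h1
    have hreal : Ts * (ν - ω) = (k : ℝ) * (2 * Real.pi) := by
      have h3 : ((Ts * (ν - ω) : ℝ) : ℂ) = (((k : ℝ) * (2 * Real.pi) : ℝ) : ℂ) := by
        apply mul_left_cancel₀ Complex.I_ne_zero
        push_cast
        linear_combination hk
      exact_mod_cast h3
    rw [hreal, abs_mul, abs_of_pos Real.two_pi_pos] at hpos hlt
    have hk0 : k = 0 := by
      by_contra hk0
      have h9 : (1:ℝ) ≤ |(k:ℝ)| := by
        have := Int.one_le_abs hk0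
        exact_mod_cast this
      nlinarith [Real.two_pi_pos]
    rw [hk0] at hpos
    simp at hpos
  have hSne : S.Nonempty := ⟨-ωm, Set.left_mem_Icc.mpr (by linarith)⟩
  obtain ⟨ν₀, hν₀, hmin0⟩ := isCompact_Icc.exists_isMinOn hSne
    ((hzcont.sub continuous_const).norm).continuousOn
  have hmle : ∀ ν ∈ S, ‖z ν₀ - 1‖ ≤ ‖z ν - 1‖ := fun ν hν => hmin0 hν
  set m : ℝ := ‖z ν₀ - 1‖ with hmdef
  have hm : 0 < m := norm_pos_iff.mpr (sub_ne_zero.mpr (hzne1 ν₀ hν₀))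
  set G : ℝ → ℂ := fun ν => F' ν / (z ν - 1) with hGdef
  have hGmeas : AEStronglyMeasurable G volume := by
    rw [hGdef]
    simp only [div_eq_mul_inv]
    exact hF'2.aestronglyMeasurable.mul
      ((hzcont.sub continuous_const).measurable.inv).aestronglyMeasurable
  have hGzero : ∀ ν, ν ∉ S → G ν = 0 := by
    intro ν hν
    show F' ν / (z ν - 1) = 0
    rw [hF'def, Set.indicator_of_notMem hν, zero_div]
  have hGbd : ∀ ν, ‖G ν‖ ≤ ‖F' ν‖ / m := by
    intro ν
    by_cases hν : ν ∈ S
    · show ‖F' ν / (z ν - 1)‖ ≤ _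
      rw [norm_div]
      gcongr
      exact hmle ν hν
    · rw [hGzero ν hν, norm_zero]
      positivity
  have hGint : Integrable G volume :=
    Integrable.mono' (hF'int.norm.div_const m) hGmeas (Eventually.of_forall hGbd)
  have hint1 : ∀ n : ℤ, Integrable (fun ν => F' ν * z ν ^ n) volume := by
    intro n
    refine Integrable.mono' hF'int.norm
      (hF'2.aestronglyMeasurable.mul
        ((hzcont.zpow₀ n (fun ν => Or.inl (hz0 ν))).aestronglyMeasurable))
      (Eventually.of_forall fun ν => ?_)
    rw [norm_mul, hnorm_z, mul_one]
  have hint2 : ∀ n : ℤ, Integrable (fun ν => G ν * z ν ^ n) volume := by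
    intro n
    refine Integrable.mono' hGint.norm
      (hGmeas.mul ((hzcont.zpow₀ n (fun ν => Or.inl (hz0 ν))).aestronglyMeasurable))
      (Eventually.of_forall fun ν => ?_)
    rw [norm_mul, hnorm_z, mul_one]
  have hterm : ∀ n : ℤ, (f (n * Ts) : ℂ) * Complex.exp (-Complex.I * (n:ℂ) * (Ts:ℂ) * (ω:ℂ))
      = (1 / (2 * Real.pi)) * ∫ ν : ℝ, F' ν * z ν ^ n := by
    intro n
    have e1 : ∫ ν : ℝ, F' ν * z ν ^ n = ∫ ν : ℝ, F ν * z ν ^ n :=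
      integral_congr_ae (hF'eq.mono fun ν hν => by simp only []; rw [hν])
    have e2 : ∀ ν : ℝ, F ν * z ν ^ n
        = F ν * Complex.exp (Complex.I * ν * (((n:ℝ) * Ts : ℝ) : ℂ))
            * Complex.exp (-Complex.I * (n:ℂ) * (Ts:ℂ) * (ω:ℂ)) := by
      intro ν
      have h2 : Complex.exp (Complex.I * ν * (((n:ℝ) * Ts : ℝ) : ℂ))
          * Complex.exp (-Complex.I * (n:ℂ) * (Ts:ℂ) * (ω:ℂ))
          = z ν ^ n := by
        rw [hzpow, ← Complex.exp_add]
        congr 1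
        push_cast
        ring
      linear_combination (-(F ν)) * h2
    rw [hFrep ((n : ℝ) * Ts), e1]
    simp only [e2]
    rw [integral_mul_const]
    ring
  have hSsum : ∀ N : ℕ, ∑ n ∈ Finset.Icc (-(N:ℤ)) (N:ℤ),
        (f (n * Ts) : ℂ) * Complex.exp (-Complex.I * (n:ℂ) * (Ts:ℂ) * (ω:ℂ))
      = (1 / (2 * Real.pi)) *
          ((∫ ν : ℝ, G ν * z ν ^ ((N:ℤ)+1)) - ∫ ν : ℝ, G ν * z ν ^ (-(N:ℤ))) := by
    intro N
    have step1 : ∑ n ∈ Finset.Icc (-(N:ℤ)) (N:ℤ),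
          (f (n * Ts) : ℂ) * Complex.exp (-Complex.I * (n:ℂ) * (Ts:ℂ) * (ω:ℂ))
        = (1 / (2 * Real.pi)) * ∫ ν : ℝ, ∑ n ∈ Finset.Icc (-(N:ℤ)) (N:ℤ), F' ν * z ν ^ n := by
      rw [integral_finset_sum _ (fun n _ => hint1 n), Finset.mul_sum]
      exact Finset.sum_congr rfl fun n _ => hterm n
    rw [step1]
    congr 1
    rw [← integral_sub (hint2 _) (hint2 _)]
    refine integral_congr_ae (Eventually.of_forall fun ν => ?_)
    show ∑ n ∈ Finset.Icc (-(N:ℤ)) (N:ℤ), F' ν * z ν ^ n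
      = G ν * z ν ^ ((N:ℤ)+1) - G ν * z ν ^ (-(N:ℤ))
    by_cases hν : ν ∈ S
    · have h1 := hzne1 ν hν
      have hne : z ν - 1 ≠ 0 := sub_ne_zero.mpr h1
      have hsum' := geom_Icc (z ν) (hz0 ν) h1 N
      rw [← Finset.mul_sum, hsum']
      show F' ν * _ = F' ν / (z ν - 1) * _ - F' ν / (z ν - 1) * _
      rw [← mul_sub, div_mul_eq_mul_div, ← mul_div_assoc]
    · have h0 : F' ν = 0 := Set.indicator_of_notMem hν F
      rw [← Finset.mul_sum]
      show F' ν * _ = G ν * _ - G ν * _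
      rw [h0, hGzero ν hν]
      ring
  have hA : Tendsto (fun N : ℕ => ∫ ν : ℝ, G ν * z ν ^ ((N:ℤ)+1)) atTop (𝓝 0) := by
    have hseq : Tendsto (fun N : ℕ => |((N:ℝ)+1) * Ts|) atTop atTop := by
      refine Tendsto.congr (fun N => (abs_of_pos (by positivity)).symm) ?_
      exact (tendsto_atTop_add_const_right atTop 1 tendsto_natCast_atTop_atTop).atTop_mul_const hTs
    have h1 := rl_aux G (fun N => ((N:ℝ)+1) * Ts) hseq
    rw [tendsto_zero_iff_norm_tendsto_zero] at h1 ⊢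
    refine h1.congr fun N => ?_
    have e : ∀ ν : ℝ, G ν * z ν ^ ((N:ℤ)+1)
        = (G ν * Complex.exp (Complex.I * (((N:ℝ)+1) * Ts) * ν))
            * Complex.exp (-Complex.I * ((((N:ℝ)+1)*Ts : ℝ) : ℂ) * (ω:ℂ)) := by
      intro ν
      have h2 : Complex.exp (Complex.I * (((N:ℝ)+1) * Ts) * ν)
          * Complex.exp (-Complex.I * ((((N:ℝ)+1)*Ts : ℝ) : ℂ) * (ω:ℂ))
          = z ν ^ ((N:ℤ)+1) := by
        rw [hzpow, ← Complex.exp_add]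
        congr 1
        push_cast
        ring
      linear_combination (-(G ν)) * h2
    rw [show (∫ ν : ℝ, G ν * z ν ^ ((N:ℤ)+1))
        = (∫ ν : ℝ, G ν * Complex.exp (Complex.I * (((N:ℝ)+1) * Ts) * ν))
            * Complex.exp (-Complex.I * ((((N:ℝ)+1)*Ts : ℝ) : ℂ) * (ω:ℂ)) by
      rw [← integral_mul_const]
      exact integral_congr_ae (Eventually.of_forall e)]
    rw [norm_mul,
      show (-Complex.I * ((((N:ℝ)+1)*Ts : ℝ) : ℂ) * (ω:ℂ))
        = ((-(((N:ℝ)+1)*Ts*ω) : ℝ) : ℂ) * Complex.I by push_cast; ring]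
    simp only [Complex.norm_exp_ofReal_mul_I, mul_one]
    norm_cast
  have hB : Tendsto (fun N : ℕ => ∫ ν : ℝ, G ν * z ν ^ (-(N:ℤ))) atTop (𝓝 0) := by
    have hseq : Tendsto (fun N : ℕ => |(-((N:ℝ) * Ts))|) atTop atTop := by
      refine Tendsto.congr (fun N => ?_) (tendsto_natCast_atTop_atTop.atTop_mul_const hTs)
      have h5 : |(-((N:ℝ) * Ts))| = (N:ℝ) * Ts := by
        rw [abs_neg]; exact abs_of_nonneg (by positivity)
      exact h5.symm
    have h1 := rl_aux G (fun N => -((N:ℝ) * Ts)) hseq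
    rw [tendsto_zero_iff_norm_tendsto_zero] at h1 ⊢
    refine h1.congr fun N => ?_
    have e : ∀ ν : ℝ, G ν * z ν ^ (-(N:ℤ))
        = (G ν * Complex.exp (Complex.I * (-((N:ℝ) * Ts)) * ν))
            * Complex.exp (-Complex.I * ((-((N:ℝ)*Ts) : ℝ) : ℂ) * (ω:ℂ)) := by
      intro ν
      have h2 : Complex.exp (Complex.I * (-((N:ℝ) * Ts)) * ν)
          * Complex.exp (-Complex.I * ((-((N:ℝ)*Ts) : ℝ) : ℂ) * (ω:ℂ))
          = z ν ^ (-(N:ℤ)) := by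
        rw [hzpow, ← Complex.exp_add]
        congr 1
        push_cast
        ring
      linear_combination (-(G ν)) * h2
    rw [show (∫ ν : ℝ, G ν * z ν ^ (-(N:ℤ)))
        = (∫ ν : ℝ, G ν * Complex.exp (Complex.I * (-((N:ℝ) * Ts)) * ν))
            * Complex.exp (-Complex.I * ((-((N:ℝ)*Ts) : ℝ) : ℂ) * (ω:ℂ)) by
      rw [← integral_mul_const]
      exact integral_congr_ae (Eventually.of_forall e)]
    rw [norm_mul,
      show (-Complex.I * ((-((N:ℝ)*Ts) : ℝ) : ℂ) * (ω:ℂ))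
        = ((((N:ℝ)*Ts*ω) : ℝ) : ℂ) * Complex.I by push_cast; ring]
    simp only [Complex.norm_exp_ofReal_mul_I, mul_one]
    norm_cast
  set g : ℤ → ℂ :=
    fun n => (f (n * Ts) : ℂ) * Complex.exp (-Complex.I * (n:ℂ) * (Ts:ℂ) * (ω:ℂ)) with hgdef
  have hgsummable : Summable g := by
    apply Summable.of_norm
    refine hsum.congr fun n => ?_
    show |f (n * Ts)| = ‖g n‖
    rw [hgdef]
    show _ = ‖(f (n * Ts) : ℂ) * Complex.exp (-Complex.I * (n:ℂ) * (Ts:ℂ) * (ω:ℂ))‖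
    rw [norm_mul,
      show (-Complex.I * (n:ℂ) * (Ts:ℂ) * (ω:ℂ))
        = (((-((n:ℝ)*Ts*ω)) : ℝ) : ℂ) * Complex.I by push_cast; ring]
    simp only [Complex.norm_exp_ofReal_mul_I, mul_one,
      Complex.norm_real, Real.norm_eq_abs]
  have hlim1 : Tendsto (fun N : ℕ => ∑ n ∈ Finset.Icc (-(N:ℤ)) (N:ℤ), g n)
      atTop (𝓝 (∑' n, g n)) :=
    hgsummable.hasSum.comp tendsto_Icc_finset'
  have hlim2 : Tendsto (fun N : ℕ => ∑ n ∈ Finset.Icc (-(N:ℤ)) (N:ℤ), g n)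
      atTop (𝓝 0) := by
    have h3 := (hA.sub hB).const_mul ((1 : ℂ) / (2 * Real.pi))
    rw [sub_zero, mul_zero] at h3
    exact h3.congr fun N => (hSsum N).symm
  exact tendsto_nhds_unique hlim1 hlim2
end

section
/- Let ω_m > 0, 0 < T_s < π/ω_m, and λ > 0. Let f be ω_m-bandlimited with finite energy whose samples are absolutely summable (Σ_{n∈ℤ} |f(n T_s)| < ∞). Define the residual sequence z(n) = M_λ(f(n T_s)) − f(n T_s), and suppose there is N ∈ ℕ with z(n) = 0 for all |n| > N. Then for every real ω with ω_m < |ω| < π/T_s, Σ_{n∈ℤ} M_λ(f(n T_s)) e^{-i n T_s ω} = Σ_{n=-N}^{N} z(n) e^{-i n T_s ω} (both series being absolutely convergent). -/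
open MeasureTheory Set Filter

theorem dtft_modulo_samples_eq_residual_poly
    (ωm Ts lam : ℝ) (hωm : 0 < ωm) (hTs : 0 < Ts) (hNyq : Ts < Real.pi / ωm)
    (hlam : 0 < lam)
    (f : ℝ → ℝ) (hf : IsBandlimited ωm f)
    (hsum : Summable (fun n : ℤ => |f (n * Ts)|))
    (z : ℤ → ℝ) (hz : ∀ n : ℤ, z n = modOp lam (f (n * Ts)) - f (n * Ts))
    (N : ℕ) (hsupp : ∀ n : ℤ, (N : ℤ) < |n| → z n = 0) :
    ∀ ω : ℝ, ωm < |ω| → |ω| < Real.pi / Ts →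
      Summable (fun n : ℤ => ‖(modOp lam (f (n * Ts)) : ℂ) *
        Complex.exp (-Complex.I * (n : ℂ) * (Ts : ℂ) * (ω : ℂ))‖) ∧
      ∑' n : ℤ, (modOp lam (f (n * Ts)) : ℂ) *
          Complex.exp (-Complex.I * (n : ℂ) * (Ts : ℂ) * (ω : ℂ)) =
        ∑ n ∈ Finset.Icc (-(N : ℤ)) (N : ℤ),
          (z n : ℂ) * Complex.exp (-Complex.I * (n : ℂ) * (Ts : ℂ) * (ω : ℂ)) := by
  intro ω hω1 hω2
  have hπ : (0:ℝ) < Real.pi := Real.pi_pos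
  set L : ℝ := Real.pi / Ts with hLdef
  have hLpos : 0 < L := div_pos hπ hTs
  have hTsωm : Ts * ωm < Real.pi := (lt_div_iff₀ hωm).mp hNyq
  have hωmL : ωm < L := (lt_div_iff₀ hTs).mpr (by nlinarith)
  set T : ℝ := 2 * L with hTdef
  have hTpos : 0 < T := by positivity
  haveI : Fact (0 < T) := ⟨hTpos⟩
  have hTsne : (Ts:ℂ) ≠ 0 := by exact_mod_cast hTs.ne'
  have hπne : ((Real.pi : ℝ):ℂ) ≠ 0 := by exact_mod_cast hπ.ne'
  have hLT : -L + T = L := by rw [hTdef]; ring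
  -- measurable representative of the spectrum
  obtain ⟨F₀, hF₀2, hF₀supp, hF₀rep⟩ := hf
  set F : ℝ → ℂ := hF₀2.aestronglyMeasurable.mk F₀ with hFdef
  have hFm : StronglyMeasurable F := hF₀2.aestronglyMeasurable.stronglyMeasurable_mk
  have hFeq : F₀ =ᵐ[volume] F := hF₀2.aestronglyMeasurable.ae_eq_mk
  have hF2 : MemLp F 2 volume := hF₀2.ae_eq hFeq
  have hFsupp : ∀ᵐ x : ℝ ∂volume, x ∉ Icc (-ωm) ωm → F x = 0 := by
    filter_upwards [hF₀supp, hFeq] with x h1 h2 h3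
    rw [← h2]; exact h1 h3
  have hFrep : ∀ t : ℝ, (f t : ℂ)
      = (1 / (2 * Real.pi)) * ∫ x : ℝ, F x * Complex.exp (Complex.I * x * t) := by
    intro t
    rw [hF₀rep t]
    congr 1
    exact integral_congr_ae (hFeq.mono fun x hx => by simp only [hx])
  -- the lifted spectrum on the circle
  set H : AddCircle T → ℂ := AddCircle.liftIoc T (-L) F with hHdef
  set a : ℤ → ℂ := fun i => (Ts:ℂ) * ((f (((-i : ℤ) : ℝ) * Ts) : ℝ) : ℂ) with hadef
  -- Fourier coefficients of H
  have hcoeffH : ∀ n : ℤ, fourierCoeff H n = a n := by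
    intro n
    have harg : ∀ x : ℝ, (2 * (Real.pi:ℂ) * Complex.I * ((-n : ℤ):ℂ) * (x:ℂ)) / (T:ℂ)
        = Complex.I * (x:ℂ) * ((((-n:ℤ):ℝ) * Ts : ℝ):ℂ) := by
      intro x
      rw [hTdef, hLdef]
      push_cast
      field_simp
    have hq : (∫ x in (-L)..(-L + T), (fourier (-n) (x : AddCircle T) : ℂ) • H (x : AddCircle T))
        = ∫ x in Ioc (-L) (-L + T),
            F x * Complex.exp (Complex.I * (x:ℂ) * ((((-n:ℤ):ℝ) * Ts : ℝ):ℂ)) := by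
      rw [intervalIntegral.integral_of_le (by linarith)]
      refine setIntegral_congr_fun measurableSet_Ioc fun x hx => ?_
      rw [hHdef, AddCircle.liftIoc_coe_apply hx, fourier_coe_apply, smul_eq_mul,
        harg x, mul_comm]
    have hmem' : ∀ x : ℝ, x ∈ Icc (-ωm) ωm → x ∈ Ioc (-L) (-L + T) := by
      intro x hx
      constructor
      · have := hx.1; linarith
      · rw [hLT]; have := hx.2; linarith
    have hq2 : (∫ x in Ioc (-L) (-L + T),
            F x * Complex.exp (Complex.I * (x:ℂ) * ((((-n:ℤ):ℝ) * Ts : ℝ):ℂ)))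
        = ∫ x : ℝ, F x * Complex.exp (Complex.I * (x:ℂ) * ((((-n:ℤ):ℝ) * Ts : ℝ):ℂ)) := by
      refine setIntegral_eq_integral_of_ae_compl_eq_zero ?_
      filter_upwards [hFsupp] with x hx hxc
      rw [hx (fun hmem => hxc (hmem' x hmem)), zero_mul]
    have hq3 : (∫ x : ℝ, F x * Complex.exp (Complex.I * (x:ℂ) * ((((-n:ℤ):ℝ) * Ts : ℝ):ℂ)))
        = (2 * (Real.pi:ℂ)) * ((f (((-n:ℤ):ℝ) * Ts) : ℝ) : ℂ) := by
      rw [hFrep (((-n:ℤ):ℝ) * Ts)]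
      have h2π : (2 * (Real.pi:ℂ)) ≠ 0 := by
        simp [Real.pi_ne_zero]
      field_simp
      congr 1; funext x; congr 2; ring
    rw [fourierCoeff_eq_intervalIntegral H n (-L), hq, hq2, hq3, hadef]
    rw [Complex.real_smul]
    rw [← mul_assoc]
    congr 1
    rw [hTdef, hLdef]
    push_cast
    field_simp
  -- membership of H in L²
  have hH'meas : Measurable H := by
    have h1 : Measurable fun q : AddCircle T => ((AddCircle.equivIoc T (-L)) q : ℝ) :=
      measurable_subtype_coe.comp (AddCircle.measurableEquivIoc T (-L)).measurable
    exact hFm.measurable.comp h1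
  have hHvol : MemLp H 2 (volume : Measure (AddCircle T)) := by
    rw [← (AddCircle.measurePreserving_mk T (-L)).map_eq]
    refine (memLp_map_measure_iff hH'meas.aestronglyMeasurable
      AddCircle.measurable_mk'.aemeasurable).2 ?_
    refine MemLp.ae_eq ?_ (hF2.restrict _)
    filter_upwards [ae_restrict_mem measurableSet_Ioc] with x hx
    exact (AddCircle.liftIoc_coe_apply hx).symm
  have hofT0 : (ENNReal.ofReal T) ≠ 0 := (ENNReal.ofReal_pos.mpr hTpos).ne'
  have hHhaar : MemLp H 2 (AddCircle.haarAddCircle : Measure (AddCircle T)) := by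
    have heq : (AddCircle.haarAddCircle : Measure (AddCircle T))
        = (ENNReal.ofReal T)⁻¹ • (volume : Measure (AddCircle T)) := by
      rw [AddCircle.volume_eq_smul_haarAddCircle, smul_smul,
        ENNReal.inv_mul_cancel hofT0 ENNReal.ofReal_ne_top, one_smul]
    rw [heq]
    exact hHvol.smul_measure (ENNReal.inv_ne_top.2 hofT0)
  -- summability of the coefficients
  have hanorm : Summable (fun i : ℤ => ‖a i‖) := by
    have h1 : Summable ((fun n : ℤ => |f ((n:ℝ) * Ts)|) ∘ (fun i : ℤ => -i)) :=
      hsum.comp_injective neg_injective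
    have h2 : ∀ i : ℤ, ‖a i‖ = Ts * |f (((-i : ℤ):ℝ) * Ts)| := by
      intro i
      simp [hadef, abs_of_pos hTs, Real.norm_eq_abs]
    simp only [h2]
    exact h1.mul_left Ts
  -- the trigonometric sum as a continuous function
  have hsummC : Summable (fun i : ℤ => a i • (fourier i : C(AddCircle T, ℂ))) := by
    refine Summable.of_norm ?_
    simpa [norm_smul, fourier_norm] using hanorm
  set g : C(AddCircle T, ℂ) := ∑' i : ℤ, a i • (fourier i : C(AddCircle T, ℂ)) with hgdef
  have hgsum : HasSum (fun i : ℤ => a i • (fourier i : C(AddCircle T, ℂ))) g := hsummC.hasSum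
  -- identify g with H in L²
  set P : Lp ℂ 2 (AddCircle.haarAddCircle : Measure (AddCircle T)) := hHhaar.toLp H with hPdef
  have hPcoe : ⇑P =ᵐ[(AddCircle.haarAddCircle : Measure (AddCircle T))] H := hHhaar.coeFn_toLp
  have hcoeffP : ∀ i : ℤ, fourierCoeff (⇑P) i = a i := by
    intro i
    rw [← hcoeffH i]
    exact integral_congr_ae (hPcoe.mono fun x hx => by simp only [hx])
  have hL2 := hasSum_fourier_series_L2 P
  simp_rw [hcoeffP] at hL2
  have htoLp := (ContinuousMap.toLp (E := ℂ) 2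
    (AddCircle.haarAddCircle : Measure (AddCircle T)) ℂ).hasSum hgsum
  simp_rw [_root_.map_smul] at htoLp
  have hgP := htoLp.unique hL2
  have hgH : ⇑g =ᵐ[(AddCircle.haarAddCircle : Measure (AddCircle T))] H := by
    refine (ContinuousMap.coeFn_toLp (p := 2) (𝕜 := ℂ)
      (AddCircle.haarAddCircle : Measure (AddCircle T)) g).symm.trans ?_
    rw [hgP]; exact hPcoe
  -- g vanishes on the out-of-band region
  obtain ⟨I, hIopen, hωI, hIsub, hIdisj⟩ :
      ∃ I : Set ℝ, IsOpen I ∧ ω ∈ I ∧ I ⊆ Ioc (-L) (-L + T) ∧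
        ∀ x ∈ I, x ∉ Icc (-ωm) ωm := by
    rcases le_or_gt 0 ω with h0 | h0
    · rw [abs_of_nonneg h0] at hω1 hω2
      refine ⟨Ioo ωm L, isOpen_Ioo, ⟨hω1, hω2⟩, ?_, ?_⟩
      · intro x hx
        exact ⟨by have := hx.1; linarith, by rw [hLT]; exact le_of_lt hx.2⟩
      · intro x hx hxc
        exact absurd hxc.2 (not_le.mpr hx.1)
    · rw [abs_of_neg h0] at hω1 hω2
      refine ⟨Ioo (-L) (-ωm), isOpen_Ioo, ⟨by linarith, by linarith⟩, ?_, ?_⟩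
      · intro x hx
        exact ⟨hx.1, by rw [hLT]; have := hx.2; linarith⟩
      · intro x hx hxc
        exact absurd hxc.1 (not_le.mpr hx.2)
  have hvolae : ⇑g =ᵐ[(volume : Measure (AddCircle T))] H := by
    rw [AddCircle.volume_eq_smul_haarAddCircle]
    exact MeasureTheory.Measure.ae_smul_measure hgH _
  have hmk : (fun x : ℝ => g ((x : AddCircle T)))
      =ᵐ[volume.restrict (Ioc (-L) (-L + T))] (fun x : ℝ => H ((x : AddCircle T))) := by
    have hvol' : ⇑g =ᵐ[Measure.map ((↑) : ℝ → AddCircle T)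
        (volume.restrict (Ioc (-L) (-L + T)))] H := by
      rw [(AddCircle.measurePreserving_mk T (-L)).map_eq]
      exact hvolae
    exact MeasureTheory.ae_eq_comp (AddCircle.measurable_mk'.aemeasurable) hvol'
  have hmkH : (fun x : ℝ => H ((x : AddCircle T)))
      =ᵐ[volume.restrict (Ioc (-L) (-L + T))] F := by
    filter_upwards [ae_restrict_mem measurableSet_Ioc] with x hx
    exact AddCircle.liftIoc_coe_apply hx
  have hF0 : F =ᵐ[volume.restrict I] (fun _ => (0:ℂ)) := by
    filter_upwards [ae_restrict_of_ae hFsupp, ae_restrict_mem hIopen.measurableSet]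
      with x hx hxI
    exact hx (hIdisj x hxI)
  have hGI : (fun x : ℝ => g ((x : AddCircle T))) =ᵐ[volume.restrict I] (fun _ => (0:ℂ)) :=
    Filter.EventuallyEq.trans (ae_restrict_of_ae_restrict_of_subset hIsub (Filter.EventuallyEq.trans hmk hmkH)) hF0
  have hGcont : Continuous (fun x : ℝ => g ((x : AddCircle T))) :=
    g.continuous.comp (AddCircle.continuous_mk' T)
  have hGω : g ((ω : AddCircle T)) = 0 := by
    have heqon := MeasureTheory.Measure.eqOn_of_ae_eq hGI hGcont.continuousOn
      continuousOn_const (by rw [hIopen.interior_eq]; exact subset_closure)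
    exact heqon hωI
  -- evaluate the sum at ω
  set E : ℤ → ℂ := fun n => Complex.exp (-Complex.I * (n:ℂ) * (Ts:ℂ) * (ω:ℂ)) with hEdef
  have hval : HasSum (fun i : ℤ => a i * (fourier i ((ω : AddCircle T)) : ℂ)) 0 := by
    have h := (ContinuousMap.evalCLM ℂ ((ω : AddCircle T))).hasSum hgsum
    have h2 : HasSum (fun i : ℤ => (a i • (fourier i : C(AddCircle T, ℂ)))
        ((ω : AddCircle T))) (g ((ω : AddCircle T))) := h
    simpa [hGω, smul_eq_mul] using h2
  have hfourierω : ∀ i : ℤ, (fourier i ((ω : AddCircle T)) : ℂ) = E (-i) := by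
    intro i
    rw [fourier_coe_apply, hEdef]
    congr 1
    rw [hTdef, hLdef]
    push_cast
    field_simp
  have hval2 : HasSum (fun i : ℤ => a i * E (-i)) 0 := by
    simpa only [hfourierω] using hval
  have hval3 : HasSum (fun n : ℤ => a (-n) * E n) 0 := by
    refine ((Equiv.neg ℤ).hasSum_iff).mp ?_
    simpa only [Function.comp_def, Equiv.neg_apply, neg_neg] using hval2
  have hvalF' : HasSum (fun n : ℤ => (Ts:ℂ) * ((f ((n:ℝ) * Ts) : ℝ):ℂ) * E n) 0 := by
    simpa only [hadef, neg_neg] using hval3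
  have hvalF : HasSum (fun n : ℤ => ((f ((n:ℝ) * Ts) : ℝ):ℂ) * E n) 0 := by
    have h := hvalF'.mul_left ((Ts:ℂ)⁻¹)
    rw [mul_zero] at h
    have heq : (fun n : ℤ => ((Ts:ℂ)⁻¹) * ((Ts:ℂ) * ((f ((n:ℝ) * Ts) : ℝ):ℂ) * E n))
        = fun n : ℤ => ((f ((n:ℝ) * Ts) : ℝ):ℂ) * E n := by
      funext n
      field_simp
    rwa [heq] at h
  -- the residual part
  have habs : ∀ n : ℤ, n ∉ Finset.Icc (-(N:ℤ)) (N:ℤ) → (N:ℤ) < |n| := by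
    intro n hn
    rw [Finset.mem_Icc] at hn
    rcases le_or_gt 0 n with h | h
    · rw [abs_of_nonneg h]; omega
    · rw [abs_of_neg h]; omega
  have hvalZ : HasSum (fun n : ℤ => ((z n : ℝ):ℂ) * E n)
      (∑ n ∈ Finset.Icc (-(N:ℤ)) (N:ℤ), ((z n : ℝ):ℂ) * E n) := by
    refine hasSum_sum_of_ne_finset_zero fun n hn => ?_
    rw [hsupp n (habs n hn), Complex.ofReal_zero, zero_mul]
  have hmodOp : ∀ n : ℤ, modOp lam (f ((n:ℝ) * Ts)) = f ((n:ℝ) * Ts) + z n := by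
    intro n; rw [hz n]; ring
  have hvalM : HasSum (fun n : ℤ => ((modOp lam (f ((n:ℝ) * Ts)) : ℝ):ℂ) * E n)
      (0 + ∑ n ∈ Finset.Icc (-(N:ℤ)) (N:ℤ), ((z n : ℝ):ℂ) * E n) := by
    have heq : (fun n : ℤ => ((modOp lam (f ((n:ℝ) * Ts)) : ℝ):ℂ) * E n)
        = fun n : ℤ => ((f ((n:ℝ) * Ts) : ℝ):ℂ) * E n + ((z n : ℝ):ℂ) * E n := by
      funext n
      rw [hmodOp n]
      push_cast
      ring
    rw [heq]
    exact hvalF.add hvalZ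
  -- norms
  have hEnorm : ∀ n : ℤ, ‖E n‖ = 1 := by
    intro n
    have harg : (-Complex.I * (n:ℂ) * (Ts:ℂ) * (ω:ℂ)) = ((-(n * Ts * ω) : ℝ) : ℂ) * Complex.I := by
      push_cast; ring
    rw [hEdef]
    show ‖Complex.exp _‖ = 1
    rw [harg, Complex.norm_exp_ofReal_mul_I]
  have hzabs : Summable (fun n : ℤ => |z n|) := by
    refine summable_of_ne_finset_zero (s := Finset.Icc (-(N:ℤ)) (N:ℤ)) fun n hn => ?_
    rw [hsupp n (habs n hn), abs_zero]
  have hnorm : Summable (fun n : ℤ => ‖((modOp lam (f ((n:ℝ) * Ts)) : ℝ):ℂ) * E n‖) := by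
    have hle : ∀ n : ℤ, ‖((modOp lam (f ((n:ℝ) * Ts)) : ℝ):ℂ) * E n‖
        ≤ |f ((n:ℝ) * Ts)| + |z n| := by
      intro n
      rw [norm_mul, hEnorm n, mul_one, Complex.norm_real, Real.norm_eq_abs, hmodOp n]
      exact abs_add_le _ _
    exact Summable.of_nonneg_of_le (fun n => norm_nonneg _) hle (hsum.add hzabs)
  exact ⟨hnorm, by rw [hvalM.tsum_eq, zero_add]⟩
end
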